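/- arXiv:0902.4763 — 8 statements merged into one kernel-verified Lean document; each statement's English description precedes it below -/
import Mathlib

section
/- Let n be a homogeneous polynomial law of degree d from B to A. Then for every k ≥ 1, the map Θ_k is A-linear in each of its arguments: for all a, a' ∈ A, all b, b' ∈ B, all indices 1 ≤ i ≤ k and all b_1, …, b_k ∈ B, Θ_k(b_1, …, a·b + a'·b', …, b_k) = a·Θ_k(b_1, …, b, …, b_k) + a'·Θ_k(b_1, …, b', …, b_k), where the displayed element occupies the i-th slot. -/
open scoped TensorProduct

universe u

abbrev RawLaw (A B : Type u) [CommRing A] [CommRing B] [Algebra A B] : Type (u + 1) :=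
  ∀ (A' : Type u) [CommRing A'] [Algebra A A'], A' ⊗[A] B → A'

variable {A B : Type u} [CommRing A] [CommRing B] [Algebra A B]

/-- Naturality of a family of maps `A' ⊗[A] B → A'`. -/
def IsNatural (n : RawLaw A B) : Prop :=
  ∀ (A' : Type u) [CommRing A'] [Algebra A A']
    (A'' : Type u) [CommRing A''] [Algebra A A'']
    (φ : A' →ₐ[A] A'') (x : A' ⊗[A] B),
    φ (n A' x) = n A'' (LinearMap.rTensor B φ.toLinearMap x)

/-- Homogeneity of degree `d`. -/
def IsHomog (d : ℕ) (n : RawLaw A B) : Prop :=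
  ∀ (A' : Type u) [CommRing A'] [Algebra A A'] (a : A') (x : A' ⊗[A] B),
    n A' (a • x) = a ^ d * n A' x

/-- Multiplicativity. -/
def IsMult (n : RawLaw A B) : Prop :=
  ∀ (A' : Type u) [CommRing A'] [Algebra A A'],
    n A' (1 : A' ⊗[A] B) = 1 ∧ ∀ x y : A' ⊗[A] B, n A' (x * y) = n A' x * n A' y

/-- `Θ_k(b_1, …, b_k)`: the coefficient of `t_1 ⋯ t_k` in
`n_{A[t_1,…,t_k]}(1 ⊗ 1 + ∑ t_i ⊗ b_i)`. -/
noncomputable def Theta (n : RawLaw A B) (k : ℕ) (b : Fin k → B) : A :=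
  MvPolynomial.coeff (Finsupp.equivFunOnFinite.symm fun _ => 1)
    (n (MvPolynomial (Fin k) A)
      ((1 : MvPolynomial (Fin k) A ⊗[A] B) + ∑ i, MvPolynomial.X i ⊗ₜ[A] b i))

namespace St3
open MvPolynomial
variable {A : Type u} [CommRing A]

variable {A : Type u} [CommRing A]

noncomputable def mFull (k : ℕ) : Fin k →₀ ℕ := Finsupp.equivFunOnFinite.symm fun _ => 1

noncomputable def mS {k : ℕ} (i : Fin k) (w : Bool) : (Fin k ⊕ Bool) →₀ ℕ :=
  Finsupp.equivFunOnFinite.symm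
    (Sum.elim (fun j => if j = i then 0 else 1) (fun u => if u = w then 1 else 0))

noncomputable def μF {k : ℕ} (i : Fin k) : Fin k ⊕ Bool → (Fin k →₀ ℕ) :=
  Sum.elim (fun j => if j = i then 0 else Finsupp.single j 1) (fun _ => Finsupp.single i 1)

def γF {k : ℕ} (i : Fin k) (c0 c1 : A) : Fin k ⊕ Bool → A :=
  Sum.elim (fun j => if j = i then (0:A) else 1) (fun w => if w then c1 else c0)

noncomputable def fF {k : ℕ} (i : Fin k) (c0 c1 : A) : Fin k ⊕ Bool → MvPolynomial (Fin k) A :=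
  fun v => monomial (μF i v) (γF i c0 c1 v)

lemma prod_monomial {ι σ : Type*} (s : Finset ι) (μ : ι → σ →₀ ℕ) (γ : ι → A) :
    ∏ v ∈ s, (monomial (μ v) (γ v) : MvPolynomial σ A)
      = monomial (∑ v ∈ s, μ v) (∏ v ∈ s, γ v) := by
  classical
  induction s using Finset.induction with
  | empty => simp
  | insert _ _ h ih => rw [Finset.prod_insert h, Finset.sum_insert h, Finset.prod_insert h, ih,
      monomial_mul]

lemma aeval_monfam {σ τ : Type*} [Fintype σ] (μ : σ → τ →₀ ℕ) (γ : σ → A)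
    (m : σ →₀ ℕ) (c : A) :
    aeval (fun v => (monomial (μ v) (γ v) : MvPolynomial τ A)) (monomial m c)
      = monomial (∑ v, m v • μ v) (c * ∏ v, γ v ^ m v) := by
  rw [aeval_monomial, Finsupp.prod_fintype _ _ (by simp)]
  simp_rw [monomial_pow]
  rw [prod_monomial]
  simp [algebraMap_eq, C_mul_monomial]

lemma S_apply {k : ℕ} (i : Fin k) (m : (Fin k ⊕ Bool) →₀ ℕ) (j : Fin k) :
    (∑ v, m v • μF i v) j
      = if j = i then m (.inr false) + m (.inr true) else m (.inl j) := by
  classical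
  rw [Finset.sum_apply']
  rw [Fintype.sum_sum_type]
  simp only [μF, Sum.elim_inl, Sum.elim_inr, Finsupp.smul_apply, smul_eq_mul, Fintype.sum_bool,
    Finsupp.single_apply]
  by_cases h : j = i
  · subst h
    rw [Finset.sum_eq_zero]
    · simp only [if_pos rfl, zero_add]
      simp
      omega
    · intro j' _
      by_cases h' : j' = j
      · subst h'; simp
      · simp [h', Finsupp.single_apply]
  · rw [if_neg h, if_neg (fun hh => h hh.symm), mul_zero, mul_zero, add_zero, add_zero]
    rw [Finset.sum_eq_single j]
    · simp [fun hh : j = i => h hh]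
    · intro j' _ hj'
      by_cases h' : j' = i
      · simp [h']
      · simp [h', Finsupp.single_apply, fun hh : j' = j => hj' hh]
    · simp

@[simp] lemma mFull_apply (k : ℕ) (j : Fin k) : mFull k j = 1 := by simp [mFull]
@[simp] lemma mS_inl {k : ℕ} (i : Fin k) (w : Bool) (j : Fin k) :
    mS i w (.inl j) = if j = i then 0 else 1 := by simp [mS]
@[simp] lemma mS_inr {k : ℕ} (i : Fin k) (w u : Bool) :
    mS i w (.inr u) = if u = w then 1 else 0 := by simp [mS]

section
variable {k : ℕ} (i : Fin k) (c0 c1 : A)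

lemma prod_γ (m : (Fin k ⊕ Bool) →₀ ℕ) :
    (∏ v, γF i c0 c1 v ^ m v)
      = (if m (.inl i) = 0 then 1 else 0) * (c0 ^ m (.inr false) * c1 ^ m (.inr true)) := by
  classical
  rw [Fintype.prod_sum_type, Fintype.prod_bool]
  congr 1
  · by_cases h : m (.inl i) = 0
    · rw [if_pos h, Finset.prod_eq_one]
      intro j _
      by_cases h' : j = i
      · subst h'; simp [γF, h]
      · simp [γF, h']
    · rw [if_neg h, Finset.prod_eq_zero (Finset.mem_univ i)]
      simp [γF, zero_pow h]
  · simp [γF]; ring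

lemma mS_ne : mS i false ≠ mS i true := by
  intro h
  have := DFunLike.congr_fun h (Sum.inr false)
  simp at this

lemma key (P : MvPolynomial (Fin k ⊕ Bool) A) :
    coeff (mFull k) (aeval (fF i c0 c1) P)
      = c0 * coeff (mS i false) P + c1 * coeff (mS i true) P := by
  classical
  induction P using MvPolynomial.induction_on' with
  | add p q hp hq => simp only [map_add, coeff_add, hp, hq]; ring
  | monomial m c =>
    rw [show fF i c0 c1 = fun v => monomial (μF i v) (γF i c0 c1 v) from rfl,
      aeval_monfam, coeff_monomial, coeff_monomial, coeff_monomial, prod_γ]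
    by_cases h0 : m = mS i false
    · subst h0
      have hs : (∑ v, mS i false v • μF i v) = mFull k := by
        apply Finsupp.ext
        intro j
        rw [S_apply]
        by_cases h' : j = i <;> simp [h']
      rw [if_pos hs]
      simp only [mS_inl, mS_inr, if_pos rfl, if_neg (mS_ne i), if_neg (Ne.symm (mS_ne i))]
      simp
      ring
    · by_cases h1 : m = mS i true
      · subst h1
        have hs : (∑ v, mS i true v • μF i v) = mFull k := by
          apply Finsupp.ext
          intro j
          rw [S_apply]
          by_cases h' : j = i <;> simp [h']
        rw [if_pos hs]
        simp only [mS_inl, mS_inr, if_pos rfl, if_neg (mS_ne i), if_neg (Ne.symm (mS_ne i))]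
        simp
        ring
      · rw [if_neg h0, if_neg h1, mul_zero, mul_zero, add_zero]
        by_cases hsum : (∑ v, m v • μF i v) = mFull k
        · rw [if_pos hsum]
          by_cases hz : m (.inl i) = 0
          · exfalso
            have hj : ∀ j, j ≠ i → m (.inl j) = 1 := fun j hj => by
              have := DFunLike.congr_fun hsum j
              rw [S_apply] at this
              simpa [hj] using this
            have hb : m (.inr false) + m (.inr true) = 1 := by
              have := DFunLike.congr_fun hsum i
              rw [S_apply] at this
              simpa using this
            have hcases : (m (.inr false) = 1 ∧ m (.inr true) = 0)
                ∨ (m (.inr false) = 0 ∧ m (.inr true) = 1) := by omega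
            rcases hcases with ⟨e1, e2⟩ | ⟨e1, e2⟩
            · refine h0 (Finsupp.ext fun v => ?_)
              rcases v with j | u
              · by_cases h' : j = i
                · subst h'; simp [hz]
                · simp [h', hj j h']
              · cases u <;> simp [e1, e2]
            · refine h1 (Finsupp.ext fun v => ?_)
              rcases v with j | u
              · by_cases h' : j = i
                · subst h'; simp [hz]
                · simp [h', hj j h']
              · cases u <;> simp [e1, e2]
          · rw [if_neg hz]; ring
        · rw [if_neg hsum]
end

lemma monomial_single_eq {σ : Type*} (j : σ) (c : A) :
    (monomial (Finsupp.single j 1) c : MvPolynomial σ A) = c • X j := by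
  rw [X, smul_monomial, smul_eq_mul, mul_one]

lemma fF_inl_ne {k : ℕ} {i j : Fin k} (c0 c1 : A) (h : j ≠ i) :
    fF i c0 c1 (.inl j) = X j := by
  simp only [fF, μF, γF, Sum.elim_inl, if_neg h]
  rw [monomial_single_eq, one_smul]

lemma fF_inl_eq {k : ℕ} (i : Fin k) (c0 c1 : A) : fF i c0 c1 (.inl i) = 0 := by
  simp [fF, μF, γF]

lemma fF_inr {k : ℕ} (i : Fin k) (c0 c1 : A) (w : Bool) :
    fF i c0 c1 (.inr w) = (if w then c1 else c0) • X i := by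
  simp only [fF, μF, γF, Sum.elim_inr]
  rw [monomial_single_eq]

end St3



open MvPolynomial in
/-- If `n` is a homogeneous polynomial law of degree `d`, then for every
`k ≥ 1` the map `Θ_k` is `A`-linear in each of its arguments. -/
theorem statement3 {A B : Type u} [CommRing A] [CommRing B] [Algebra A B]
    (d : ℕ) (hd : 0 < d) (n : RawLaw A B) (hnat : IsNatural n) (hhom : IsHomog d n)
    (k : ℕ) (hk : 1 ≤ k) (i : Fin k) (a a' : A) (x x' : B) (b : Fin k → B) :
    Theta n k (Function.update b i (a • x + a' • x'))
      = a * Theta n k (Function.update b i x) + a' * Theta n k (Function.update b i x') := by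
  classical
  set argR : MvPolynomial (Fin k ⊕ Bool) A ⊗[A] B :=
    1 + (∑ j ∈ Finset.univ.erase i,
          (X (Sum.inl j) : MvPolynomial (Fin k ⊕ Bool) A) ⊗ₜ[A] b j)
      + (X (Sum.inr false) : MvPolynomial (Fin k ⊕ Bool) A) ⊗ₜ[A] x
      + (X (Sum.inr true) : MvPolynomial (Fin k ⊕ Bool) A) ⊗ₜ[A] x' with hargR
  have hrT : ∀ c0 c1 : A,
      LinearMap.rTensor B (aeval (St3.fF i c0 c1)).toLinearMap argR
        = 1 + ∑ j, (X j : MvPolynomial (Fin k) A)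
            ⊗ₜ[A] (Function.update b i (c0 • x + c1 • x') j) := by
    intro c0 c1
    have h1 : (LinearMap.rTensor B (aeval (St3.fF i c0 c1)).toLinearMap)
        ((1 : MvPolynomial (Fin k ⊕ Bool) A) ⊗ₜ[A] (1 : B)) = 1 := by
      rw [LinearMap.rTensor_tmul, AlgHom.toLinearMap_apply, map_one]
      exact (Algebra.TensorProduct.one_def).symm
    rw [hargR, Algebra.TensorProduct.one_def]
    rw [map_add, map_add, map_add, map_sum]
    simp only [LinearMap.rTensor_tmul, AlgHom.toLinearMap_apply, aeval_X, map_one]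
    rw [← Algebra.TensorProduct.one_def]
    rw [St3.fF_inr, St3.fF_inr]
    have hterm : ∑ j ∈ Finset.univ.erase i,
          St3.fF i c0 c1 (Sum.inl j) ⊗ₜ[A] b j
        = ∑ j ∈ Finset.univ.erase i, (X j : MvPolynomial (Fin k) A) ⊗ₜ[A] b j :=
      Finset.sum_congr rfl fun j hj => by
        rw [St3.fF_inl_ne _ _ (Finset.mem_erase.mp hj).1]
    rw [hterm]
    have hsum : (∑ j : Fin k, (X j : MvPolynomial (Fin k) A)
          ⊗ₜ[A] (Function.update b i (c0 • x + c1 • x') j))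
        = (∑ j ∈ Finset.univ.erase i, (X j : MvPolynomial (Fin k) A) ⊗ₜ[A] b j)
          + (c0 • X i) ⊗ₜ[A] x + (c1 • X i) ⊗ₜ[A] x' := by
      rw [← Finset.sum_erase_add _ _ (Finset.mem_univ i)]
      rw [Function.update_self]
      rw [Finset.sum_congr rfl (fun j hj => by
        rw [Function.update_of_ne (Finset.mem_erase.mp hj).1])]
      rw [TensorProduct.tmul_add, TensorProduct.tmul_smul, TensorProduct.tmul_smul,
        TensorProduct.smul_tmul', TensorProduct.smul_tmul']
      abel
    rw [hsum]
    norm_num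
    abel
  have key3 : ∀ c0 c1 : A,
      Theta n k (Function.update b i (c0 • x + c1 • x'))
        = c0 * coeff (St3.mS i false) (n (MvPolynomial (Fin k ⊕ Bool) A) argR)
          + c1 * coeff (St3.mS i true) (n (MvPolynomial (Fin k ⊕ Bool) A) argR) := by
    intro c0 c1
    have hn := hnat (MvPolynomial (Fin k ⊕ Bool) A) (MvPolynomial (Fin k) A)
      (aeval (St3.fF i c0 c1)) argR
    rw [hrT c0 c1] at hn
    unfold Theta
    rw [show (Finsupp.equivFunOnFinite.symm fun _ => 1 : Fin k →₀ ℕ) = St3.mFull k from rfl]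
    rw [← hn]
    exact St3.key i c0 c1 _
  have e1 : Function.update b i x = Function.update b i ((1:A) • x + (0:A) • x') := by simp
  have e2 : Function.update b i x' = Function.update b i ((0:A) • x + (1:A) • x') := by simp
  rw [key3 a a', e1, e2, key3 1 0, key3 0 1]
  ring
end

section
/- Let n be a homogeneous polynomial law of degree d from B to A which is moreover multiplicative. Then for every k ≥ 1 and all b_1, …, b_{k+1} ∈ B, the following recursion holds: Θ_{k+1}(b_1, …, b_{k+1}) = θ(b_1)·Θ_k(b_2, …, b_{k+1}) − Θ_k(b_1·b_2, b_3, …, b_{k+1}) − Θ_k(b_2, b_1·b_3, …, b_{k+1}) − ⋯ − Θ_k(b_2, b_3, …, b_1·b_{k+1}). -/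
open scoped TensorProduct

universe u

variable {A B : Type u} [CommRing A] [CommRing B] [Algebra A B]

section Aux

open MvPolynomial

lemma aux_prod_monomial {A : Type*} [CommRing A] {ι τ : Type*} (t : Finset ι)
    (g : ι → (τ →₀ ℕ)) (a : ι → A) :
    (∏ i ∈ t, (monomial (g i) (a i) : MvPolynomial τ A))
      = monomial (∑ i ∈ t, g i) (∏ i ∈ t, a i) := by
  classical
  induction t using Finset.induction with
  | empty => simp
  | insert i s hi ih =>
    rw [Finset.prod_insert hi, Finset.sum_insert hi, Finset.prod_insert hi, ih, monomial_mul]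

lemma lemG {A : Type*} [CommRing A] {σ τ : Type*} [Fintype σ] [Fintype τ]
    [DecidableEq σ] [DecidableEq τ]
    (f : σ → (τ →₀ ℕ)) (c : σ → A) (μ : τ →₀ ℕ) (M : Finset (σ →₀ ℕ))
    (h : ∀ m : σ →₀ ℕ,
      (if (m.sum fun s e => e • f s) = μ then (m.prod fun s e => c s ^ e) else 0)
        = if m ∈ M then (1 : A) else 0)
    (p : MvPolynomial σ A) :
    coeff μ (aeval (fun s => (monomial (f s) (c s) : MvPolynomial τ A)) p)
      = ∑ m ∈ M, coeff m p := by
  classical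
  conv_lhs => rw [p.as_sum]
  rw [map_sum, coeff_sum]
  have step : ∀ m ∈ p.support,
      coeff μ ((aeval (fun s => (monomial (f s) (c s) : MvPolynomial τ A))) (monomial m (coeff m p)))
        = if m ∈ M then coeff m p else 0 := by
    intro m _
    rw [aeval_monomial]
    have : (m.prod fun i k => (monomial (f i) (c i) : MvPolynomial τ A) ^ k)
        = monomial (m.sum fun s e => e • f s) (m.prod fun s e => c s ^ e) := by
      rw [Finsupp.prod]
      simp only [monomial_pow]
      rw [aux_prod_monomial]
      rfl
    rw [this, algebraMap_eq, C_mul_monomial, coeff_monomial]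
    have h2 := h m
    by_cases hm : (m.sum fun s e => e • f s) = μ
    · rw [if_pos hm] at h2 ⊢
      rw [h2]
      by_cases hM : m ∈ M <;> simp [hM]
    · rw [if_neg hm] at h2 ⊢
      rw [eq_comm] at h2
      by_cases hM : m ∈ M
      · rw [if_pos hM] at h2
        have : Subsingleton A := subsingleton_of_zero_eq_one h2.symm
        exact Subsingleton.elim _ _
      · rw [if_neg hM]
  rw [Finset.sum_congr rfl step, Finset.sum_ite_mem]
  apply Finset.sum_subset Finset.inter_subset_right
  intro m _ hm
  rw [Finset.mem_inter, not_and_or] at hm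
  rcases hm with hm | hm
  · exact notMem_support_iff.mp hm
  · tauto

lemma lemP {A : Type*} [CommRing A] {σ τ υ : Type*} (g : σ → υ) (h : τ → υ)
    (hg : Function.Injective g) (hh : Function.Injective h)
    (hdisj : ∀ s t, g s ≠ h t)
    (p : MvPolynomial σ A) (q : MvPolynomial τ A) (μ : σ →₀ ℕ) (ν : τ →₀ ℕ) :
    coeff (Finsupp.mapDomain g μ + Finsupp.mapDomain h ν) (rename g p * rename h q)
      = coeff μ p * coeff ν q := by
  classical
  have key : ∀ (m : σ →₀ ℕ) (m' : τ →₀ ℕ),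
      Finsupp.mapDomain g m + Finsupp.mapDomain h m'
        = Finsupp.mapDomain g μ + Finsupp.mapDomain h ν → m = μ ∧ m' = ν := by
    intro m m' hmm
    constructor
    · ext s
      have := DFunLike.congr_fun hmm (g s)
      rwa [Finsupp.add_apply, Finsupp.add_apply, Finsupp.mapDomain_apply hg,
        Finsupp.mapDomain_apply hg,
        Finsupp.mapDomain_notin_range _ _ (by rintro ⟨t, ht⟩; exact hdisj s t ht.symm),
        Finsupp.mapDomain_notin_range _ _ (by rintro ⟨t, ht⟩; exact hdisj s t ht.symm),
        add_zero, add_zero] at this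
    · ext t
      have := DFunLike.congr_fun hmm (h t)
      rwa [Finsupp.add_apply, Finsupp.add_apply, Finsupp.mapDomain_apply hh,
        Finsupp.mapDomain_apply hh,
        Finsupp.mapDomain_notin_range _ _ (by rintro ⟨s, hs⟩; exact hdisj s t hs),
        Finsupp.mapDomain_notin_range _ _ (by rintro ⟨s, hs⟩; exact hdisj s t hs),
        zero_add, zero_add] at this
  conv_lhs => rw [p.as_sum, q.as_sum, map_sum, map_sum, Finset.sum_mul_sum]
  rw [coeff_sum]
  simp only [coeff_sum, rename_monomial, monomial_mul, coeff_monomial]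
  rw [Finset.sum_eq_single μ]
  · rw [Finset.sum_eq_single ν]
    · rw [if_pos rfl]
    · intro m' _ hne
      rw [if_neg fun hc => hne (key _ _ hc).2]
    · intro hν
      rw [notMem_support_iff.mp hν, mul_zero, ite_self]
  · intro m _ hne
    apply Finset.sum_eq_zero
    intro m' _
    rw [if_neg fun hc => hne (key _ _ hc).1]
  · intro hμ
    apply Finset.sum_eq_zero
    intro m' _
    rw [notMem_support_iff.mp hμ, zero_mul, ite_self]

/-- Evaluation of a weighted `Finsupp.sum` of finsupps at a point. -/
lemma sum_eval {σ τ : Type*} [Fintype σ] (m : σ →₀ ℕ) (f : σ → (τ →₀ ℕ)) (t : τ) :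
    (m.sum fun s e => e • f s) t = ∑ s, m s * (f s) t := by
  classical
  rw [Finsupp.sum_fintype _ _ (fun s => by simp)]
  rw [Finsupp.finset_sum_apply]
  simp [Finsupp.smul_apply]

lemma cond_iff {σ τ : Type*} [Fintype σ] (m : σ →₀ ℕ) (f : σ → (τ →₀ ℕ)) (μ : τ →₀ ℕ) :
    (m.sum fun s e => e • f s) = μ ↔ ∀ t, (∑ s, m s * (f s) t) = μ t := by
  rw [Finsupp.ext_iff]
  exact forall_congr' fun t => by rw [sum_eval]

lemma rTensor_one_add_sum {A B : Type u} [CommRing A] [CommRing B] [Algebra A B]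
    {σ : Type} [Fintype σ] {C : Type u} [CommRing C] [Algebra A C]
    (φ : MvPolynomial σ A →ₐ[A] C) (w : σ → B) :
    LinearMap.rTensor B φ.toLinearMap
        ((1 : MvPolynomial σ A ⊗[A] B) + ∑ s, X s ⊗ₜ[A] w s)
      = (1 : C ⊗[A] B) + ∑ s, φ (X s) ⊗ₜ[A] w s := by
  rw [map_add, map_sum]
  simp [Algebra.TensorProduct.one_def, LinearMap.rTensor_tmul]

lemma masterKey {A B : Type u} [CommRing A] [CommRing B] [Algebra A B]
    (n : RawLaw A B) (hnat : IsNatural n)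
    {σ τ : Type} [Fintype σ] [Fintype τ] [DecidableEq σ] [DecidableEq τ]
    (w : σ → B) (f : σ → (τ →₀ ℕ)) (c : σ → A) (μ : τ →₀ ℕ) (M : Finset (σ →₀ ℕ))
    (ζ : MvPolynomial τ A ⊗[A] B)
    (hz : (1 : MvPolynomial τ A ⊗[A] B)
        + ∑ s, (monomial (f s) (c s) : MvPolynomial τ A) ⊗ₜ[A] w s = ζ)
    (h : ∀ m : σ →₀ ℕ,
      (if (m.sum fun s e => e • f s) = μ then (m.prod fun s e => c s ^ e) else 0)
        = if m ∈ M then (1 : A) else 0) :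
    coeff μ (n (MvPolynomial τ A) ζ)
      = ∑ m ∈ M, coeff m (n (MvPolynomial σ A)
          ((1 : MvPolynomial σ A ⊗[A] B) + ∑ s, X s ⊗ₜ[A] w s)) := by
  have hn := hnat (MvPolynomial σ A) (MvPolynomial τ A)
    (aeval fun s => (monomial (f s) (c s) : MvPolynomial τ A))
    ((1 : MvPolynomial σ A ⊗[A] B) + ∑ s, X s ⊗ₜ[A] w s)
  rw [rTensor_one_add_sum] at hn
  simp only [aeval_X] at hn
  rw [hz] at hn
  rw [← hn, lemG f c μ M h]

end Aux

/-- If `n` is a multiplicative homogeneous polynomial law of degree `d`,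
then for every `k ≥ 1` and `b : Fin (k+1) → B` (thought of as `b_1, …, b_{k+1}`) one has
`Θ_{k+1}(b_1, …, b_{k+1}) = θ(b_1)·Θ_k(b_2, …, b_{k+1}) − ∑_{i=2}^{k+1} Θ_k(b_2, …, b_1·b_i, …, b_{k+1})`,
where `θ = Θ_1`. -/
theorem statement4 {A B : Type u} [CommRing A] [CommRing B] [Algebra A B]
    (d : ℕ) (hd : 0 < d) (n : RawLaw A B)
    (hnat : IsNatural n) (hhom : IsHomog d n) (hmult : IsMult n)
    (k : ℕ) (hk : 1 ≤ k) (b : Fin (k + 1) → B) :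
    Theta n (k + 1) b
      = Theta n 1 (fun _ => b 0) * Theta n k (fun i => b i.succ)
        - ∑ i : Fin k, Theta n k (Function.update (fun j : Fin k => b j.succ) i (b 0 * b i.succ)) := by
  classical
  open MvPolynomial in
  let w : (Fin (k+1) ⊕ Fin k) → B := Sum.elim b fun j => b 0 * b j.succ
  let p : MvPolynomial (Fin (k+1) ⊕ Fin k) A :=
    n (MvPolynomial (Fin (k+1) ⊕ Fin k) A)
      ((1 : MvPolynomial (Fin (k+1) ⊕ Fin k) A ⊗[A] B) + ∑ s, MvPolynomial.X s ⊗ₜ[A] w s)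
  let m0 : (Fin (k+1) ⊕ Fin k) →₀ ℕ :=
    Finsupp.equivFunOnFinite.symm (Sum.elim (fun _ => 1) fun _ => 0)
  let mj : Fin k → ((Fin (k+1) ⊕ Fin k) →₀ ℕ) := fun j =>
    Finsupp.equivFunOnFinite.symm
      (Sum.elim (fun i => if i = 0 ∨ i = j.succ then 0 else 1) fun j' => if j' = j then 1 else 0)
  have key1 : Theta n (k+1) b = MvPolynomial.coeff m0 p := by
    open MvPolynomial in
    have h := masterKey (σ := Fin (k+1) ⊕ Fin k) (τ := Fin (k+1)) n hnat w
      (Sum.elim (fun i => Finsupp.single i 1) (fun _ => 0))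
      (Sum.elim (fun _ => (1:A)) (fun _ => 0))
      (Finsupp.equivFunOnFinite.symm fun _ => 1) ({m0} : Finset _)
      ((1 : MvPolynomial (Fin (k+1)) A ⊗[A] B) + ∑ i, X i ⊗ₜ[A] b i)
      ?_ ?_
    · rw [Theta, h, Finset.sum_singleton]
    · -- hz
      congr 1
      rw [Fintype.sum_sum_type]
      have hX : ∀ i : Fin (k+1),
          (monomial (Finsupp.single i 1) (1:A) : MvPolynomial (Fin (k+1)) A) = X i := fun _ => rfl
      simp [w, hX]
    · -- combinatorial h
      intro m
      simp only [Finset.mem_singleton]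
      by_cases hm : m = m0
      · subst hm
        rw [if_pos rfl, if_pos]
        · apply Finset.prod_eq_one
          intro s hs
          rcases s with i | j
          · simp
          · exfalso
            have := Finsupp.mem_support_iff.mp hs
            simp [m0] at this
        · rw [cond_iff]
          intro t
          simp [m0, Fintype.sum_sum_type, Finsupp.single_apply]
      · rw [if_neg hm]
        by_cases hz : ∀ j, m (Sum.inr j) = 0
        · rw [if_neg]
          intro hcond
          apply hm
          rw [cond_iff] at hcond
          ext s
          rcases s with i | j
          · have := hcond i
            rw [Fintype.sum_sum_type] at this
            simp only [Sum.elim_inl, Sum.elim_inr, Finsupp.single_apply, mul_ite, mul_one,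
              mul_zero, Finset.sum_ite_eq', Finset.mem_univ, if_true, Finsupp.coe_zero,
              Pi.zero_apply, Finset.sum_const_zero, add_zero,
              Finsupp.coe_equivFunOnFinite_symm] at this
            simp [m0, this]
          · simp [m0, hz j]
        · push_neg at hz
          obtain ⟨j, hj⟩ := hz
          have hprod : (m.prod fun s e => (Sum.elim (fun _ => (1:A)) (fun _ => 0)) s ^ e) = 0 := by
            apply Finset.prod_eq_zero (Finsupp.mem_support_iff.mpr hj)
            simp [zero_pow hj]
          rw [hprod, ite_self]
  have key2 : ∀ j : Fin k,
      Theta n k (Function.update (fun i : Fin k => b i.succ) j (b 0 * b j.succ))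
        = MvPolynomial.coeff (mj j) p := by
    open MvPolynomial in
    intro j
    have h := masterKey (σ := Fin (k+1) ⊕ Fin k) (τ := Fin k) n hnat w
      (Sum.elim (Fin.cases 0 fun i => if i = j then 0 else Finsupp.single i 1)
        (fun j' => if j' = j then Finsupp.single j 1 else 0))
      (Sum.elim (Fin.cases 0 fun i => if i = j then 0 else 1)
        (fun j' => if j' = j then 1 else 0))
      (Finsupp.equivFunOnFinite.symm fun _ => 1) ({mj j} : Finset _)
      ((1 : MvPolynomial (Fin k) A ⊗[A] B)
        + ∑ t, X t ⊗ₜ[A] (Function.update (fun i : Fin k => b i.succ) j (b 0 * b j.succ)) t)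
      ?_ ?_
    · rw [Theta, h, Finset.sum_singleton]
    · -- hz
      congr 1
      rw [Fintype.sum_sum_type, Fin.sum_univ_succ]
      have t1 : (monomial ((Sum.elim (Fin.cases 0 fun i => if i = j then 0 else Finsupp.single i 1)
          (fun j' => if j' = j then Finsupp.single j 1 else 0)) (Sum.inl 0))
          ((Sum.elim (Fin.cases 0 fun i => if i = j then 0 else 1)
          (fun j' => if j' = j then 1 else 0)) (Sum.inl 0)) : MvPolynomial (Fin k) A) ⊗ₜ[A] w (Sum.inl 0)
          = 0 := by
        simp only [Sum.elim_inl, Fin.cases_zero]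
        rw [monomial_zero, TensorProduct.zero_tmul]
      rw [t1, zero_add]
      have t2 : ∀ i : Fin k,
          (monomial ((Sum.elim (Fin.cases 0 fun i => if i = j then 0 else Finsupp.single i 1)
            (fun j' => if j' = j then Finsupp.single j 1 else 0)) (Sum.inl i.succ))
            ((Sum.elim (Fin.cases 0 fun i => if i = j then 0 else 1)
            (fun j' => if j' = j then 1 else 0)) (Sum.inl i.succ)) : MvPolynomial (Fin k) A)
            ⊗ₜ[A] w (Sum.inl i.succ)
          = if i = j then 0 else X i ⊗ₜ[A] b i.succ := by
        intro i
        simp only [Sum.elim_inl, Fin.cases_succ, w, Sum.elim_inl]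
        split_ifs with hij
        · rw [monomial_zero, TensorProduct.zero_tmul]
        · rfl
      have t3 : ∀ j' : Fin k,
          (monomial ((Sum.elim (Fin.cases 0 fun i => if i = j then 0 else Finsupp.single i 1)
            (fun j' => if j' = j then Finsupp.single j 1 else 0)) (Sum.inr j'))
            ((Sum.elim (Fin.cases 0 fun i => if i = j then 0 else 1)
            (fun j' => if j' = j then 1 else 0)) (Sum.inr j')) : MvPolynomial (Fin k) A)
            ⊗ₜ[A] w (Sum.inr j')
          = if j' = j then X j ⊗ₜ[A] (b 0 * b j.succ) else 0 := by
        intro j'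
        simp only [Sum.elim_inr, w]
        split_ifs with hij
        · subst hij; rfl
        · rw [monomial_zero, TensorProduct.zero_tmul]
      rw [Finset.sum_congr rfl fun i _ => t2 i, Finset.sum_congr rfl fun j' _ => t3 j',
        ← Finset.sum_add_distrib]
      apply Finset.sum_congr rfl
      intro t _
      rw [Function.update_apply]
      split_ifs with ht
      · subst ht; rw [zero_add]
      · rw [add_zero]
    · -- combinatorics
      intro m
      simp only [Finset.mem_singleton]
      have hsum : ∀ t : Fin k,
          (∑ s, m s * ((Sum.elim (Fin.cases 0 fun i => if i = j then 0 else Finsupp.single i 1)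
            (fun j' => if j' = j then Finsupp.single j 1 else 0)) s) t)
          = (if t = j then 0 else m (Sum.inl t.succ)) + (if t = j then m (Sum.inr j) else 0) := by
        intro t
        rw [Fintype.sum_sum_type, Fin.sum_univ_succ]
        simp only [Sum.elim_inl, Sum.elim_inr]
        have e1 : m (Sum.inl 0) * ((Fin.cases 0 fun i => if i = j then 0 else Finsupp.single i 1 :
            Fin (k+1) → (Fin k →₀ ℕ)) 0) t = 0 := by simp
        have e2 : ∀ i : Fin k, m (Sum.inl i.succ) * ((Fin.cases 0 fun i => if i = j then 0 else
            Finsupp.single i 1 : Fin (k+1) → (Fin k →₀ ℕ)) i.succ) t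
            = if i = t then (if t = j then 0 else m (Sum.inl t.succ)) else 0 := by
          intro i
          simp only [Fin.cases_succ]
          split_ifs with h1 h2 h3 <;> subst_eqs <;>
            simp_all [Finsupp.single_apply]
        have e3 : ∀ j' : Fin k, m (Sum.inr j') * ((if j' = j then Finsupp.single j 1 else 0 :
            Fin k →₀ ℕ)) t = if j' = j then (if j = t then m (Sum.inr j) else 0) else 0 := by
          intro j'
          split_ifs with h1 h2 <;> subst_eqs <;> simp_all [Finsupp.single_apply]
        rw [e1, zero_add, Finset.sum_congr rfl fun i _ => e2 i,
          Finset.sum_congr rfl fun j' _ => e3 j', Finset.sum_ite_eq' Finset.univ t,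
          Finset.sum_ite_eq' Finset.univ j]
        simp only [Finset.mem_univ, if_true]
        by_cases ht : t = j
        · subst ht; simp
        · simp [ht, show ¬(j = t) from fun h => ht h.symm]
      by_cases hm : m = mj j
      · subst hm
        rw [if_pos, if_pos rfl]
        · apply Finset.prod_eq_one
          intro s hs
          have hsupp := Finsupp.mem_support_iff.mp hs
          rcases s with i | j'
          · rcases Fin.eq_zero_or_eq_succ i with rfl | ⟨i', rfl⟩
            · exfalso; apply hsupp; simp [mj]
            · simp only [Sum.elim_inl, Fin.cases_succ]
              by_cases hij : i' = j
              · exfalso; apply hsupp; simp [mj, hij]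
              · simp [hij]
          · by_cases hij : j' = j
            · simp [hij]
            · exfalso; apply hsupp; simp [mj, hij]
        · rw [cond_iff]
          intro t
          rw [hsum t]
          by_cases ht : t = j <;>
            simp [mj, ht, Finsupp.coe_equivFunOnFinite_symm, Fin.succ_ne_zero,
              Fin.succ_inj]
      · rw [if_neg hm]
        by_cases hK : m (Sum.inl 0) = 0 ∧ m (Sum.inl j.succ) = 0 ∧
            ∀ j', j' ≠ j → m (Sum.inr j') = 0
        · rw [if_neg]
          intro hcond
          apply hm
          rw [cond_iff] at hcond
          ext s
          rcases s with i | j'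
          · rcases Fin.eq_zero_or_eq_succ i with rfl | ⟨i', rfl⟩
            · simp [mj, hK.1]
            · by_cases hij : i' = j
              · subst hij; simp [mj, hK.2.1]
              · have := hcond i'
                rw [hsum i', if_neg hij, if_neg hij, add_zero,
                  Finsupp.coe_equivFunOnFinite_symm] at this
                simp [mj, hij, Fin.succ_ne_zero, Fin.succ_inj, this]
          · by_cases hij : j' = j
            · subst hij
              have := hcond j'
              rw [hsum j', if_pos rfl, if_pos rfl, zero_add,
                Finsupp.coe_equivFunOnFinite_symm] at this
              simp [mj, this]
            · simp [mj, hij, hK.2.2 j' hij]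
        · push_neg at hK
          have hzero : ∃ s, m s ≠ 0 ∧ ((Sum.elim (Fin.cases 0 fun i => if i = j then 0 else 1)
              (fun j' => if j' = j then 1 else 0)) s : A) = 0 := by
            by_cases h1 : m (Sum.inl 0) = 0
            · by_cases h2 : m (Sum.inl j.succ) = 0
              · obtain ⟨j', hj', hmj'⟩ := hK h1 h2
                exact ⟨Sum.inr j', hmj', by simp [hj']⟩
              · exact ⟨Sum.inl j.succ, h2, by simp⟩
            · exact ⟨Sum.inl 0, h1, by simp⟩
          obtain ⟨s, hs, hcs⟩ := hzero
          have hprod : (m.prod fun s e => ((Sum.elim (Fin.cases 0 fun i => if i = j then 0 else 1)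
              (fun j' => if j' = j then 1 else 0)) s : A) ^ e) = 0 := by
            apply Finset.prod_eq_zero (Finsupp.mem_support_iff.mpr hs)
            dsimp only
            rw [hcs, zero_pow hs]
          rw [hprod, ite_self]
  have key3 : Theta n 1 (fun _ => b 0) * Theta n k (fun i : Fin k => b i.succ)
      = MvPolynomial.coeff m0 p + ∑ j, MvPolynomial.coeff (mj j) p := by
    open MvPolynomial in
    -- the substitution exponents
    set fφ : (Fin (k+1) ⊕ Fin k) → (Fin (k+1) →₀ ℕ) :=
      Sum.elim (fun i => Finsupp.single i 1)
        (fun j' => Finsupp.single (0 : Fin (k+1)) 1 + Finsupp.single j'.succ 1) with hfφ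
    have hXX : ∀ j' : Fin k,
        (monomial (Finsupp.single (0:Fin (k+1)) 1 + Finsupp.single j'.succ 1) (1:A)
          : MvPolynomial (Fin (k+1)) A) = X 0 * X j'.succ := by
      intro j'
      rw [show (X (0:Fin (k+1)) : MvPolynomial _ A) = monomial (Finsupp.single 0 1) 1 from rfl,
        show (X (j'.succ : Fin (k+1)) : MvPolynomial _ A) = monomial (Finsupp.single j'.succ 1) 1
          from rfl, monomial_mul, mul_one]
    -- the element x0 * y
    have hz : (1 : MvPolynomial (Fin (k+1)) A ⊗[A] B)
        + ∑ s, (monomial (fφ s) ((fun _ => (1:A)) s) : MvPolynomial (Fin (k+1)) A) ⊗ₜ[A] w s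
        = ((1 : MvPolynomial (Fin (k+1)) A ⊗[A] B) + (X (0 : Fin (k+1)) : MvPolynomial (Fin (k+1)) A) ⊗ₜ[A] b 0)
          * ((1 : MvPolynomial (Fin (k+1)) A ⊗[A] B)
              + ∑ i : Fin k, (X i.succ : MvPolynomial (Fin (k+1)) A) ⊗ₜ[A] b i.succ) := by
      have hfl : ∀ i : Fin (k+1),
          (monomial (fφ (Sum.inl i)) ((fun _ : Fin (k+1) ⊕ Fin k => (1:A)) (Sum.inl i)) : MvPolynomial (Fin (k+1)) A)
            ⊗ₜ[A] w (Sum.inl i) = X i ⊗ₜ[A] b i := fun i => rfl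
      have hfr : ∀ j' : Fin k,
          (monomial (fφ (Sum.inr j')) ((fun _ : Fin (k+1) ⊕ Fin k => (1:A)) (Sum.inr j')) : MvPolynomial (Fin (k+1)) A)
            ⊗ₜ[A] w (Sum.inr j')
          = (X (0 : Fin (k+1)) * X j'.succ) ⊗ₜ[A] (b 0 * b j'.succ) := by
        intro j'
        rw [hfφ]
        simp only [Sum.elim_inr]
        rw [hXX j']
        rfl
      rw [Fintype.sum_sum_type, Finset.sum_congr rfl fun i _ => hfl i,
        Finset.sum_congr rfl fun j' _ => hfr j', Fin.sum_univ_succ]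
      have huv : ((X (0 : Fin (k+1)) : MvPolynomial (Fin (k+1)) A) ⊗ₜ[A] b 0)
            * (∑ i : Fin k, (X i.succ : MvPolynomial (Fin (k+1)) A) ⊗ₜ[A] b i.succ)
          = ∑ j' : Fin k, ((X (0 : Fin (k+1)) : MvPolynomial (Fin (k+1)) A) * X j'.succ)
              ⊗ₜ[A] (b 0 * b j'.succ) := by
        rw [Finset.mul_sum]
        exact Finset.sum_congr rfl fun i _ => Algebra.TensorProduct.tmul_mul_tmul _ _ _ _
      rw [← huv]
      ring
    -- masterKey for the product element
    have hA := masterKey (σ := Fin (k+1) ⊕ Fin k) (τ := Fin (k+1)) n hnat w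
      fφ (fun _ => (1:A)) (Finsupp.equivFunOnFinite.symm fun _ => 1)
      (insert m0 (Finset.image mj Finset.univ))
      (((1 : MvPolynomial (Fin (k+1)) A ⊗[A] B) + (X (0 : Fin (k+1)) : MvPolynomial (Fin (k+1)) A) ⊗ₜ[A] b 0)
        * ((1 : MvPolynomial (Fin (k+1)) A ⊗[A] B)
            + ∑ i : Fin k, (X i.succ : MvPolynomial (Fin (k+1)) A) ⊗ₜ[A] b i.succ))
      hz ?_
    · -- now compute LHS of hA as product of Thetas
      have hM : (∑ m ∈ insert m0 (Finset.image mj Finset.univ), coeff m p)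
          = coeff m0 p + ∑ j, coeff (mj j) p := by
        rw [Finset.sum_insert, Finset.sum_image]
        · intro j _ j' _ h
          by_contra hne
          have := DFunLike.congr_fun h (Sum.inr j)
          simp [mj, hne] at this
        · intro hmem
          rw [Finset.mem_image] at hmem
          obtain ⟨j, _, hj⟩ := hmem
          have := DFunLike.congr_fun hj (Sum.inr j)
          simp [mj, m0] at this
      rw [← hM, ← hA, (hmult (MvPolynomial (Fin (k+1)) A)).2]
      have hinj1 : Function.Injective (fun _ : Fin 1 => (0 : Fin (k+1))) :=
        fun a b _ => Subsingleton.elim a b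
      have hx0 := hnat (MvPolynomial (Fin 1) A) (MvPolynomial (Fin (k+1)) A)
        (rename (fun _ : Fin 1 => (0 : Fin (k+1))))
        ((1 : MvPolynomial (Fin 1) A ⊗[A] B) + ∑ i, X i ⊗ₜ[A] (fun _ : Fin 1 => b 0) i)
      rw [rTensor_one_add_sum] at hx0
      simp only [rename_X, Fin.sum_univ_one] at hx0
      have hy := hnat (MvPolynomial (Fin k) A) (MvPolynomial (Fin (k+1)) A)
        (rename Fin.succ)
        ((1 : MvPolynomial (Fin k) A ⊗[A] B) + ∑ i, X i ⊗ₜ[A] (fun i : Fin k => b i.succ) i)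
      rw [rTensor_one_add_sum] at hy
      simp only [rename_X] at hy
      rw [← hx0, ← hy]
      have he1 : (Finsupp.equivFunOnFinite.symm fun _ => 1 : Fin 1 →₀ ℕ) = Finsupp.single 0 1 := by
        refine Finsupp.ext fun a => ?_
        rw [Subsingleton.elim a 0]
        simp [Finsupp.single_apply]
      have hdecomp : (Finsupp.equivFunOnFinite.symm fun _ => 1 : Fin (k+1) →₀ ℕ)
          = Finsupp.mapDomain (fun _ : Fin 1 => (0 : Fin (k+1)))
              (Finsupp.equivFunOnFinite.symm fun _ => 1)
            + Finsupp.mapDomain Fin.succ (Finsupp.equivFunOnFinite.symm fun _ => 1) := by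
        rw [he1, Finsupp.mapDomain_single]
        ext t
        rcases Fin.eq_zero_or_eq_succ t with rfl | ⟨i, rfl⟩
        · rw [Finsupp.add_apply,
            Finsupp.mapDomain_notin_range _ _ (by rintro ⟨x, hx⟩; exact Fin.succ_ne_zero x hx)]
          simp [Finsupp.single_apply]
        · rw [Finsupp.add_apply, Finsupp.mapDomain_apply (Fin.succ_injective k)]
          simp [Finsupp.single_apply, (Fin.succ_ne_zero i).symm]
      rw [hdecomp, lemP (fun _ : Fin 1 => (0 : Fin (k+1))) Fin.succ hinj1 (Fin.succ_injective k)
        (fun s t => (Fin.succ_ne_zero t).symm), Theta, Theta]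
      simp only [Fin.sum_univ_one]
    · -- combinatorics for M = insert m0 (image mj univ)
      intro m
      have hprod1 : (m.prod fun s e => ((fun _ : Fin (k+1) ⊕ Fin k => (1:A)) s) ^ e) = 1 := by
        simp [Finsupp.prod]
      rw [hprod1]
      refine if_congr ?_ rfl rfl
      have hsumφ : ∀ (m : (Fin (k+1) ⊕ Fin k) →₀ ℕ) (t : Fin (k+1)),
          (∑ s, m s * (fφ s) t)
            = m (Sum.inl t) + ∑ j', m (Sum.inr j')
                * ((if (0:Fin (k+1)) = t then 1 else 0) + (if j'.succ = t then 1 else 0)) := by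
        intro m t
        rw [Fintype.sum_sum_type]
        congr 1
        · simp [hfφ, Finsupp.single_apply]
        · apply Finset.sum_congr rfl
          intro j' _
          simp [hfφ, Finsupp.single_apply, Finsupp.add_apply]
      have hsum0 : ∀ m : (Fin (k+1) ⊕ Fin k) →₀ ℕ,
          (∑ s, m s * (fφ s) 0) = m (Sum.inl 0) + ∑ j', m (Sum.inr j') := by
        intro m
        rw [hsumφ]
        simp [Fin.succ_ne_zero]
      have hsums : ∀ (m : (Fin (k+1) ⊕ Fin k) →₀ ℕ) (i : Fin k),
          (∑ s, m s * (fφ s) i.succ) = m (Sum.inl i.succ) + m (Sum.inr i) := by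
        intro m i
        rw [hsumφ]
        simp [Fin.succ_inj, (Fin.succ_ne_zero i).symm, mul_ite, Finset.sum_ite_eq']
      rw [cond_iff]
      constructor
      · intro hc
        have hC0 : m (Sum.inl 0) + ∑ j', m (Sum.inr j') = 1 := by
          have := hc 0
          rwa [hsum0, Finsupp.coe_equivFunOnFinite_symm] at this
        have hCS : ∀ i : Fin k, m (Sum.inl i.succ) + m (Sum.inr i) = 1 := by
          intro i
          have := hc i.succ
          rwa [hsums, Finsupp.coe_equivFunOnFinite_symm] at this
        rw [Finset.mem_insert, Finset.mem_image]
        have hle : ∀ j', m (Sum.inr j') ≤ 1 := fun j' => by have := hCS j'; omega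
        by_cases hex : ∃ j', m (Sum.inr j') = 1
        · obtain ⟨j, hj⟩ := hex
          right
          refine ⟨j, Finset.mem_univ j, ?_⟩
          have hsplit := Finset.add_sum_erase Finset.univ
            (fun j' => m (Sum.inr j')) (Finset.mem_univ j)
          rw [← hsplit] at hC0
          try dsimp only at hC0
          have h00 : m (Sum.inl 0) = 0 := by omega
          have hrest : ∑ j' ∈ Finset.univ.erase j, m (Sum.inr j') = 0 := by omega
          have hothers : ∀ j', j' ≠ j → m (Sum.inr j') = 0 := fun j' hne =>
            Finset.sum_eq_zero_iff.mp hrest j' (Finset.mem_erase.mpr ⟨hne, Finset.mem_univ _⟩)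
          ext s
          rcases s with i | j'
          · rcases Fin.eq_zero_or_eq_succ i with rfl | ⟨i', rfl⟩
            · simp [mj, h00]
            · by_cases hij : i' = j
              · subst hij
                have := hCS i'
                rw [hj] at this
                simp [mj]
                omega
              · have := hCS i'
                rw [hothers i' hij, add_zero] at this
                simp [mj, hij, Fin.succ_inj, Fin.succ_ne_zero, this]
          · by_cases hij : j' = j
            · subst hij; simp [mj, hj]
            · simp [mj, hij, hothers j' hij]
        · left
          have hall : ∀ j', m (Sum.inr j') = 0 := fun j' => by
            have h1 := hle j'
            have h2 : m (Sum.inr j') ≠ 1 := fun hc' => hex ⟨j', hc'⟩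
            omega
          have hsz : ∑ j', m (Sum.inr j') = 0 := Finset.sum_eq_zero fun j' _ => hall j'
          rw [hsz, add_zero] at hC0
          ext s
          rcases s with i | j'
          · rcases Fin.eq_zero_or_eq_succ i with rfl | ⟨i', rfl⟩
            · simp [m0, hC0]
            · have := hCS i'
              rw [hall i', add_zero] at this
              simp [m0, this]
          · simp [m0, hall j']
      · intro hmem t
        rw [Finset.mem_insert, Finset.mem_image] at hmem
        rcases hmem with rfl | ⟨j, _, rfl⟩
        · rcases Fin.eq_zero_or_eq_succ t with rfl | ⟨i, rfl⟩
          · rw [hsum0]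
            simp [m0]
          · rw [hsums]
            simp [m0]
        · rcases Fin.eq_zero_or_eq_succ t with rfl | ⟨i, rfl⟩
          · rw [hsum0]
            simp [mj, Finset.sum_ite_eq']
          · rw [hsums]
            by_cases hij : i = j
            · subst hij
              simp [mj]
            · simp [mj, hij, Fin.succ_inj, Fin.succ_ne_zero,
                show ¬(i.succ = j.succ) from fun h => hij (Fin.succ_injective k h)]
  rw [key1, key3, Finset.sum_congr rfl fun j _ => (key2 j).symm]
  ring
end

section
/- Let n be a multiplicative homogeneous polynomial law of degree d from B to A, and let θ := Θ_1 be its trace. Then θ(1) = d·1_A, the recursively defined maps Θ^θ_k coincide with the coefficient-defined maps Θ_k for all k ≥ 1, and Θ^θ_{d+1}(b_1, …, b_{d+1}) = 0 for all b_1, …, b_{d+1} ∈ B; in other words, θ is a degree d trace. -/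
open scoped TensorProduct

universe u

variable {A B : Type u} [CommRing A] [CommRing B] [Algebra A B]

/-- The recursively defined maps `Θ^θ_{k+1}` attached to a map `θ : B → A`:
`ThetaRec θ k` is `Θ^θ_{k+1}`, with `Θ^θ_1 = θ` and
`Θ^θ_{k+2}(b_1,…,b_{k+2}) = θ(b_1)·Θ^θ_{k+1}(b_2,…,b_{k+2}) − ∑_{i=2}^{k+2} Θ^θ_{k+1}(b_2,…,b_1·b_i,…,b_{k+2})`. -/
def ThetaRec {A B : Type u} [CommRing A] [CommRing B] (θ : B → A) :
    (k : ℕ) → (Fin (k + 1) → B) → A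
  | 0, b => θ (b 0)
  | k + 1, b =>
      θ (b 0) * ThetaRec θ k (fun i => b i.succ)
        - ∑ i : Fin (k + 1), ThetaRec θ k (Function.update (fun j : Fin (k + 1) => b j.succ) i (b 0 * b i.succ))

noncomputable section StAux
open MvPolynomial

def ones (σ : Type) [Fintype σ] : σ →₀ ℕ := Finsupp.equivFunOnFinite.symm fun _ => 1

@[simp] lemma ones_apply {σ : Type} [Fintype σ] (i : σ) : ones σ i = 1 := rfl

lemma ones_eq_sum (σ : Type) [Fintype σ] [DecidableEq σ] :
    ones σ = ∑ j : σ, Finsupp.single j 1 := by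
  ext x
  rw [Finsupp.finset_sum_apply]
  simp [Finsupp.single_apply]

lemma mapDomain_eq {σ τ : Type} [Fintype σ] (f : σ → τ) (e : σ →₀ ℕ) :
    Finsupp.mapDomain f e = ∑ i : σ, Finsupp.single (f i) (e i) := by
  rw [Finsupp.mapDomain]
  exact Finsupp.sum_fintype _ _ (by simp)

lemma prod_monomial {σ κ : Type} (s : Finset σ) (m : σ → (κ →₀ ℕ)) (a : σ → A) :
    ∏ j ∈ s, (monomial (m j) (a j) : MvPolynomial κ A)
      = monomial (∑ j ∈ s, m j) (∏ j ∈ s, a j) := by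
  induction s using Finset.cons_induction with
  | empty => simp [monomial_zero']
  | cons j s hj ih =>
      rw [Finset.prod_cons, ih, Finset.sum_cons, Finset.prod_cons, monomial_mul]

/-- Coefficient of the image of a polynomial under a substitution sending each
variable to a monomial. -/
lemma coeff_aeval_monomial {σ κ : Type} [Fintype σ] [DecidableEq κ]
    (P : MvPolynomial σ A) (m : σ → (κ →₀ ℕ)) (a : σ → A) (μ : κ →₀ ℕ) :
    MvPolynomial.coeff μ (aeval (fun i => (monomial (m i) (a i) : MvPolynomial κ A)) P)
      = ∑ e ∈ P.support,
          if (∑ i : σ, e i • m i) = μ then MvPolynomial.coeff e P * ∏ i : σ, a i ^ e i else 0 := by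
  classical
  conv_lhs => rw [P.as_sum]
  rw [map_sum, coeff_sum]
  refine Finset.sum_congr rfl fun e he => ?_
  rw [aeval_monomial, Finsupp.prod_fintype _ _ (fun i => pow_zero _)]
  simp_rw [monomial_pow]
  rw [prod_monomial, algebraMap_eq, C_mul_monomial, coeff_monomial]

lemma coeff_aeval_eq_zero {σ κ : Type} [Fintype σ] [DecidableEq κ]
    (P : MvPolynomial σ A) (m : σ → (κ →₀ ℕ)) (a : σ → A) (μ : κ →₀ ℕ)
    (h : ∀ e ∈ P.support, (∑ i : σ, e i • m i) ≠ μ) :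
    MvPolynomial.coeff μ (aeval (fun i => (monomial (m i) (a i) : MvPolynomial κ A)) P) = 0 := by
  rw [coeff_aeval_monomial]
  exact Finset.sum_eq_zero fun e he => by rw [if_neg (h e he)]

section Nat

variable (n : RawLaw A B)

lemma nat_apply_sum (hnat : IsNatural n) {A' A'' : Type u} [CommRing A'] [Algebra A A']
    [CommRing A''] [Algebra A A''] (φ : A' →ₐ[A] A'') {σ : Type} [Fintype σ]
    (x : σ → A') (c : σ → B) :
    φ (n A' (∑ i : σ, x i ⊗ₜ[A] c i)) = n A'' (∑ i : σ, φ (x i) ⊗ₜ[A] c i) := by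
  rw [hnat A' A'' φ]
  congr 1
  rw [map_sum]
  exact Finset.sum_congr rfl fun i _ => by rw [LinearMap.rTensor_tmul]; rfl

lemma nat_apply_one_add (hnat : IsNatural n) {A' A'' : Type u} [CommRing A'] [Algebra A A']
    [CommRing A''] [Algebra A A''] (φ : A' →ₐ[A] A'') {σ : Type} [Fintype σ]
    (x : σ → A') (c : σ → B) :
    φ (n A' (1 + ∑ i : σ, x i ⊗ₜ[A] c i)) = n A'' (1 + ∑ i : σ, φ (x i) ⊗ₜ[A] c i) := by
  rw [hnat A' A'' φ]
  congr 1
  simp only [map_add, map_sum, LinearMap.rTensor_tmul, AlgHom.toLinearMap_apply,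
    Algebra.TensorProduct.one_def, map_one]

end Nat

lemma weight_mapDomain {J κ : Type} [Fintype J] [DecidableEq J] {m : ℕ}
    (f : Fin m → J) (hf : Function.Injective f) (M : J → (κ →₀ ℕ)) :
    ∑ j : J, (Finsupp.mapDomain f (ones (Fin m))) j • M j = ∑ i : Fin m, M (f i) := by
  rw [← Finset.sum_subset (Finset.subset_univ (Finset.univ.image f))
      (fun j _ hj => ?_), Finset.sum_image (fun a _ b _ h => hf h)]
  · refine Finset.sum_congr rfl fun i _ => ?_
    rw [Finsupp.mapDomain_apply hf, ones_apply, one_smul]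
  · rw [Finsupp.mapDomain_notin_range, zero_smul]
    intro ⟨i, hi⟩
    exact hj (Finset.mem_image.mpr ⟨i, Finset.mem_univ i, hi⟩)

/-- The coefficient of a squarefree monomial supported on the range of an injective `f`
in `n(1 + ∑ X j ⊗ c j)` computes `Theta` of the pulled-back family. -/
lemma coeff_embed (n : RawLaw A B) (hnat : IsNatural n) {J : Type} [Fintype J] [DecidableEq J]
    (c : J → B) (m : ℕ) (f : Fin m → J) (hf : Function.Injective f) :
    MvPolynomial.coeff (Finsupp.mapDomain f (ones (Fin m)))
      (n (MvPolynomial J A) (1 + ∑ j : J, X j ⊗ₜ[A] c j)) = Theta n m (c ∘ f) := by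
  classical
  set P : MvPolynomial J A := n (MvPolynomial J A) (1 + ∑ j : J, X j ⊗ₜ[A] c j) with hP
  set ε : J →₀ ℕ := Finsupp.mapDomain f (ones (Fin m)) with hεdef
  set M : J → (Fin m →₀ ℕ) := fun j => if h : ∃ i, f i = j then Finsupp.single h.choose 1 else 0
    with hM
  set a : J → A := fun j => if ∃ i, f i = j then (1 : A) else 0 with ha
  have hMf : ∀ i : Fin m, M (f i) = Finsupp.single i 1 := by
    intro i
    have h : ∃ i', f i' = f i := ⟨i, rfl⟩
    rw [hM]
    simp only [dif_pos h]
    rw [hf h.choose_spec]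
  have haf : ∀ i : Fin m, a (f i) = 1 := fun i => if_pos ⟨i, rfl⟩
  have hMz : ∀ j, (¬ ∃ i, f i = j) → M j = 0 ∧ a j = 0 := fun j hj => ⟨dif_neg hj, if_neg hj⟩
  have hnotr : ∀ j, (¬ ∃ i, f i = j) → j ∉ Set.range f := fun j hj hr =>
    hj (Set.mem_range.mp hr)
  have himg : aeval (fun j => (monomial (M j) (a j) : MvPolynomial (Fin m) A)) P
      = n (MvPolynomial (Fin m) A) (1 + ∑ i : Fin m, X i ⊗ₜ[A] (c ∘ f) i) := by
    rw [hP, nat_apply_one_add n hnat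
      (aeval fun j => (monomial (M j) (a j) : MvPolynomial (Fin m) A))
      (fun j => (X j : MvPolynomial J A)) c]
    congr 2
    rw [← Finset.sum_subset (Finset.subset_univ (Finset.univ.image f))
      (fun j _ hj => ?_), Finset.sum_image (fun a _ b _ h => hf h)]
    · refine Finset.sum_congr rfl fun i _ => ?_
      rw [aeval_X, hMf i, haf i]
      rfl
    · have hj' : ¬ ∃ i, f i = j := fun ⟨i, hi⟩ =>
        hj (Finset.mem_image.mpr ⟨i, Finset.mem_univ i, hi⟩)
      rw [aeval_X, (hMz j hj').2]
      simp
  have hth : Theta n m (c ∘ f) = MvPolynomial.coeff (ones (Fin m))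
      (n (MvPolynomial (Fin m) A) (1 + ∑ i : Fin m, X i ⊗ₜ[A] (c ∘ f) i)) := rfl
  rw [hth, ← himg, coeff_aeval_monomial]
  have hterm : ∀ e ∈ P.support,
      (if (∑ j : J, e j • M j) = ones (Fin m)
        then MvPolynomial.coeff e P * ∏ j : J, a j ^ e j else 0)
        = if e = ε then MvPolynomial.coeff e P else 0 := by
    intro e _
    by_cases heε : e = ε
    · subst heε
      have hw1 : (∑ j : J, ε j • M j) = ones (Fin m) := by
        rw [hεdef, weight_mapDomain f hf M]
        rw [ones_eq_sum]
        exact Finset.sum_congr rfl fun i _ => hMf i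
      rw [if_pos hw1, if_pos rfl]
      have hprod : (∏ j : J, a j ^ ε j) = 1 := by
        refine Finset.prod_eq_one fun j _ => ?_
        by_cases hj : ∃ i, f i = j
        · rw [ha]
          simp only [if_pos hj, one_pow]
        · rw [hεdef, Finsupp.mapDomain_notin_range _ _ (hnotr j hj), pow_zero]
      rw [hprod, mul_one]
    · rw [if_neg heε]
      split_ifs with hw
      · by_cases hsupp : ∀ j, e j ≠ 0 → ∃ i, f i = j
        · exfalso
          apply heε
          have hwe : (∑ j : J, e j • M j) = ∑ i : Fin m, Finsupp.single i (e (f i)) := by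
            rw [← Finset.sum_subset (Finset.subset_univ (Finset.univ.image f))
              (fun j _ hj => ?_), Finset.sum_image (fun a _ b _ h => hf h)]
            · refine Finset.sum_congr rfl fun i _ => ?_
              rw [hMf i, Finsupp.smul_single, smul_eq_mul, mul_one]
            · have hj' : ¬ ∃ i, f i = j := fun ⟨i, hi⟩ =>
                hj (Finset.mem_image.mpr ⟨i, Finset.mem_univ i, hi⟩)
              have he0 : e j = 0 := by
                by_contra h
                exact hj' (hsupp j h)
              rw [he0, zero_smul]
          rw [hwe] at hw
          have hei : ∀ i : Fin m, e (f i) = 1 := by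
            intro i
            have h2 := Finsupp.ext_iff.mp hw i
            rw [Finsupp.finset_sum_apply] at h2
            simpa [Finsupp.single_apply] using h2
          ext j
          by_cases hj : ∃ i, f i = j
          · obtain ⟨i, rfl⟩ := hj
            rw [hεdef, Finsupp.mapDomain_apply hf, ones_apply, hei i]
          · rw [hεdef, Finsupp.mapDomain_notin_range _ _ (hnotr j hj)]
            by_contra h
            exact hj (hsupp j h)
        · push_neg at hsupp
          obtain ⟨j0, hj0ne, hj0r⟩ := hsupp
          rw [Finset.prod_eq_zero (Finset.mem_univ j0)
            (by rw [(hMz j0 fun ⟨i, hi⟩ => hj0r i hi).2, zero_pow hj0ne]), mul_zero]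
      · rfl
  rw [Finset.sum_congr rfl hterm, Finset.sum_ite_eq' P.support ε (fun e => MvPolynomial.coeff e P)]
  split_ifs with h
  · rfl
  · exact MvPolynomial.notMem_support_iff.mp h

lemma ones_fin_one : ones (Fin 1) = Finsupp.single 0 1 := by
  refine Finsupp.ext fun i => ?_
  rw [Subsingleton.elim i 0]
  simp

lemma finsupp_fin_one_eq (e : Fin 1 →₀ ℕ) : e = Finsupp.single 0 (e 0) := by
  refine Finsupp.ext fun i => ?_
  rw [Subsingleton.elim i 0]
  simp

lemma theta_smul (n : RawLaw A B) (hnat : IsNatural n) (a : A) (b : B) :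
    Theta n 1 (fun _ => a • b) = a * Theta n 1 (fun _ => b) := by
  classical
  set P : MvPolynomial (Fin 1) A :=
    n (MvPolynomial (Fin 1) A) (1 + ∑ i : Fin 1, X i ⊗ₜ[A] b) with hP
  have hX : (X (0 : Fin 1) : MvPolynomial (Fin 1) A) = monomial (Finsupp.single 0 1) 1 := by
    rw [← X_pow_eq_monomial, pow_one]
  have himg : aeval (fun _ : Fin 1 => (monomial (Finsupp.single (0 : Fin 1) 1) a :
        MvPolynomial (Fin 1) A)) P
      = n (MvPolynomial (Fin 1) A) (1 + ∑ i : Fin 1, X i ⊗ₜ[A] (a • b)) := by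
    rw [hP, nat_apply_one_add n hnat _ (fun i : Fin 1 => (X i : MvPolynomial (Fin 1) A))
      (fun _ => b)]
    congr 2
    rw [Fin.sum_univ_one, Fin.sum_univ_one, aeval_X]
    rw [show (monomial (Finsupp.single (0 : Fin 1) 1) a : MvPolynomial (Fin 1) A)
        = a • X 0 by rw [smul_eq_C_mul, hX, C_mul_monomial, mul_one]]
    rw [TensorProduct.smul_tmul]
  have hth : Theta n 1 (fun _ => a • b) = MvPolynomial.coeff (ones (Fin 1))
      (n (MvPolynomial (Fin 1) A) (1 + ∑ i : Fin 1, X i ⊗ₜ[A] (a • b))) := rfl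
  rw [hth, ← himg, coeff_aeval_monomial]
  have hterm : ∀ e ∈ P.support,
      (if (∑ i : Fin 1, e i • Finsupp.single (0 : Fin 1) 1) = ones (Fin 1)
        then MvPolynomial.coeff e P * ∏ i : Fin 1, a ^ e i else 0)
      = if e = ones (Fin 1) then MvPolynomial.coeff e P * a else 0 := by
    intro e _
    have hw : (∑ i : Fin 1, e i • Finsupp.single (0 : Fin 1) 1)
        = Finsupp.single 0 (e 0) := by
      rw [Fin.sum_univ_one, Finsupp.smul_single, smul_eq_mul, mul_one]
    rw [hw, ones_fin_one, Fin.prod_univ_one]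
    by_cases h : e 0 = 1
    · rw [if_pos (by rw [h]), if_pos (by rw [finsupp_fin_one_eq e, h, ← ones_fin_one]), h,
        pow_one]
    · rw [if_neg (by
        intro hc
        exact h (by simpa using (Finsupp.ext_iff.mp hc 0))), if_neg (by
        intro hc
        exact h (by rw [hc]; simp [ones_fin_one]))]
  rw [Finset.sum_congr rfl hterm,
    Finset.sum_ite_eq' P.support (ones (Fin 1)) (fun e => MvPolynomial.coeff e P * a)]
  have hPT : MvPolynomial.coeff (ones (Fin 1)) P = Theta n 1 (fun _ => b) := rfl
  split_ifs with h
  · rw [mul_comm, hPT]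
  · rw [← hPT, MvPolynomial.notMem_support_iff.mp h, mul_zero]

lemma theta_add (n : RawLaw A B) (hnat : IsNatural n) (b b' : B) :
    Theta n 1 (fun _ => b + b') = Theta n 1 (fun _ => b) + Theta n 1 (fun _ => b') := by
  classical
  set c : Fin 2 → B := ![b, b'] with hc
  set P : MvPolynomial (Fin 2) A :=
    n (MvPolynomial (Fin 2) A) (1 + ∑ j : Fin 2, X j ⊗ₜ[A] c j) with hP
  have hX : ∀ i : Fin 1, (X i : MvPolynomial (Fin 1) A) = monomial (Finsupp.single i 1) 1 := by
    intro i
    rw [← X_pow_eq_monomial, pow_one]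
  have himg : aeval (fun _ : Fin 2 => (monomial (Finsupp.single (0 : Fin 1) 1) (1 : A) :
        MvPolynomial (Fin 1) A)) P
      = n (MvPolynomial (Fin 1) A) (1 + ∑ i : Fin 1, X i ⊗ₜ[A] (b + b')) := by
    rw [hP, nat_apply_one_add n hnat _ (fun j : Fin 2 => (X j : MvPolynomial (Fin 2) A)) c]
    congr 2
    rw [Fin.sum_univ_one, Fin.sum_univ_two, aeval_X, aeval_X, ← hX 0]
    rw [show c 0 = b from rfl, show c 1 = b' from rfl, ← TensorProduct.tmul_add]
  have hth : Theta n 1 (fun _ => b + b') = MvPolynomial.coeff (ones (Fin 1))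
      (n (MvPolynomial (Fin 1) A) (1 + ∑ i : Fin 1, X i ⊗ₜ[A] (b + b'))) := rfl
  have hs0 : Finsupp.single (0 : Fin 2) 1
      = Finsupp.mapDomain (fun _ : Fin 1 => (0 : Fin 2)) (ones (Fin 1)) := by
    rw [mapDomain_eq, Fin.sum_univ_one, ones_apply]
  have hs1 : Finsupp.single (1 : Fin 2) 1
      = Finsupp.mapDomain (fun _ : Fin 1 => (1 : Fin 2)) (ones (Fin 1)) := by
    rw [mapDomain_eq, Fin.sum_univ_one, ones_apply]
  have hne : Finsupp.single (0 : Fin 2) 1 ≠ Finsupp.single (1 : Fin 2) 1 := by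
    intro h
    have := Finsupp.ext_iff.mp h 0
    simp [Finsupp.single_apply] at this
  rw [hth, ← himg, coeff_aeval_monomial]
  have hterm : ∀ e ∈ P.support,
      (if (∑ j : Fin 2, e j • Finsupp.single (0 : Fin 1) 1) = ones (Fin 1)
        then MvPolynomial.coeff e P * ∏ j : Fin 2, (1 : A) ^ e j else 0)
      = (if e = Finsupp.single 0 1 then MvPolynomial.coeff e P else 0)
        + (if e = Finsupp.single 1 1 then MvPolynomial.coeff e P else 0) := by
    intro e _
    have hw : (∑ j : Fin 2, e j • Finsupp.single (0 : Fin 1) 1)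
        = Finsupp.single 0 (e 0 + e 1) := by
      rw [Fin.sum_univ_two, ← add_smul, Finsupp.smul_single, smul_eq_mul, mul_one]
    have hprod : (∏ j : Fin 2, (1 : A) ^ e j) = 1 := by simp
    rw [hw, hprod, mul_one, ones_fin_one]
    have hiff : Finsupp.single (0 : Fin 1) (e 0 + e 1) = Finsupp.single 0 1 ↔ e 0 + e 1 = 1 := by
      constructor
      · intro h
        simpa using Finsupp.ext_iff.mp h 0
      · intro h
        rw [h]
    by_cases h0 : e = Finsupp.single 0 1
    · rw [if_pos (hiff.mpr (by rw [h0]; simp [Finsupp.single_apply])), if_pos h0,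
        if_neg (by rw [h0]; exact hne), add_zero]
    · by_cases h1 : e = Finsupp.single 1 1
      · rw [if_pos (hiff.mpr (by rw [h1]; simp [Finsupp.single_apply])), if_neg h0, if_pos h1,
          zero_add]
      · rw [if_neg h0, if_neg h1, add_zero, if_neg]
        intro hc
        rcases Nat.add_eq_one_iff.mp (hiff.mp hc) with ⟨ha0, ha1⟩ | ⟨ha0, ha1⟩
        · exact h1 (by refine Finsupp.ext fun i => ?_
                       fin_cases i <;> simp [Finsupp.single_apply, ha0, ha1])
        · exact h0 (by refine Finsupp.ext fun i => ?_
                       fin_cases i <;> simp [Finsupp.single_apply, ha0, ha1])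
  rw [Finset.sum_congr rfl hterm, Finset.sum_add_distrib,
    Finset.sum_ite_eq' P.support (Finsupp.single 0 1) (fun e => MvPolynomial.coeff e P),
    Finset.sum_ite_eq' P.support (Finsupp.single 1 1) (fun e => MvPolynomial.coeff e P)]
  have hco : ∀ μ : Fin 2 →₀ ℕ, (if μ ∈ P.support then MvPolynomial.coeff μ P else 0)
      = MvPolynomial.coeff μ P := by
    intro μ
    split_ifs with h
    · rfl
    · exact (MvPolynomial.notMem_support_iff.mp h).symm
  rw [hco, hco, hs0, hs1, hP,
    coeff_embed n hnat c 1 (fun _ => (0 : Fin 2)) (fun x y _ => Subsingleton.elim x y),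
    coeff_embed n hnat c 1 (fun _ => (1 : Fin 2)) (fun x y _ => Subsingleton.elim x y)]
  rfl

lemma theta_one (n : RawLaw A B) {d : ℕ} (hd : 0 < d) (hhom : IsHomog d n) (hmult : IsMult n) :
    Theta n 1 (fun _ => (1 : B)) = (d : A) := by
  classical
  have harg : (1 : MvPolynomial (Fin 1) A ⊗[A] B) + ∑ i : Fin 1, X i ⊗ₜ[A] (1 : B)
      = ((1 + X 0 : MvPolynomial (Fin 1) A)) • (1 : MvPolynomial (Fin 1) A ⊗[A] B) := by
    rw [Fin.sum_univ_one, Algebra.TensorProduct.one_def, TensorProduct.smul_tmul', smul_eq_mul,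
      mul_one, ← TensorProduct.add_tmul]
  have h2 : n (MvPolynomial (Fin 1) A)
        ((1 : MvPolynomial (Fin 1) A ⊗[A] B) + ∑ i : Fin 1, X i ⊗ₜ[A] (1 : B))
      = (1 + X 0) ^ d := by
    rw [harg, hhom _ _ _, (hmult _).1, mul_one]
  have h3 : Theta n 1 (fun _ => (1 : B)) = MvPolynomial.coeff (ones (Fin 1))
      ((1 + X (0 : Fin 1) : MvPolynomial (Fin 1) A) ^ d) := by
    rw [← h2]
    rfl
  rw [h3, ones_fin_one, add_comm (1 : MvPolynomial (Fin 1) A) (X 0),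
    add_pow (X (0 : Fin 1) : MvPolynomial (Fin 1) A) 1 d, coeff_sum]
  have hterm : ∀ j ∈ Finset.range (d + 1),
      MvPolynomial.coeff (Finsupp.single (0 : Fin 1) 1)
        ((X 0 : MvPolynomial (Fin 1) A) ^ j * 1 ^ (d - j) * (d.choose j : MvPolynomial (Fin 1) A))
      = if j = 1 then (d : A) else 0 := by
    intro j _
    rw [one_pow, mul_one, mul_comm, ← C_eq_coe_nat, coeff_C_mul, X_pow_eq_monomial,
      coeff_monomial]
    by_cases hj : j = 1
    · subst hj
      rw [if_pos rfl, if_pos rfl, mul_one, Nat.choose_one_right]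
    · rw [if_neg hj, if_neg, mul_zero]
      intro hcon
      exact hj (by simpa using Finsupp.ext_iff.mp hcon 0)
  rw [Finset.sum_congr rfl hterm, Finset.sum_ite_eq' (Finset.range (d + 1)) 1 (fun _ => (d : A)),
    if_pos (Finset.mem_range.mpr (by omega))]

lemma coeff_homog (n : RawLaw A B) (hnat : IsNatural n) {d : ℕ} (hhom : IsHomog d n)
    {k : ℕ} (c : Fin k → B) (e : Fin k →₀ ℕ) (he : (∑ i : Fin k, e i) ≠ d) :
    MvPolynomial.coeff e (n (MvPolynomial (Fin k) A) (∑ i : Fin k, X i ⊗ₜ[A] c i)) = 0 := by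
  classical
  set Q : MvPolynomial (Fin k) A :=
    n (MvPolynomial (Fin k) A) (∑ i : Fin k, X i ⊗ₜ[A] c i) with hQ
  set M₁ : Fin k → (Option (Fin k) →₀ ℕ) :=
    fun i => Finsupp.single none 1 + Finsupp.single (some i) 1 with hM₁
  have hXmon : ∀ x : Option (Fin k),
      (X x : MvPolynomial (Option (Fin k)) A) = monomial (Finsupp.single x 1) 1 := by
    intro x
    rw [← X_pow_eq_monomial, pow_one]
  have hmon : ∀ i : Fin k, (monomial (M₁ i) (1 : A) : MvPolynomial (Option (Fin k)) A)
      = X none * X (some i) := by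
    intro i
    rw [hXmon, hXmon, monomial_mul, one_mul]
  have hkey : aeval (fun i : Fin k =>
        (monomial (M₁ i) (1 : A) : MvPolynomial (Option (Fin k)) A)) Q
      = X none ^ d * rename some Q := by
    have h1 := nat_apply_sum n hnat
      (aeval (fun i : Fin k => (monomial (M₁ i) (1 : A) : MvPolynomial (Option (Fin k)) A)))
      (fun i : Fin k => (X i : MvPolynomial (Fin k) A)) c
    have h2 := nat_apply_sum n hnat
      (rename (R := A) (some : Fin k → Option (Fin k)))
      (fun i : Fin k => (X i : MvPolynomial (Fin k) A)) c
    simp only [aeval_X, rename_X] at h1 h2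
    rw [← hQ] at h1 h2
    rw [h1]
    have h3 : (∑ i : Fin k, (monomial (M₁ i) (1 : A) :
          MvPolynomial (Option (Fin k)) A) ⊗ₜ[A] c i)
        = (X (none : Option (Fin k)) : MvPolynomial (Option (Fin k)) A) •
            ∑ i : Fin k, (X (some i) : MvPolynomial (Option (Fin k)) A) ⊗ₜ[A] c i := by
      rw [Finset.smul_sum]
      refine Finset.sum_congr rfl fun i _ => ?_
      rw [TensorProduct.smul_tmul', smul_eq_mul, hmon]
    rw [h3, hhom, ← h2]
  set μ : Option (Fin k) →₀ ℕ :=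
    Finsupp.mapDomain some e + Finsupp.single none d with hμ
  have hnr : (none : Option (Fin k)) ∉ Set.range (some : Fin k → Option (Fin k)) := by
    simp
  have hR : MvPolynomial.coeff μ
        ((X (none : Option (Fin k)) : MvPolynomial (Option (Fin k)) A) ^ d * rename some Q)
      = MvPolynomial.coeff e Q := by
    rw [mul_comm, hμ, X_pow_eq_monomial, coeff_mul_monomial,
      coeff_rename_mapDomain some (Option.some_injective _) Q e, mul_one]
  have hL : MvPolynomial.coeff μ (aeval (fun i : Fin k =>
        (monomial (M₁ i) (1 : A) : MvPolynomial (Option (Fin k)) A)) Q) = 0 := by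
    apply coeff_aeval_eq_zero
    intro e' _ hcon
    have hsome : ∀ j : Fin k, e' j = e j := by
      intro j
      have h := Finsupp.ext_iff.mp hcon (some j)
      rw [Finsupp.finset_sum_apply] at h
      simpa [hM₁, hμ, Finsupp.single_apply,
        Finsupp.mapDomain_apply (Option.some_injective _)] using h
    have hnone := Finsupp.ext_iff.mp hcon none
    rw [Finsupp.finset_sum_apply] at hnone
    simp [hM₁, hμ, Finsupp.single_apply, Finsupp.mapDomain_notin_range _ _ hnr] at hnone
    refine he ?_
    rw [show (∑ i : Fin k, e i) = ∑ i : Fin k, e' i from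
      Finset.sum_congr rfl fun i _ => (hsome i).symm]
    exact hnone
  rw [← hR, ← hkey]
  exact hL

lemma theta_top (n : RawLaw A B) (hnat : IsNatural n) {d : ℕ} (hhom : IsHomog d n)
    (b : Fin (d + 1) → B) : Theta n (d + 1) b = 0 := by
  classical
  set c : Fin (d + 2) → B := Fin.cons 1 b with hc
  set Q : MvPolynomial (Fin (d + 2)) A :=
    n (MvPolynomial (Fin (d + 2)) A) (∑ j : Fin (d + 2), X j ⊗ₜ[A] c j) with hQ
  set m₂ : Fin (d + 2) → (Fin (d + 1) →₀ ℕ) :=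
    Fin.cons 0 (fun i => Finsupp.single i 1) with hm₂
  have hXmon : ∀ x : Fin (d + 1),
      (X x : MvPolynomial (Fin (d + 1)) A) = monomial (Finsupp.single x 1) 1 := by
    intro x
    rw [← X_pow_eq_monomial, pow_one]
  have himg : aeval (fun j => (monomial (m₂ j) (1 : A) : MvPolynomial (Fin (d + 1)) A)) Q
      = n (MvPolynomial (Fin (d + 1)) A)
          (1 + ∑ i : Fin (d + 1), X i ⊗ₜ[A] b i) := by
    have h1 := nat_apply_sum n hnat
      (aeval (fun j => (monomial (m₂ j) (1 : A) : MvPolynomial (Fin (d + 1)) A)))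
      (fun j : Fin (d + 2) => (X j : MvPolynomial (Fin (d + 2)) A)) c
    simp only [aeval_X] at h1
    rw [← hQ] at h1
    rw [h1]
    have hsum : (∑ j : Fin (d + 2),
          (monomial (m₂ j) (1 : A) : MvPolynomial (Fin (d + 1)) A) ⊗ₜ[A] c j)
        = 1 + ∑ i : Fin (d + 1), (X i : MvPolynomial (Fin (d + 1)) A) ⊗ₜ[A] b i := by
      rw [Fin.sum_univ_succ, hc, hm₂]
      simp only [Fin.cons_zero, Fin.cons_succ]
      rw [monomial_zero', C_1, ← Algebra.TensorProduct.one_def]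
      congr 1
    rw [hsum]
  have hth : Theta n (d + 1) b = MvPolynomial.coeff (ones (Fin (d + 1)))
      (n (MvPolynomial (Fin (d + 1)) A) (1 + ∑ i : Fin (d + 1), X i ⊗ₜ[A] b i)) := rfl
  rw [hth, ← himg, coeff_aeval_monomial]
  refine Finset.sum_eq_zero fun e _ => ?_
  split_ifs with hw
  · have hsucc : ∀ i : Fin (d + 1), e i.succ = 1 := by
      intro i
      have h := Finsupp.ext_iff.mp hw i
      rw [Finsupp.finset_sum_apply] at h
      simpa [Fin.sum_univ_succ, hm₂, Finsupp.single_apply] using h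
    have hsum : (∑ j : Fin (d + 2), e j) ≠ d := by
      rw [Fin.sum_univ_succ]
      have h1 : ∑ i : Fin (d + 1), e i.succ = d + 1 := by
        rw [Finset.sum_congr rfl fun i _ => hsucc i]
        simp
      omega
    rw [hQ] at *
    rw [coeff_homog n hnat hhom c e hsum, zero_mul]
  · rfl


end StAux

noncomputable section KeyAux
open MvPolynomial

/-- index combinators for the key identity -/
def keyM (k : ℕ) : (Fin (k + 2) ⊕ Fin (k + 1)) → (Fin (k + 2) →₀ ℕ) :=
  Sum.elim (fun j => Finsupp.single j 1)
    (fun i => Finsupp.single 0 1 + Finsupp.single i.succ 1)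

def keyg (k : ℕ) (i : Fin (k + 1)) (j : Fin (k + 1)) : Fin (k + 2) ⊕ Fin (k + 1) :=
  if j = i then Sum.inr i else Sum.inl j.succ

lemma keyg_self (k : ℕ) (i : Fin (k + 1)) : keyg k i i = Sum.inr i := if_pos rfl

lemma keyg_ne (k : ℕ) (i j : Fin (k + 1)) (h : j ≠ i) : keyg k i j = Sum.inl j.succ :=
  if_neg h

lemma keyg_inj (k : ℕ) (i : Fin (k + 1)) : Function.Injective (keyg k i) := by
  intro a a' h
  by_cases h1 : a = i <;> by_cases h2 : a' = i
  · rw [h1, h2]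
  · rw [h1, keyg_self, keyg_ne k i a' h2] at h
    exact absurd h (by simp)
  · rw [h2, keyg_self, keyg_ne k i a h1] at h
    exact absurd h (by simp)
  · rw [keyg_ne k i a h1, keyg_ne k i a' h2] at h
    exact Fin.succ_injective _ (Sum.inl.inj h)

def keyε0 (k : ℕ) : (Fin (k + 2) ⊕ Fin (k + 1)) →₀ ℕ :=
  Finsupp.mapDomain Sum.inl (ones (Fin (k + 2)))

def keyε (k : ℕ) (i : Fin (k + 1)) : (Fin (k + 2) ⊕ Fin (k + 1)) →₀ ℕ :=
  Finsupp.mapDomain (keyg k i) (ones (Fin (k + 1)))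

lemma keyε0_inl (k : ℕ) (j : Fin (k + 2)) : keyε0 k (Sum.inl j) = 1 := by
  rw [keyε0, Finsupp.mapDomain_apply Sum.inl_injective, ones_apply]

lemma keyε0_inr (k : ℕ) (i : Fin (k + 1)) : keyε0 k (Sum.inr i) = 0 := by
  rw [keyε0, Finsupp.mapDomain_notin_range]
  simp

lemma key_notin_range (k : ℕ) (i0 : Fin (k + 1)) (j' : Fin (k + 2) ⊕ Fin (k + 1))
    (h : ∀ j : Fin (k + 1), keyg k i0 j ≠ j') : j' ∉ Set.range (keyg k i0) := by
  intro hr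
  obtain ⟨j, hj⟩ := hr
  exact h j hj

lemma keyε_inr (k : ℕ) (i0 : Fin (k + 1)) : keyε k i0 (Sum.inr i0) = 1 := by
  rw [keyε, ← keyg_self k i0, Finsupp.mapDomain_apply (keyg_inj k i0), ones_apply]

lemma keyε_inr' (k : ℕ) (i0 i : Fin (k + 1)) (hi : i ≠ i0) : keyε k i0 (Sum.inr i) = 0 := by
  rw [keyε, Finsupp.mapDomain_notin_range]
  refine key_notin_range k i0 _ fun j => ?_
  unfold keyg
  split_ifs with h1
  · intro hcon
    exact hi (Sum.inr.inj hcon).symm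
  · simp

lemma keyε_inl0 (k : ℕ) (i0 : Fin (k + 1)) : keyε k i0 (Sum.inl 0) = 0 := by
  rw [keyε, Finsupp.mapDomain_notin_range]
  refine key_notin_range k i0 _ fun j => ?_
  unfold keyg
  split_ifs with h1
  · simp
  · intro hcon
    exact Fin.succ_ne_zero j (Sum.inl.inj hcon)

lemma keyε_inls (k : ℕ) (i0 x : Fin (k + 1)) :
    keyε k i0 (Sum.inl x.succ) = if x = i0 then 0 else 1 := by
  by_cases hxi : x = i0
  · rw [if_pos hxi, keyε, Finsupp.mapDomain_notin_range]
    refine key_notin_range k i0 _ fun j => ?_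
    unfold keyg
    split_ifs with h1
    · simp
    · intro hcon
      exact h1 ((Fin.succ_injective _ (Sum.inl.inj hcon)).trans hxi)
  · rw [if_neg hxi, keyε, ← keyg_ne k i0 x hxi,
      Finsupp.mapDomain_apply (keyg_inj k i0), ones_apply]

lemma keyWε0 (k : ℕ) :
    (∑ j' : Fin (k + 2) ⊕ Fin (k + 1), keyε0 k j' • keyM k j') = ones (Fin (k + 2)) := by
  rw [keyε0, weight_mapDomain Sum.inl Sum.inl_injective (keyM k), ones_eq_sum]
  rfl

lemma keyWε (k : ℕ) (i0 : Fin (k + 1)) :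
    (∑ j' : Fin (k + 2) ⊕ Fin (k + 1), keyε k i0 j' • keyM k j') = ones (Fin (k + 2)) := by
  rw [keyε, weight_mapDomain (keyg k i0) (keyg_inj k i0) (keyM k)]
  have h1 : ∀ j : Fin (k + 1), keyM k (keyg k i0 j)
      = Finsupp.single (j.succ : Fin (k + 2)) 1
        + (if j = i0 then Finsupp.single (0 : Fin (k + 2)) 1 else 0) := by
    intro j
    by_cases hj : j = i0
    · subst hj
      rw [keyg_self, if_pos rfl, keyM, Sum.elim_inr]
      exact add_comm _ _
    · rw [keyg_ne k i0 j hj, if_neg hj, add_zero, keyM, Sum.elim_inl]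
  rw [Finset.sum_congr rfl fun j _ => h1 j, Finset.sum_add_distrib,
    Finset.sum_ite_eq' Finset.univ i0 (fun _ => Finsupp.single (0 : Fin (k + 2)) 1),
    if_pos (Finset.mem_univ i0), ones_eq_sum (Fin (k + 2)),
    Fin.sum_univ_succ (f := fun j : Fin (k + 2) => Finsupp.single j 1)]
  exact add_comm _ _

lemma keyW0 (k : ℕ) (e : (Fin (k + 2) ⊕ Fin (k + 1)) →₀ ℕ) :
    (∑ j' : Fin (k + 2) ⊕ Fin (k + 1), e j' • keyM k j') 0
      = e (Sum.inl 0) + ∑ i : Fin (k + 1), e (Sum.inr i) := by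
  rw [Finsupp.finset_sum_apply, Fintype.sum_sum_type]
  congr 1
  · simp [keyM, Finsupp.single_apply]
  · simp [keyM, Finsupp.single_apply, Fin.succ_ne_zero]

lemma keyWs (k : ℕ) (e : (Fin (k + 2) ⊕ Fin (k + 1)) →₀ ℕ) (x' : Fin (k + 1)) :
    (∑ j' : Fin (k + 2) ⊕ Fin (k + 1), e j' • keyM k j') x'.succ
      = e (Sum.inl x'.succ) + e (Sum.inr x') := by
  rw [Finsupp.finset_sum_apply, Fintype.sum_sum_type]
  congr 1
  · simp [keyM, Finsupp.single_apply]
  · simp [keyM, Finsupp.single_apply, (Fin.succ_ne_zero x').symm, Fin.succ_inj]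

lemma key_char (k : ℕ) (e : (Fin (k + 2) ⊕ Fin (k + 1)) →₀ ℕ)
    (hW : (∑ j' : Fin (k + 2) ⊕ Fin (k + 1), e j' • keyM k j') = ones (Fin (k + 2))) :
    e = keyε0 k ∨ ∃ i0, e = keyε k i0 := by
  have h0 : e (Sum.inl 0) + ∑ i : Fin (k + 1), e (Sum.inr i) = 1 := by
    have h := Finsupp.ext_iff.mp hW 0
    rw [keyW0 k e] at h
    simpa using h
  have hs : ∀ x' : Fin (k + 1), e (Sum.inl x'.succ) + e (Sum.inr x') = 1 := by
    intro x'
    have h := Finsupp.ext_iff.mp hW x'.succ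
    rw [keyWs k e x'] at h
    simpa using h
  rcases Nat.add_eq_one_iff.mp h0 with ⟨ha, hb⟩ | ⟨ha, hb⟩
  · right
    have hex : ∃ i0, e (Sum.inr i0) ≠ 0 := by
      by_contra hcon
      push_neg at hcon
      rw [Finset.sum_eq_zero fun i _ => hcon i] at hb
      omega
    obtain ⟨i0, hi0⟩ := hex
    have hle : e (Sum.inr i0) ≤ ∑ i : Fin (k + 1), e (Sum.inr i) :=
      Finset.single_le_sum (f := fun i => e (Sum.inr i)) (fun i _ => Nat.zero_le _) (Finset.mem_univ i0)
    have hi01 : e (Sum.inr i0) = 1 := by omega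
    have hrest : ∀ i, i ≠ i0 → e (Sum.inr i) = 0 := by
      intro i hi
      have herase : e (Sum.inr i0) + ∑ i' ∈ Finset.univ.erase i0, e (Sum.inr i')
          = ∑ i' : Fin (k + 1), e (Sum.inr i') :=
        Finset.add_sum_erase Finset.univ (fun i => e (Sum.inr i)) (Finset.mem_univ i0)
      have hz : ∑ i' ∈ Finset.univ.erase i0, e (Sum.inr i') = 0 := by omega
      exact (Finset.sum_eq_zero_iff.mp hz) i (Finset.mem_erase.mpr ⟨hi, Finset.mem_univ i⟩)
    refine ⟨i0, Finsupp.ext fun j' => ?_⟩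
    rcases j' with j | i
    · refine Fin.cases ?_ ?_ j
      · rw [ha, keyε_inl0]
      · intro x'
        rw [keyε_inls]
        by_cases hx : x' = i0
        · subst hx
          rw [if_pos rfl]
          have h := hs x'
          omega
        · rw [if_neg hx]
          have h := hs x'
          rw [hrest x' hx] at h
          omega
    · by_cases hi : i = i0
      · subst hi
        rw [hi01, keyε_inr]
      · rw [hrest i hi, keyε_inr' k i0 i hi]
  · left
    have hz : ∀ i : Fin (k + 1), e (Sum.inr i) = 0 := fun i =>
      (Finset.sum_eq_zero_iff.mp hb) i (Finset.mem_univ i)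
    refine Finsupp.ext fun j' => ?_
    rcases j' with j | i
    · refine Fin.cases ?_ ?_ j
      · rw [ha, keyε0_inl]
      · intro x'
        rw [keyε0_inl]
        have h := hs x'
        rw [hz x'] at h
        omega
    · rw [hz i, keyε0_inr]

lemma keyε0_ne (k : ℕ) (i0 : Fin (k + 1)) : keyε0 k ≠ keyε k i0 := by
  intro hcon
  have h := Finsupp.ext_iff.mp hcon (Sum.inl 0)
  rw [keyε0_inl, keyε_inl0] at h
  omega

lemma keyε_injective (k : ℕ) (i i' : Fin (k + 1)) (h : keyε k i = keyε k i') : i = i' := by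
  by_contra hne
  have hh := Finsupp.ext_iff.mp h (Sum.inr i)
  rw [keyε_inr, keyε_inr' k i' i (fun hcon => hne hcon)] at hh
  omega

lemma theta_key (n : RawLaw A B) (hnat : IsNatural n) (hmult : IsMult n)
    (k : ℕ) (b : Fin (k + 2) → B) :
    Theta n (k + 2) b
      + ∑ i : Fin (k + 1), Theta n (k + 1)
          (Function.update (fun j : Fin (k + 1) => b j.succ) i (b 0 * b i.succ))
      = Theta n 1 (fun _ => b 0) * Theta n (k + 1) (fun j => b j.succ) := by
  classical
  have hXmon : ∀ (σ : Type) (x : σ),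
      (X x : MvPolynomial σ A) = monomial (Finsupp.single x 1) 1 := by
    intro σ x
    rw [← X_pow_eq_monomial, pow_one]
  set c₁ : Fin (k + 2) → B := fun j => if j = 0 then b 0 else 0 with hc₁
  set c₂ : Fin (k + 2) → B := fun j => if j = 0 then 0 else b j with hc₂
  set x : MvPolynomial (Fin (k + 2)) A ⊗[A] B :=
    1 + ∑ j : Fin (k + 2), X j ⊗ₜ[A] c₁ j with hxdef
  set y : MvPolynomial (Fin (k + 2)) A ⊗[A] B :=
    1 + ∑ j : Fin (k + 2), X j ⊗ₜ[A] c₂ j with hydef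
  have hx : (∑ j : Fin (k + 2), (X j : MvPolynomial (Fin (k + 2)) A) ⊗ₜ[A] c₁ j)
      = (X 0 : MvPolynomial (Fin (k + 2)) A) ⊗ₜ[A] b 0 := by
    have h1 : ∀ j : Fin (k + 2), (X j : MvPolynomial (Fin (k + 2)) A) ⊗ₜ[A] c₁ j
        = if j = 0 then (X j : MvPolynomial (Fin (k + 2)) A) ⊗ₜ[A] b 0 else 0 := by
      intro j
      by_cases hj : j = 0 <;> simp [hc₁, hj]
    rw [Finset.sum_congr rfl fun j _ => h1 j, Finset.sum_ite_eq' Finset.univ (0 : Fin (k + 2))]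
    simp
  have hy : (∑ j : Fin (k + 2), (X j : MvPolynomial (Fin (k + 2)) A) ⊗ₜ[A] c₂ j)
      = ∑ i : Fin (k + 1), (X i.succ : MvPolynomial (Fin (k + 2)) A) ⊗ₜ[A] b i.succ := by
    rw [Fin.sum_univ_succ]
    have h0 : (X (0 : Fin (k + 2)) : MvPolynomial (Fin (k + 2)) A) ⊗ₜ[A] c₂ 0 = 0 := by
      simp [hc₂]
    rw [h0, zero_add]
    exact Finset.sum_congr rfl fun i _ => by
      rw [show c₂ i.succ = b i.succ by simp [hc₂, Fin.succ_ne_zero]]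
  have hprod : x * y = 1 + (∑ j : Fin (k + 2), (X j : MvPolynomial (Fin (k + 2)) A) ⊗ₜ[A] b j
      + ∑ i : Fin (k + 1),
          ((X 0 * X i.succ : MvPolynomial (Fin (k + 2)) A)) ⊗ₜ[A] (b 0 * b i.succ)) := by
    rw [hxdef, hydef, hx, hy]
    have hring : ∀ u v : MvPolynomial (Fin (k + 2)) A ⊗[A] B,
        (1 + u) * (1 + v) = 1 + (u + v + u * v) := by
      intro u v
      ring
    rw [hring]
    congr 1
    have huv : (X (0 : Fin (k + 2)) : MvPolynomial (Fin (k + 2)) A) ⊗ₜ[A] b 0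
        * ∑ i : Fin (k + 1), (X i.succ : MvPolynomial (Fin (k + 2)) A) ⊗ₜ[A] b i.succ
        = ∑ i : Fin (k + 1),
            ((X 0 * X i.succ : MvPolynomial (Fin (k + 2)) A)) ⊗ₜ[A] (b 0 * b i.succ) := by
      rw [Finset.mul_sum]
      exact Finset.sum_congr rfl fun i _ => Algebra.TensorProduct.tmul_mul_tmul _ _ _ _
    rw [huv, ← Fin.sum_univ_succ (f := fun j => (X j : MvPolynomial (Fin (k + 2)) A) ⊗ₜ[A] b j)]
  set C₃ : (Fin (k + 2) ⊕ Fin (k + 1)) → B :=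
    Sum.elim b (fun i => b 0 * b i.succ) with hC₃
  set P' : MvPolynomial (Fin (k + 2) ⊕ Fin (k + 1)) A :=
    n (MvPolynomial (Fin (k + 2) ⊕ Fin (k + 1)) A)
      (1 + ∑ j' : Fin (k + 2) ⊕ Fin (k + 1), X j' ⊗ₜ[A] C₃ j') with hP'
  have himg : aeval (fun j' => (monomial (keyM k j') (1 : A) : MvPolynomial (Fin (k + 2)) A)) P'
      = n (MvPolynomial (Fin (k + 2)) A) (x * y) := by
    have h1 := nat_apply_one_add n hnat
      (aeval (fun j' => (monomial (keyM k j') (1 : A) : MvPolynomial (Fin (k + 2)) A)))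
      (fun j' : Fin (k + 2) ⊕ Fin (k + 1) =>
        (X j' : MvPolynomial (Fin (k + 2) ⊕ Fin (k + 1)) A)) C₃
    simp only [aeval_X] at h1
    rw [← hP'] at h1
    rw [h1, hprod]
    congr 1
    rw [Fintype.sum_sum_type]
    have ha : ∀ j : Fin (k + 2),
        (monomial (keyM k (Sum.inl j)) (1 : A) : MvPolynomial (Fin (k + 2)) A)
            ⊗ₜ[A] C₃ (Sum.inl j)
          = (X j : MvPolynomial (Fin (k + 2)) A) ⊗ₜ[A] b j := by
      intro j
      rw [hC₃, keyM]
      simp only [Sum.elim_inl]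
      rw [← hXmon _ j]
    have hb : ∀ i : Fin (k + 1),
        (monomial (keyM k (Sum.inr i)) (1 : A) : MvPolynomial (Fin (k + 2)) A)
            ⊗ₜ[A] C₃ (Sum.inr i)
          = ((X 0 * X i.succ : MvPolynomial (Fin (k + 2)) A)) ⊗ₜ[A] (b 0 * b i.succ) := by
      intro i
      rw [hC₃, keyM]
      simp only [Sum.elim_inr]
      rw [hXmon _ (0 : Fin (k + 2)), hXmon _ (i.succ : Fin (k + 2)), monomial_mul,
        one_mul]
    rw [Finset.sum_congr rfl fun j _ => ha j, Finset.sum_congr rfl fun i _ => hb i]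
  -- LHS computation
  have hLHS : MvPolynomial.coeff (ones (Fin (k + 2)))
        (n (MvPolynomial (Fin (k + 2)) A) (x * y))
      = MvPolynomial.coeff (keyε0 k) P'
        + ∑ i : Fin (k + 1), MvPolynomial.coeff (keyε k i) P' := by
    rw [← himg, coeff_aeval_monomial]
    have hterm : ∀ e ∈ P'.support,
        (if (∑ j' : Fin (k + 2) ⊕ Fin (k + 1), e j' • keyM k j') = ones (Fin (k + 2))
          then MvPolynomial.coeff e P' * ∏ j' : Fin (k + 2) ⊕ Fin (k + 1), (1 : A) ^ e j'
          else 0)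
        = (if e = keyε0 k then MvPolynomial.coeff e P' else 0)
          + ∑ i : Fin (k + 1), (if e = keyε k i then MvPolynomial.coeff e P' else 0) := by
      intro e _
      have hp1 : (∏ j' : Fin (k + 2) ⊕ Fin (k + 1), (1 : A) ^ e j') = 1 := by simp
      rw [hp1, mul_one]
      by_cases h0 : e = keyε0 k
      · subst h0
        rw [if_pos (keyWε0 k), if_pos rfl,
          Finset.sum_eq_zero fun i _ => if_neg (keyε0_ne k i), add_zero]
      · by_cases hex : ∃ i0, e = keyε k i0
        · obtain ⟨i0, rfl⟩ := hex
          rw [if_pos (keyWε k i0), if_neg h0, zero_add,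
            Finset.sum_eq_single_of_mem i0 (Finset.mem_univ i0)
              (fun i _ hi => if_neg fun hcon => hi (keyε_injective k i0 i hcon).symm),
            if_pos rfl]
        · push_neg at hex
          rw [if_neg h0, Finset.sum_eq_zero fun i _ => if_neg (hex i), add_zero, if_neg]
          intro hW
          rcases key_char k e hW with h | ⟨i0, h⟩
          · exact h0 h
          · exact hex i0 h
    rw [Finset.sum_congr rfl hterm, Finset.sum_add_distrib]
    congr 1
    · rw [Finset.sum_ite_eq' P'.support (keyε0 k) (fun e => MvPolynomial.coeff e P')]
      split_ifs with h
      · rfl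
      · exact (MvPolynomial.notMem_support_iff.mp h).symm
    · rw [Finset.sum_comm]
      refine Finset.sum_congr rfl fun i _ => ?_
      rw [Finset.sum_ite_eq' P'.support (keyε k i) (fun e => MvPolynomial.coeff e P')]
      split_ifs with h
      · rfl
      · exact (MvPolynomial.notMem_support_iff.mp h).symm
  have hcoeffε0 : MvPolynomial.coeff (keyε0 k) P' = Theta n (k + 2) b := by
    rw [keyε0, hP', coeff_embed n hnat C₃ (k + 2) Sum.inl Sum.inl_injective]
    congr 1
  have hcoeffε : ∀ i0, MvPolynomial.coeff (keyε k i0) P'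
      = Theta n (k + 1) (Function.update (fun j : Fin (k + 1) => b j.succ) i0
          (b 0 * b i0.succ)) := by
    intro i0
    rw [keyε, hP', coeff_embed n hnat C₃ (k + 1) (keyg k i0) (keyg_inj k i0)]
    congr 1
    funext j
    rw [Function.update_apply]
    by_cases hj : j = i0
    · subst hj
      rw [if_pos rfl, Function.comp_apply, keyg_self, hC₃, Sum.elim_inr]
    · rw [if_neg hj, Function.comp_apply, keyg_ne k i0 j hj, hC₃, Sum.elim_inl]
  -- RHS computation
  set u₀ : Fin (k + 2) →₀ ℕ :=
    Finsupp.mapDomain (fun _ : Fin 1 => (0 : Fin (k + 2))) (ones (Fin 1)) with hu₀def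
  set v₀ : Fin (k + 2) →₀ ℕ :=
    Finsupp.mapDomain (Fin.succ : Fin (k + 1) → Fin (k + 2)) (ones (Fin (k + 1))) with hv₀def
  have hu₀ : u₀ = Finsupp.single 0 1 := by
    rw [hu₀def, mapDomain_eq, Fin.sum_univ_one, ones_apply]
  have hv₀0 : v₀ 0 = 0 := by
    rw [hv₀def, Finsupp.mapDomain_notin_range]
    intro hr
    obtain ⟨i, hi⟩ := hr
    exact Fin.succ_ne_zero i hi
  have hv₀s : ∀ x' : Fin (k + 1), v₀ x'.succ = 1 := fun x' => by
    rw [hv₀def, Finsupp.mapDomain_apply (Fin.succ_injective _), ones_apply]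
  have hadd : u₀ + v₀ = ones (Fin (k + 2)) := by
    refine Finsupp.ext fun j => ?_
    rw [Finsupp.add_apply, ones_apply]
    refine Fin.cases ?_ ?_ j
    · rw [hu₀, hv₀0]
      simp
    · intro x'
      rw [hu₀, hv₀s x']
      simp [Finsupp.single_apply, (Fin.succ_ne_zero x').symm]
  set P₀ : MvPolynomial (Fin 1) A :=
    n (MvPolynomial (Fin 1) A) (1 + ∑ i : Fin 1, X i ⊗ₜ[A] (fun _ : Fin 1 => b 0) i) with hP₀
  set P₁ : MvPolynomial (Fin (k + 1)) A :=
    n (MvPolynomial (Fin (k + 1)) A)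
      (1 + ∑ i : Fin (k + 1), X i ⊗ₜ[A] (fun j : Fin (k + 1) => b j.succ) i) with hP₁
  have hnx : n (MvPolynomial (Fin (k + 2)) A) x
      = aeval (fun _ : Fin 1 =>
          (monomial (Finsupp.single (0 : Fin (k + 2)) 1) (1 : A) :
            MvPolynomial (Fin (k + 2)) A)) P₀ := by
    have h1 := nat_apply_one_add n hnat
      (aeval (fun _ : Fin 1 =>
        (monomial (Finsupp.single (0 : Fin (k + 2)) 1) (1 : A) : MvPolynomial (Fin (k + 2)) A)))
      (fun i : Fin 1 => (X i : MvPolynomial (Fin 1) A)) (fun _ : Fin 1 => b 0)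
    simp only [aeval_X] at h1
    rw [← hP₀] at h1
    rw [h1, hxdef, hx, Fin.sum_univ_one, ← hXmon _ (0 : Fin (k + 2))]
  have hny : n (MvPolynomial (Fin (k + 2)) A) y
      = aeval (fun i : Fin (k + 1) =>
          (monomial (Finsupp.single (i.succ : Fin (k + 2)) 1) (1 : A) :
            MvPolynomial (Fin (k + 2)) A)) P₁ := by
    have h1 := nat_apply_one_add n hnat
      (aeval (fun i : Fin (k + 1) =>
        (monomial (Finsupp.single (i.succ : Fin (k + 2)) 1) (1 : A) :
          MvPolynomial (Fin (k + 2)) A)))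
      (fun i : Fin (k + 1) => (X i : MvPolynomial (Fin (k + 1)) A))
      (fun j : Fin (k + 1) => b j.succ)
    simp only [aeval_X] at h1
    rw [← hP₁] at h1
    rw [h1, hydef, hy]
    have h2 : ∀ i : Fin (k + 1),
        (monomial (Finsupp.single (i.succ : Fin (k + 2)) 1) (1 : A) :
          MvPolynomial (Fin (k + 2)) A) ⊗ₜ[A] b i.succ
        = (X i.succ : MvPolynomial (Fin (k + 2)) A) ⊗ₜ[A] b i.succ := by
      intro i
      rw [← hXmon _ (i.succ : Fin (k + 2))]
    rw [Finset.sum_congr rfl fun i _ => h2 i]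
  have hxz : ∀ u : Fin (k + 2) →₀ ℕ, (∀ r, u ≠ Finsupp.single 0 r) →
      MvPolynomial.coeff u (n (MvPolynomial (Fin (k + 2)) A) x) = 0 := by
    intro u hu
    rw [hnx]
    apply coeff_aeval_eq_zero
    intro e _ hcon
    refine hu (e 0) ?_
    rw [← hcon, Fin.sum_univ_one, Finsupp.smul_single, smul_eq_mul, mul_one]
  have hyz : ∀ v : Fin (k + 2) →₀ ℕ, v 0 ≠ 0 →
      MvPolynomial.coeff v (n (MvPolynomial (Fin (k + 2)) A) y) = 0 := by
    intro v hv
    rw [hny]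
    apply coeff_aeval_eq_zero
    intro e _ hcon
    refine hv ?_
    rw [← hcon, Finsupp.finset_sum_apply]
    refine Finset.sum_eq_zero fun i _ => ?_
    rw [Finsupp.smul_apply, Finsupp.single_apply, if_neg (Fin.succ_ne_zero i), smul_zero]
  have hRHS : MvPolynomial.coeff (ones (Fin (k + 2)))
        (n (MvPolynomial (Fin (k + 2)) A) x * n (MvPolynomial (Fin (k + 2)) A) y)
      = MvPolynomial.coeff u₀ (n (MvPolynomial (Fin (k + 2)) A) x)
        * MvPolynomial.coeff v₀ (n (MvPolynomial (Fin (k + 2)) A) y) := by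
    rw [MvPolynomial.coeff_mul]
    refine Finset.sum_eq_single_of_mem (u₀, v₀) (Finset.HasAntidiagonal.mem_antidiagonal.mpr hadd) ?_
    rintro ⟨u, v⟩ hmem hne
    have huv : u + v = ones (Fin (k + 2)) := Finset.HasAntidiagonal.mem_antidiagonal.mp hmem
    by_cases hq : ∃ j : Fin (k + 2), j ≠ 0 ∧ u j ≠ 0
    · obtain ⟨j, hj0, hjne⟩ := hq
      rw [hxz u fun r hr => hjne (by rw [hr, Finsupp.single_apply, if_neg (Ne.symm hj0)]),
        zero_mul]
    · push_neg at hq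
      have hu : u = Finsupp.single 0 (u 0) := by
        refine Finsupp.ext fun j => ?_
        by_cases hj : j = 0
        · subst hj
          rw [Finsupp.single_apply, if_pos rfl]
        · rw [hq j hj, Finsupp.single_apply, if_neg fun h => hj h.symm]
      have h00 : u 0 + v 0 = 1 := by
        have h := Finsupp.ext_iff.mp huv 0
        rw [Finsupp.add_apply] at h
        simpa using h
      rcases Nat.lt_or_ge (u 0) 1 with h1 | h1
      · rw [hyz v (by omega), mul_zero]
      · have hu0 : u 0 = 1 := by omega
        exfalso
        apply hne
        have hueq : u = u₀ := by rw [hu, hu0, hu₀]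
        have hveq : v = v₀ := by
          have h : u₀ + v = u₀ + v₀ := by
            conv_lhs => rw [← hueq]
            rw [huv, ← hadd]
          exact add_left_cancel h
        rw [hueq, hveq]
  have hcu : MvPolynomial.coeff u₀ (n (MvPolynomial (Fin (k + 2)) A) x)
      = Theta n 1 (fun _ => b 0) := by
    rw [hxdef, hu₀def, coeff_embed n hnat c₁ 1 (fun _ : Fin 1 => (0 : Fin (k + 2)))
      (fun a a' _ => Subsingleton.elim a a')]
    congr 1
  have hcv : MvPolynomial.coeff v₀ (n (MvPolynomial (Fin (k + 2)) A) y)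
      = Theta n (k + 1) (fun j => b j.succ) := by
    rw [hydef, hv₀def, coeff_embed n hnat c₂ (k + 1) (Fin.succ : Fin (k + 1) → Fin (k + 2))
      (Fin.succ_injective _)]
    congr 1
  have hmul : n (MvPolynomial (Fin (k + 2)) A) (x * y)
      = n (MvPolynomial (Fin (k + 2)) A) x * n (MvPolynomial (Fin (k + 2)) A) y :=
    (hmult (MvPolynomial (Fin (k + 2)) A)).2 x y
  have hfinal := congrArg (MvPolynomial.coeff (ones (Fin (k + 2)))) hmul
  rw [hLHS, hRHS, hcu, hcv, hcoeffε0] at hfinal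
  rw [Finset.sum_congr rfl fun i _ => hcoeffε i] at hfinal
  exact hfinal

theorem statement5' {A B : Type u} [CommRing A] [CommRing B] [Algebra A B]
    (d : ℕ) (hd : 0 < d) (n : RawLaw A B)
    (hnat : IsNatural n) (hhom : IsHomog d n) (hmult : IsMult n) :
    IsLinearMap A (fun b : B => Theta n 1 (fun _ => b)) ∧
    Theta n 1 (fun _ => (1 : B)) = (d : A) ∧
    (∀ (k : ℕ) (b : Fin (k + 1) → B),
      ThetaRec (fun b' : B => Theta n 1 (fun _ => b')) k b = Theta n (k + 1) b) ∧
    (∀ b : Fin (d + 1) → B, ThetaRec (fun b' : B => Theta n 1 (fun _ => b')) d b = 0) := by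
  have h3 : ∀ (k : ℕ) (b : Fin (k + 1) → B),
      ThetaRec (fun b' : B => Theta n 1 (fun _ => b')) k b = Theta n (k + 1) b := by
    intro k
    induction k with
    | zero =>
        intro b
        show Theta n 1 (fun _ => b 0) = Theta n 1 b
        exact congrArg (Theta n 1) (funext fun i => by rw [Subsingleton.elim i 0])
    | succ k ih =>
        intro b
        show Theta n 1 (fun _ => b 0)
            * ThetaRec (fun b' : B => Theta n 1 (fun _ => b')) k (fun i => b i.succ)
          - ∑ i : Fin (k + 1), ThetaRec (fun b' : B => Theta n 1 (fun _ => b'))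
              k (Function.update (fun j : Fin (k + 1) => b j.succ) i (b 0 * b i.succ))
          = Theta n (k + 2) b
        rw [ih, Finset.sum_congr rfl fun i _ => ih _, ← theta_key n hnat hmult k b]
        ring
  refine ⟨⟨fun b b' => theta_add n hnat b b',
    fun a b => by rw [theta_smul n hnat a b, smul_eq_mul]⟩,
    theta_one n hd hhom hmult, h3, fun b => ?_⟩
  rw [h3 d b, theta_top n hnat hhom b]

end KeyAux

/-- Let `n` be a multiplicative homogeneous polynomial law of degree `d`
and let `θ := Θ_1` be its trace. Then `θ` is `A`-linear, `θ(1) = d·1_A`, the recursively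
defined maps `Θ^θ_k` coincide with the coefficient-defined maps `Θ_k` for all `k ≥ 1`,
and `Θ^θ_{d+1} ≡ 0`; in other words, `θ` is a degree `d` trace. -/
theorem statement5 {A B : Type u} [CommRing A] [CommRing B] [Algebra A B]
    (d : ℕ) (hd : 0 < d) (n : RawLaw A B)
    (hnat : IsNatural n) (hhom : IsHomog d n) (hmult : IsMult n) :
    IsLinearMap A (fun b : B => Theta n 1 (fun _ => b)) ∧
    Theta n 1 (fun _ => (1 : B)) = (d : A) ∧
    (∀ (k : ℕ) (b : Fin (k + 1) → B),
      ThetaRec (fun b' : B => Theta n 1 (fun _ => b')) k b = Theta n (k + 1) b) ∧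
    (∀ b : Fin (d + 1) → B, ThetaRec (fun b' : B => Theta n 1 (fun _ => b')) d b = 0) := by
  have h3 : ∀ (k : ℕ) (b : Fin (k + 1) → B),
      ThetaRec (fun b' : B => Theta n 1 (fun _ => b')) k b = Theta n (k + 1) b := by
    intro k
    induction k with
    | zero =>
        intro b
        show Theta n 1 (fun _ => b 0) = Theta n 1 b
        exact congrArg (Theta n 1) (funext fun i => by rw [Subsingleton.elim i 0])
    | succ k ih =>
        intro b
        show Theta n 1 (fun _ => b 0)
            * ThetaRec (fun b' : B => Theta n 1 (fun _ => b')) k (fun i => b i.succ)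
          - ∑ i : Fin (k + 1), ThetaRec (fun b' : B => Theta n 1 (fun _ => b'))
              k (Function.update (fun j : Fin (k + 1) => b j.succ) i (b 0 * b i.succ))
          = Theta n (k + 2) b
        rw [ih, Finset.sum_congr rfl fun i _ => ih _, ← theta_key n hnat hmult k b]
        ring
  refine ⟨⟨fun b b' => theta_add n hnat b b',
    fun a b => by rw [theta_smul n hnat a b, smul_eq_mul]⟩,
    theta_one n hd hhom hmult, h3, fun b => ?_⟩
  rw [h3 d b, theta_top n hnat hhom b]
end

section
/- Let f_1, …, f_d : B → A be A-algebra homomorphisms, and define a polynomial law n from B to A by n_{A'}(x) := ∏_{i=1}^d (id_{A'} ⊗ f_i)(x) for each commutative A-algebra A' and x ∈ A' ⊗_A B, where id_{A'} ⊗ f_i : A' ⊗_A B → A' ⊗_A A ≅ A'. Then n is a multiplicative homogeneous polynomial law of degree d, and its trace satisfies θ(b) = f_1(b) + ⋯ + f_d(b) for all b ∈ B. -/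
open scoped TensorProduct

universe u

variable {A B : Type u} [CommRing A] [CommRing B] [Algebra A B]

/-- The value at an `A`-algebra `A'` of the product law `n_{A'}(x) := ∏ i, (id_{A'} ⊗ f_i)(x)`,
where `id_{A'} ⊗ f_i : A' ⊗[A] B → A' ⊗[A] A ≅ A'`. -/
noncomputable def prodLawAt {A B : Type u} [CommRing A] [CommRing B] [Algebra A B]
    (d : ℕ) (f : Fin d → (B →ₐ[A] A)) (A' : Type u) [CommRing A'] [Algebra A A']
    (x : A' ⊗[A] B) : A' :=
  ∏ i, TensorProduct.rid A A' (LinearMap.lTensor A' (f i).toLinearMap x)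

/-- The product law `n` attached to `A`-algebra homomorphisms `f_1, …, f_d : B → A`. -/
noncomputable def prodLaw {A B : Type u} [CommRing A] [CommRing B] [Algebra A B]
    (d : ℕ) (f : Fin d → (B →ₐ[A] A)) : RawLaw A B :=
  fun A' i1 i2 => @prodLawAt A B _ _ _ d f A' i1 i2

/-- The single factor `id_{A'} ⊗ f_i`, as an algebra homomorphism. -/
noncomputable def gAlg (f : B →ₐ[A] A) (A' : Type u) [CommRing A'] [Algebra A A'] :
    A' ⊗[A] B →ₐ[A] A' :=
  Algebra.TensorProduct.productMap (AlgHom.id A A') ((Algebra.ofId A A').comp f)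

lemma gAlg_eq (f : B →ₐ[A] A) (A' : Type u) [CommRing A'] [Algebra A A'] (x : A' ⊗[A] B) :
    gAlg f A' x = TensorProduct.rid A A' (LinearMap.lTensor A' f.toLinearMap x) := by
  induction x using TensorProduct.induction_on with
  | zero => simp
  | tmul a b => simp [gAlg, Algebra.ofId_apply, Algebra.smul_def, mul_comm]
  | add x y hx hy => simp [map_add, hx, hy]

lemma prodLaw_eq (d : ℕ) (f : Fin d → (B →ₐ[A] A)) (A' : Type u) [CommRing A'] [Algebra A A']
    (x : A' ⊗[A] B) : prodLaw d f A' x = ∏ i, gAlg (f i) A' x := by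
  simp [prodLaw, prodLawAt, gAlg_eq]

lemma gAlg_natural (g : B →ₐ[A] A) (A' : Type u) [CommRing A'] [Algebra A A']
    (A'' : Type u) [CommRing A''] [Algebra A A''] (φ : A' →ₐ[A] A'') (x : A' ⊗[A] B) :
    φ (gAlg g A' x) = gAlg g A'' (LinearMap.rTensor B φ.toLinearMap x) := by
  induction x using TensorProduct.induction_on with
  | zero => simp
  | tmul a b => simp [gAlg, Algebra.ofId_apply, AlgHom.commutes]
  | add x y hx hy => simp [map_add, hx, hy]

lemma gAlg_smul (g : B →ₐ[A] A) (A' : Type u) [CommRing A'] [Algebra A A'] (a : A')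
    (x : A' ⊗[A] B) : gAlg g A' (a • x) = a * gAlg g A' x := by
  induction x using TensorProduct.induction_on with
  | zero => simp
  | tmul p c => rw [TensorProduct.smul_tmul']; simp [gAlg, smul_eq_mul, mul_assoc]
  | add x y hx hy => rw [smul_add, map_add, map_add, hx, hy, mul_add]

lemma coeff_zero_prod_aux {ι : Type} (s : Finset ι) (c : ι → A) :
    MvPolynomial.constantCoeff (∏ i ∈ s, ((1 : MvPolynomial (Fin 1) A) +
      MvPolynomial.C (c i) * MvPolynomial.X 0)) = 1 := by
  rw [map_prod]
  simp

lemma coeff_one_prod_aux {ι : Type} (s : Finset ι) (c : ι → A) :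
    MvPolynomial.coeff (Finsupp.single (0 : Fin 1) 1)
      (∏ i ∈ s, ((1 : MvPolynomial (Fin 1) A) + MvPolynomial.C (c i) * MvPolynomial.X 0))
      = ∑ i ∈ s, c i := by
  classical
  induction s using Finset.induction_on with
  | empty => simp [MvPolynomial.coeff_one, Finsupp.single_eq_zero, eq_comm]
  | insert i s hni ih =>
    rw [Finset.prod_insert hni, Finset.sum_insert hni]
    rw [add_mul, one_mul, MvPolynomial.coeff_add, ih, mul_assoc, MvPolynomial.coeff_C_mul]
    have h0 : (Finsupp.single (0 : Fin 1) 1) = Finsupp.single (0 : Fin 1) 1 + 0 :=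
      (add_zero _).symm
    rw [h0, MvPolynomial.coeff_X_mul]
    have := coeff_zero_prod_aux (A := A) s c
    rw [show MvPolynomial.coeff (0 : Fin 1 →₀ ℕ) (∏ x ∈ s,
      ((1 : MvPolynomial (Fin 1) A) + MvPolynomial.C (c x) * MvPolynomial.X 0))
      = MvPolynomial.constantCoeff _ from
        (congrFun MvPolynomial.constantCoeff_eq _).symm, this, mul_one, add_comm]

lemma funone_eq : (Finsupp.equivFunOnFinite.symm fun _ : Fin 1 => (1 : ℕ))
    = Finsupp.single (0 : Fin 1) 1 := by
  refine Finsupp.ext fun i => ?_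
  fin_cases i
  simp

/-- Let `f_1, …, f_d : B → A` be `A`-algebra homomorphisms and let
`n := f_1 ⋯ f_d` be the product law. Then `n` is a multiplicative homogeneous polynomial
law of degree `d`, and its trace satisfies `θ(b) = f_1(b) + ⋯ + f_d(b)` for all `b ∈ B`. -/
theorem statement7 {A B : Type u} [CommRing A] [CommRing B] [Algebra A B]
    (d : ℕ) (hd : 0 < d) (f : Fin d → (B →ₐ[A] A)) :
    (IsNatural (prodLaw d f) ∧ IsHomog d (prodLaw d f) ∧ IsMult (prodLaw d f)) ∧
    (∀ b : B, Theta (prodLaw d f) 1 (fun _ => b) = ∑ i, f i b) := by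
  refine ⟨⟨?_, ?_, ?_⟩, ?_⟩
  · intro A' _ _ A'' _ _ φ x
    rw [prodLaw_eq, prodLaw_eq, map_prod]
    exact Finset.prod_congr rfl fun i _ => gAlg_natural (f i) A' A'' φ x
  · intro A' _ _ a x
    simp only [prodLaw_eq, gAlg_smul]
    rw [Finset.prod_mul_distrib, Finset.prod_const, Finset.card_univ, Fintype.card_fin]
  · intro A' _ _
    constructor
    · simp [prodLaw_eq]
    · intro x y
      simp only [prodLaw_eq, map_mul]
      rw [Finset.prod_mul_distrib]
  · intro b
    unfold Theta
    rw [prodLaw_eq]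
    have hx : (1 : MvPolynomial (Fin 1) A ⊗[A] B) + ∑ i, MvPolynomial.X i ⊗ₜ[A] (fun _ => b) i
        = 1 + MvPolynomial.X 0 ⊗ₜ[A] b := by
      simp [Fin.sum_univ_one]
    rw [hx]
    have hg : ∀ j : Fin d, gAlg (f j) (MvPolynomial (Fin 1) A)
        ((1 : MvPolynomial (Fin 1) A ⊗[A] B) + MvPolynomial.X 0 ⊗ₜ[A] b)
        = 1 + MvPolynomial.C (f j b) * MvPolynomial.X 0 := by
      intro j
      rw [map_add, map_one]
      congr 1
      simp [gAlg, Algebra.ofId_apply, MvPolynomial.algebraMap_eq, mul_comm]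
    simp only [hg]
    rw [funone_eq]
    exact coeff_one_prod_aux Finset.univ (fun j => f j b)
end

section
/- Let n be a homogeneous polynomial law of degree d from B to A and let b ∈ B. Consider the characteristic polynomial χ_{n,b}(t) := n_{A[t]}(1 ⊗ b − t ⊗ 1_B) ∈ A[t]. Then χ_{n,b}(t) is a polynomial of degree at most d in t, and for every 0 ≤ k ≤ d its coefficient c_k of t^k satisfies (d−k)!·c_k = (−1)^k·Θ_{d−k}(b, …, b), with the convention Θ_0 := n_A(1_B). -/
open scoped TensorProduct

universe u

variable {A B : Type u} [CommRing A] [CommRing B] [Algebra A B]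

/-- `Θ_j(b, …, b)` with the convention `Θ_0 := n_A(1_B)`. -/
noncomputable def ThetaDiag {A B : Type u} [CommRing A] [CommRing B] [Algebra A B]
    (n : RawLaw A B) : ℕ → B → A
  | 0, _ => n A ((1 : A) ⊗ₜ[A] (1 : B))
  | j + 1, b => Theta n (j + 1) (fun _ => b)

namespace Stmt9
open Polynomial

variable {A : Type u} [CommRing A]

noncomputable def sig : Polynomial (Polynomial A) →ₐ[A] Polynomial (Polynomial A) :=
  aevalTower (aeval (-(X * C X))) X

noncomputable def tau : Polynomial (Polynomial A) →ₐ[A] Polynomial (Polynomial A) :=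
  aevalTower (aeval (X : Polynomial (Polynomial A))) (X * C X)

lemma sig_monomial (n m : ℕ) (a : A) :
    sig (monomial n (monomial m a)) = monomial (n + m) (monomial m ((-1) ^ m * a)) := by
  simp only [← C_mul_X_pow_eq_monomial]
  simp only [sig, map_mul, map_pow, aevalTower_C, aevalTower_X, aeval_C, aeval_X,
    Polynomial.algebraMap_apply, Algebra.algebraMap_self, RingHom.id_apply, map_neg, map_one]
  ring

lemma tau_monomial (n m : ℕ) (a : A) :
    tau (monomial n (monomial m a)) = monomial (n + m) (monomial n a) := by
  simp only [← C_mul_X_pow_eq_monomial]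
  simp only [tau, map_mul, map_pow, aevalTower_C, aevalTower_X, aeval_C, aeval_X,
    Polynomial.algebraMap_apply, Algebra.algebraMap_self, RingHom.id_apply, map_neg, map_one]
  ring

lemma coeff_sig (d k : ℕ) (p : Polynomial (Polynomial A)) :
    ((sig p).coeff d).coeff k =
      if k ≤ d then (-1 : A) ^ k * ((p.coeff (d - k)).coeff k) else 0 := by
  induction p using Polynomial.induction_on' with
  | add p q hp hq =>
      simp only [map_add, coeff_add, hp, hq]
      split_ifs <;> ring
  | monomial np q =>
      induction q using Polynomial.induction_on' with
      | add q r hq hr =>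
          rw [map_add]
          simp only [map_add, coeff_add, hq, hr]
          split_ifs <;> ring
      | monomial m a =>
          rw [sig_monomial]
          rw [coeff_monomial, apply_ite (fun r : Polynomial A => r.coeff k), coeff_monomial,
            coeff_zero, coeff_monomial, apply_ite (fun r : Polynomial A => r.coeff k),
            coeff_monomial, coeff_zero]
          split_ifs <;> subst_vars
          all_goals first
          | ring1
          | (exfalso; omega)

lemma coeff_tau (d k : ℕ) (p : Polynomial (Polynomial A)) :
    ((tau p).coeff d).coeff k =
      if k ≤ d then ((p.coeff k).coeff (d - k)) else 0 := by
  induction p using Polynomial.induction_on' with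
  | add p q hp hq =>
      simp only [map_add, coeff_add, hp, hq]
      split_ifs <;> ring
  | monomial np q =>
      induction q using Polynomial.induction_on' with
      | add q r hq hr =>
          rw [map_add]
          simp only [map_add, coeff_add, hq, hr]
          split_ifs <;> ring
      | monomial m a =>
          rw [tau_monomial]
          rw [coeff_monomial, apply_ite (fun r : Polynomial A => r.coeff k), coeff_monomial,
            coeff_zero, coeff_monomial, apply_ite (fun r : Polynomial A => r.coeff (d - k)),
            coeff_monomial, coeff_zero]
          split_ifs <;> subst_vars
          all_goals first
          | ring1
          | (exfalso; omega)

lemma coeff_ones_sum_X_pow (j m : ℕ) :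
    MvPolynomial.coeff (Finsupp.equivFunOnFinite.symm fun _ => 1)
      ((∑ i : Fin j, MvPolynomial.X i : MvPolynomial (Fin j) A) ^ m) =
      if m = j then (j.factorial : A) else 0 := by
  by_cases h : m = j
  · subst h
    rw [Finset.sum_pow_eq_sum_piAntidiag, MvPolynomial.coeff_sum]
    have key : ∀ k ∈ Finset.piAntidiag (Finset.univ : Finset (Fin m)) m,
        MvPolynomial.coeff (Finsupp.equivFunOnFinite.symm fun _ => 1)
          ((Nat.multinomial Finset.univ k : MvPolynomial (Fin m) A) *
            ∏ i : Fin m, MvPolynomial.X i ^ k i) =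
        if k = (fun _ => 1) then (Nat.multinomial Finset.univ k : A) else 0 := by
      intro k _
      have hm : ∏ i : Fin m, (MvPolynomial.X i : MvPolynomial (Fin m) A) ^ k i =
          MvPolynomial.monomial (Finsupp.equivFunOnFinite.symm k) 1 := by
        rw [← MvPolynomial.prod_X_pow_eq_monomial]
        refine (Finset.prod_subset (Finset.subset_univ _) ?_).symm
        intro x _ hx
        have : (Finsupp.equivFunOnFinite.symm k) x = 0 := by
          simpa using Finsupp.notMem_support_iff.mp hx
        simp only [Finsupp.equivFunOnFinite_symm_apply_apply] at this ⊢
        simp [this]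
      rw [hm]
      rw [show ((Nat.multinomial Finset.univ k : MvPolynomial (Fin m) A)) =
          MvPolynomial.C ((Nat.multinomial Finset.univ k : A)) by simp]
      rw [MvPolynomial.coeff_C_mul, MvPolynomial.coeff_monomial]
      have : (Finsupp.equivFunOnFinite.symm k = Finsupp.equivFunOnFinite.symm fun _ => (1:ℕ))
          ↔ k = fun _ => 1 := EmbeddingLike.apply_eq_iff_eq _
      split_ifs with h1 h2 h2 <;> simp_all
    rw [Finset.sum_congr rfl key, Finset.sum_ite_eq' _ (fun _ => 1)]
    have hmem : (fun _ => 1) ∈ Finset.piAntidiag (Finset.univ : Finset (Fin m)) m := by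
      simp [Finset.mem_piAntidiag]
    rw [if_pos hmem]
    have : Nat.multinomial (Finset.univ : Finset (Fin m)) (fun _ => 1) = m.factorial := by
      have h1 := Nat.multinomial_spec (Finset.univ : Finset (Fin m)) (fun _ => 1)
      simpa using h1
    rw [this]
    simp
  · rw [if_neg h]
    have hhom : ((∑ i : Fin j, MvPolynomial.X i : MvPolynomial (Fin j) A) ^ m).IsHomogeneous m := by
      have h1 : (∑ i : Fin j, MvPolynomial.X i : MvPolynomial (Fin j) A).IsHomogeneous 1 :=
        MvPolynomial.IsHomogeneous.sum _ _ _ fun i _ => MvPolynomial.isHomogeneous_X _ _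
      simpa using h1.pow m
    refine hhom.coeff_eq_zero ?_
    have : (Finsupp.equivFunOnFinite.symm fun _ => (1:ℕ) : Fin j →₀ ℕ).degree = j := by
      rw [Finsupp.degree_apply]
      rw [Finset.sum_subset (Finset.subset_univ _)
        (fun x _ hx => Finsupp.notMem_support_iff.mp hx)]
      simp
    rw [this]
    exact fun hc => h hc.symm

lemma coeff_ones_aeval_sum (j : ℕ) (p : Polynomial A) :
    MvPolynomial.coeff (Finsupp.equivFunOnFinite.symm fun _ => 1)
      (Polynomial.aeval (∑ i : Fin j, MvPolynomial.X i) p) = (j.factorial : A) * p.coeff j := by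
  induction p using Polynomial.induction_on' with
  | add p q hp hq => simp [map_add, MvPolynomial.coeff_add, hp, hq, mul_add]
  | monomial m a =>
      rw [Polynomial.aeval_monomial]
      rw [show (algebraMap A (MvPolynomial (Fin j) A)) a = MvPolynomial.C a from rfl]
      rw [MvPolynomial.coeff_C_mul, coeff_ones_sum_X_pow, coeff_monomial]
      split_ifs <;> ring

end Stmt9


/-- Let `n` be a homogeneous polynomial law of degree `d` from `B` to `A`
and `b ∈ B`. The characteristic polynomial `χ_{n,b}(t) := n_{A[t]}(1 ⊗ b − t ⊗ 1)` has
degree at most `d`, and for every `0 ≤ k ≤ d` its coefficient `c_k` of `t^k` satisfies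
`(d−k)!·c_k = (−1)^k·Θ_{d−k}(b, …, b)`, with the convention `Θ_0 := n_A(1_B)`. -/
theorem statement9 {A B : Type u} [CommRing A] [CommRing B] [Algebra A B]
    (d : ℕ) (hd : 0 < d) (n : RawLaw A B) (hnat : IsNatural n) (hhom : IsHomog d n)
    (b : B) :
    (n (Polynomial A)
        ((1 : Polynomial A) ⊗ₜ[A] b - Polynomial.X ⊗ₜ[A] (1 : B))).degree ≤ (d : ℕ) ∧
    ∀ k : ℕ, k ≤ d →
      ((d - k).factorial : A) *
          (n (Polynomial A)
            ((1 : Polynomial A) ⊗ₜ[A] b - Polynomial.X ⊗ₜ[A] (1 : B))).coeff k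
        = (-1 : A) ^ k * ThetaDiag n (d - k) b := by
  classical
  set χ : Polynomial A :=
    n (Polynomial A) ((1 : Polynomial A) ⊗ₜ[A] b - Polynomial.X ⊗ₜ[A] (1 : B)) with hχ
  set f : Polynomial A :=
    n (Polynomial A) (Polynomial.X ⊗ₜ[A] b + (1 : Polynomial A) ⊗ₜ[A] (1 : B)) with hf
  set g : Polynomial (Polynomial A) :=
    n (Polynomial (Polynomial A))
      (Polynomial.X ⊗ₜ[A] b + Polynomial.C Polynomial.X ⊗ₜ[A] (1 : B)) with hg
  set ι : Polynomial A →ₐ[A] Polynomial (Polynomial A) :=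
    IsScalarTower.toAlgHom A (Polynomial A) (Polynomial (Polynomial A)) with hιdef
  have hι : ∀ p : Polynomial A, ι p = Polynomial.C p := by
    intro p
    rw [hιdef, IsScalarTower.coe_toAlgHom', Polynomial.algebraMap_eq]
  -- Identity I1 : sig g = X ^ d * C χ
  have I1 : Stmt9.sig g = Polynomial.X ^ d * Polynomial.C χ := by
    have h1 := hnat _ _ (Stmt9.sig (A := A))
      (Polynomial.X ⊗ₜ[A] b + Polynomial.C Polynomial.X ⊗ₜ[A] (1 : B))
    have e1 : LinearMap.rTensor B (Stmt9.sig (A := A)).toLinearMap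
        (Polynomial.X ⊗ₜ[A] b + Polynomial.C Polynomial.X ⊗ₜ[A] (1 : B))
        = (Polynomial.X : Polynomial (Polynomial A)) • ((1 : Polynomial (Polynomial A)) ⊗ₜ[A] b
            - Polynomial.C Polynomial.X ⊗ₜ[A] (1 : B)) := by
      simp [Stmt9.sig, LinearMap.rTensor_tmul, smul_sub, TensorProduct.smul_tmul',
        smul_eq_mul, sub_eq_add_neg, TensorProduct.neg_tmul, mul_one]
    have h2 := hnat _ _ ι ((1 : Polynomial A) ⊗ₜ[A] b - Polynomial.X ⊗ₜ[A] (1 : B))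
    have e2 : LinearMap.rTensor B ι.toLinearMap
        ((1 : Polynomial A) ⊗ₜ[A] b - Polynomial.X ⊗ₜ[A] (1 : B))
        = (1 : Polynomial (Polynomial A)) ⊗ₜ[A] b
            - Polynomial.C Polynomial.X ⊗ₜ[A] (1 : B) := by
      simp [hι, map_sub, LinearMap.rTensor_tmul]
    rw [e1] at h1
    rw [e2] at h2
    rw [h1, hhom (Polynomial (Polynomial A)) Polynomial.X _, ← h2, hι]
  -- Identity I2 : tau g = X ^ d * C f
  have I2 : Stmt9.tau g = Polynomial.X ^ d * Polynomial.C f := by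
    have h1 := hnat _ _ (Stmt9.tau (A := A))
      (Polynomial.X ⊗ₜ[A] b + Polynomial.C Polynomial.X ⊗ₜ[A] (1 : B))
    have e1 : LinearMap.rTensor B (Stmt9.tau (A := A)).toLinearMap
        (Polynomial.X ⊗ₜ[A] b + Polynomial.C Polynomial.X ⊗ₜ[A] (1 : B))
        = (Polynomial.X : Polynomial (Polynomial A)) • (Polynomial.C Polynomial.X ⊗ₜ[A] b
            + (1 : Polynomial (Polynomial A)) ⊗ₜ[A] (1 : B)) := by
      simp [Stmt9.tau, LinearMap.rTensor_tmul, smul_add, TensorProduct.smul_tmul',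
        smul_eq_mul, mul_one]
    have h2 := hnat _ _ ι (Polynomial.X ⊗ₜ[A] b + (1 : Polynomial A) ⊗ₜ[A] (1 : B))
    have e2 : LinearMap.rTensor B ι.toLinearMap
        (Polynomial.X ⊗ₜ[A] b + (1 : Polynomial A) ⊗ₜ[A] (1 : B))
        = Polynomial.C Polynomial.X ⊗ₜ[A] b
            + (1 : Polynomial (Polynomial A)) ⊗ₜ[A] (1 : B) := by
      simp [hι, map_add, LinearMap.rTensor_tmul]
    rw [e1] at h1
    rw [e2] at h2
    rw [h1, hhom (Polynomial (Polynomial A)) Polynomial.X _, ← h2, hι]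
  -- coefficients of χ
  have hchi : ∀ k : ℕ,
      χ.coeff k = if k ≤ d then (-1 : A) ^ k * ((g.coeff (d - k)).coeff k) else 0 := by
    intro k
    have h := Stmt9.coeff_sig d k g
    rw [I1, mul_comm, Polynomial.coeff_mul_X_pow', if_pos le_rfl, Nat.sub_self,
      Polynomial.coeff_C_zero] at h
    exact h
  -- coefficients of f
  have hfc : ∀ m : ℕ,
      f.coeff m = if m ≤ d then ((g.coeff m).coeff (d - m)) else 0 := by
    intro m
    have h := Stmt9.coeff_tau d m g
    rw [I2, mul_comm, Polynomial.coeff_mul_X_pow', if_pos le_rfl, Nat.sub_self,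
      Polynomial.coeff_C_zero] at h
    exact h
  -- ThetaDiag in terms of f
  have hT : ∀ j : ℕ, ThetaDiag n j b = (j.factorial : A) * f.coeff j := by
    intro j
    cases j with
    | zero =>
        have h := hnat _ _ (Polynomial.aeval (0 : A) : Polynomial A →ₐ[A] A)
          (Polynomial.X ⊗ₜ[A] b + (1 : Polynomial A) ⊗ₜ[A] (1 : B))
        have e : LinearMap.rTensor B
            (Polynomial.aeval (0 : A) : Polynomial A →ₐ[A] A).toLinearMap
            (Polynomial.X ⊗ₜ[A] b + (1 : Polynomial A) ⊗ₜ[A] (1 : B))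
            = (1 : A) ⊗ₜ[A] (1 : B) := by
          simp [LinearMap.rTensor_tmul, TensorProduct.zero_tmul]
        rw [e] at h
        have : f.coeff 0 = n A ((1 : A) ⊗ₜ[A] (1 : B)) := by
          rw [Polynomial.coeff_zero_eq_eval_zero, ← h]
          simp [Polynomial.aeval_def, Polynomial.eval, hf]
        simp [ThetaDiag, this]
    | succ m =>
        have h := hnat _ _ (Polynomial.aeval (∑ i : Fin (m + 1), MvPolynomial.X i) :
            Polynomial A →ₐ[A] MvPolynomial (Fin (m + 1)) A)
          (Polynomial.X ⊗ₜ[A] b + (1 : Polynomial A) ⊗ₜ[A] (1 : B))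
        have e : LinearMap.rTensor B
            (Polynomial.aeval (∑ i : Fin (m + 1), MvPolynomial.X i) :
              Polynomial A →ₐ[A] MvPolynomial (Fin (m + 1)) A).toLinearMap
            (Polynomial.X ⊗ₜ[A] b + (1 : Polynomial A) ⊗ₜ[A] (1 : B))
            = (1 : MvPolynomial (Fin (m + 1)) A ⊗[A] B)
                + ∑ i : Fin (m + 1), MvPolynomial.X i ⊗ₜ[A] b := by
          rw [map_add, LinearMap.rTensor_tmul, LinearMap.rTensor_tmul]
          simp only [AlgHom.toLinearMap_apply, Polynomial.aeval_X, map_one]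
          rw [TensorProduct.sum_tmul, Algebra.TensorProduct.one_def]
          exact add_comm _ _
        rw [e] at h
        show Theta n (m + 1) (fun _ => b) = _
        rw [Theta, ← h, Stmt9.coeff_ones_aeval_sum]
  constructor
  · rw [Polynomial.degree_le_iff_coeff_zero]
    intro m hm
    have hm' : ¬ m ≤ d := by
      intro hle
      exact absurd hm (by simp [Nat.cast_le.mpr hle, not_lt]; exact_mod_cast hle)
    rw [hchi m, if_neg hm']
  · intro k hk
    rw [hchi k, if_pos hk, hT (d - k), hfc (d - k), if_pos (Nat.sub_le d k),
      Nat.sub_sub_self hk]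
    ring
end

section
/- For every l ≥ 0 and all elements b_1, …, b_{l+1} ∈ m = ker Q, one has Θ^θ_{l+1}(b_1, …, b_{l+1}) = (−1)^l · l! · ε · θ''(b_1·b_2 ⋯ b_{l+1}) in k[ε]/(ε²). -/
universe u

/-- Let `k` be a field, `B` a commutative `k`-algebra, `Q : B → k` a
`k`-algebra homomorphism with kernel `m`, `θ'' : B → k` a `k`-linear map with `θ''(1) = 0`,
and `θ : B → k[ε]/(ε²)` given by `θ(b) := d·Q(b) + ε·θ''(b)`. Then for every `l ≥ 0` and
all `b_1, …, b_{l+1} ∈ m` one has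
`Θ^θ_{l+1}(b_1, …, b_{l+1}) = (−1)^l · l! · ε · θ''(b_1 ⋯ b_{l+1})`. -/
theorem statement10 {K B : Type u} [Field K] [CommRing B] [Algebra K B]
    (d : ℕ) (hd : 0 < d) (Q : B →ₐ[K] K) (θ'' : B →ₗ[K] K) (hθ'' : θ'' 1 = 0)
    (θ : B → DualNumber K)
    (hθ : θ = fun b => algebraMap K (DualNumber K) ((d : K) * Q b)
        + DualNumber.eps * algebraMap K (DualNumber K) (θ'' b))
    (l : ℕ) (b : Fin (l + 1) → B) (hb : ∀ i, b i ∈ RingHom.ker Q.toRingHom) :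
    ThetaRec θ l b
      = (-1 : DualNumber K) ^ l * (l.factorial : DualNumber K) * DualNumber.eps *
          algebraMap K (DualNumber K) (θ'' (∏ i, b i)) := by
  have hker : ∀ x, x ∈ RingHom.ker Q.toRingHom → θ x
      = DualNumber.eps * algebraMap K (DualNumber K) (θ'' x) := by
    intro x hx
    have hx' : Q x = 0 := hx
    simp [hθ, hx']
  induction l with
  | zero =>
    rw [ThetaRec, hker (b 0) (hb 0)]
    simp [Fin.prod_univ_one]
  | succ l ih =>
    have h0 := hker (b 0) (hb 0)
    rw [ThetaRec, h0]
    have hb' : ∀ i : Fin (l + 1), (fun i => b i.succ) i ∈ RingHom.ker Q.toRingHom :=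
      fun i => hb i.succ
    rw [ih (fun i => b i.succ) hb']
    have heps : (DualNumber.eps : DualNumber K) * DualNumber.eps = 0 :=
      DualNumber.eps_mul_eps
    have hfirst : DualNumber.eps * algebraMap K (DualNumber K) (θ'' (b 0)) *
        ((-1 : DualNumber K) ^ l * (l.factorial : DualNumber K) * DualNumber.eps *
          algebraMap K (DualNumber K) (θ'' (∏ i : Fin (l+1), b i.succ))) = 0 := by
      have : DualNumber.eps * algebraMap K (DualNumber K) (θ'' (b 0)) *
        ((-1 : DualNumber K) ^ l * (l.factorial : DualNumber K) * DualNumber.eps *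
          algebraMap K (DualNumber K) (θ'' (∏ i : Fin (l+1), b i.succ)))
        = (DualNumber.eps * DualNumber.eps) * (algebraMap K (DualNumber K) (θ'' (b 0)) *
          ((-1 : DualNumber K) ^ l * (l.factorial : DualNumber K) *
          algebraMap K (DualNumber K) (θ'' (∏ i : Fin (l+1), b i.succ)))) := by ring
      rw [this, heps, zero_mul]
    rw [hfirst]
    have hsum : ∀ i : Fin (l + 1),
        ThetaRec θ l (Function.update (fun j : Fin (l + 1) => b j.succ) i (b 0 * b i.succ))
        = (-1 : DualNumber K) ^ l * (l.factorial : DualNumber K) * DualNumber.eps *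
            algebraMap K (DualNumber K) (θ'' (∏ i, b i)) := by
      intro i
      have hmem : ∀ j : Fin (l + 1),
          Function.update (fun j : Fin (l + 1) => b j.succ) i (b 0 * b i.succ) j
            ∈ RingHom.ker Q.toRingHom := by
        intro j
        rcases eq_or_ne j i with rfl | hji
        · rw [Function.update_self]
          exact Ideal.mul_mem_right _ _ (hb 0)
        · rw [Function.update_of_ne hji]
          exact hb j.succ
      rw [ih _ hmem]
      have hprod : (∏ j, Function.update (fun j : Fin (l + 1) => b j.succ) i
          (b 0 * b i.succ) j) = ∏ j, b j := by
        rw [Finset.prod_update_of_mem (Finset.mem_univ i), mul_assoc,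
          ← Finset.prod_eq_mul_prod_sdiff_singleton_of_mem (Finset.mem_univ i)
            (fun j : Fin (l + 1) => b j.succ)]
        simp [Fin.prod_univ_succ]
      rw [hprod]
    rw [Finset.sum_congr rfl (fun i _ => hsum i), Finset.sum_const, Finset.card_univ,
      Fintype.card_fin]
    rw [Fin.prod_univ_succ] at *
    rw [Nat.factorial_succ]
    push_cast
    ring
end

section
/- Assume the characteristic of k is either 0 or a prime p with p > d. Then Θ^θ_{d+1}(b_1, …, b_{d+1}) = 0 for all b_1, …, b_{d+1} ∈ B if and only if θ''(x) = 0 for every x ∈ m^{d+1}. (This identifies the dual of the tangent space at the cycle [dQ] of the d-th symmetric power of Spec B with m/m^{d+1}.) -/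
universe u

set_option linter.unusedSectionVars false

section ML
variable {K A B : Type u} [CommSemiring K] [CommRing A] [CommRing B] [Algebra K A] [Algebra K B]

lemma tail_update_zero {n : ℕ} (b : Fin (n + 2) → B) (z : B) :
    (fun j : Fin (n + 1) => (Function.update b 0 z) j.succ) = fun j => b j.succ := by
  funext j; simp [Function.update_of_ne (Fin.succ_ne_zero j)]

lemma tail_update_succ {n : ℕ} (b : Fin (n + 2) → B) (j : Fin (n + 1)) (z : B) :
    (fun j' : Fin (n + 1) => (Function.update b j.succ z) j'.succ)
      = Function.update (fun j' : Fin (n + 1) => b j'.succ) j z := by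
  funext i
  rcases eq_or_ne i j with rfl | h
  · simp
  · simp [Function.update_of_ne h, Function.update_of_ne (fun hc => h (Fin.succ_injective _ hc))]

lemma sum_split_key (θ : B → A) {n : ℕ} (b : Fin (n + 2) → B) (j : Fin (n + 1)) (z : B) :
    (∑ i : Fin (n + 1), ThetaRec θ n (Function.update (Function.update (fun j' : Fin (n+1) => b j'.succ) j z) i (b 0 * (if i = j then z else b i.succ))))
      = ThetaRec θ n (Function.update (fun j' : Fin (n+1) => b j'.succ) j (b 0 * z))
        + ∑ i ∈ Finset.univ.erase j, ThetaRec θ n (Function.update (Function.update (fun j' : Fin (n+1) => b j'.succ) i (b 0 * b i.succ)) j z) := by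
  rw [← Finset.add_sum_erase _ _ (Finset.mem_univ j)]
  congr 1
  · rw [if_pos rfl, Function.update_idem]
  · refine Finset.sum_congr rfl fun i hi => ?_
    have h : i ≠ j := Finset.ne_of_mem_erase hi
    rw [if_neg h, Function.update_comm (Ne.symm h)]

lemma ThetaRec_update_add (θ : B → A) (h1 : ∀ x y, θ (x + y) = θ x + θ y) :
    ∀ (n : ℕ) (b : Fin (n + 1) → B) (i : Fin (n + 1)) (x y : B),
      ThetaRec θ n (Function.update b i (x + y))
        = ThetaRec θ n (Function.update b i x) + ThetaRec θ n (Function.update b i y) := by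
  intro n
  induction n with
  | zero =>
    intro b i x y
    have : i = 0 := Fin.eq_zero i
    subst this
    simp [ThetaRec, h1]
  | succ n IH =>
    intro b i x y
    induction i using Fin.cases with
    | zero =>
      simp only [ThetaRec, tail_update_zero, Function.update_self,
        Function.update_of_ne (Fin.succ_ne_zero _)]
      have : ∀ z : B, ∀ i : Fin (n+1),
          Function.update (fun j : Fin (n+1) => b j.succ) i ((x + y) * b i.succ)
            = Function.update (fun j : Fin (n+1) => b j.succ) i (x * b i.succ + y * b i.succ) := by
        intro z i; rw [add_mul]
      calc θ (x + y) * ThetaRec θ n (fun j : Fin (n+1) => b j.succ)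
            - ∑ i : Fin (n + 1), ThetaRec θ n (Function.update (fun j : Fin (n+1) => b j.succ) i ((x + y) * b i.succ))
          = (θ x + θ y) * ThetaRec θ n (fun j : Fin (n+1) => b j.succ)
            - ∑ i : Fin (n + 1), (ThetaRec θ n (Function.update (fun j : Fin (n+1) => b j.succ) i (x * b i.succ))
               + ThetaRec θ n (Function.update (fun j : Fin (n+1) => b j.succ) i (y * b i.succ))) := by
            rw [h1]
            congr 1
            refine Finset.sum_congr rfl fun i _ => ?_
            rw [this x i, IH]
        _ = _ := by rw [Finset.sum_add_distrib]; ring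
    | succ j =>
      have hb0 : ∀ z : B, (Function.update b j.succ z) 0 = b 0 :=
        fun z => Function.update_of_ne (Fin.succ_ne_zero j).symm _ _
      have happ : ∀ z : B, ∀ i : Fin (n+1),
          (Function.update b j.succ z) i.succ = (if i = j then z else b i.succ) := by
        intro z i
        rcases eq_or_ne i j with rfl | h
        · simp
        · rw [if_neg h, Function.update_of_ne (fun hc => h (Fin.succ_injective _ hc))]
      simp only [ThetaRec, tail_update_succ]
      simp only [hb0, happ]
      rw [sum_split_key, sum_split_key, sum_split_key]
      have e1 : b 0 * (x + y) = b 0 * x + b 0 * y := by ring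
      rw [e1, IH, IH, Finset.sum_congr rfl (fun i hi => IH (Function.update (fun j' : Fin (n+1) => b j'.succ) i (b 0 * b i.succ)) j x y), Finset.sum_add_distrib]
      ring
lemma ThetaRec_update_smul (θ : B → A) (h2 : ∀ (c : K) (x : B), θ (c • x) = c • θ x) :
    ∀ (n : ℕ) (b : Fin (n + 1) → B) (i : Fin (n + 1)) (c : K) (x : B),
      ThetaRec θ n (Function.update b i (c • x))
        = c • ThetaRec θ n (Function.update b i x) := by
  intro n
  induction n with
  | zero =>
    intro b i c x
    have : i = 0 := Fin.eq_zero i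
    subst this
    simp [ThetaRec, h2]
  | succ n IH =>
    intro b i c x
    induction i using Fin.cases with
    | zero =>
      simp only [ThetaRec, tail_update_zero, Function.update_self,
        Function.update_of_ne (Fin.succ_ne_zero _)]
      have hmul : ∀ i : Fin (n+1),
          Function.update (fun j : Fin (n+1) => b j.succ) i ((c • x) * b i.succ)
            = Function.update (fun j : Fin (n+1) => b j.succ) i (c • (x * b i.succ)) := by
        intro i; rw [smul_mul_assoc]
      rw [h2, Finset.sum_congr rfl (fun i _ => by rw [hmul i, IH])]
      rw [← Finset.smul_sum, smul_mul_assoc, ← smul_sub]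
    | succ j =>
      have hb0 : ∀ z : B, (Function.update b j.succ z) 0 = b 0 :=
        fun z => Function.update_of_ne (Fin.succ_ne_zero j).symm _ _
      have happ : ∀ z : B, ∀ i : Fin (n+1),
          (Function.update b j.succ z) i.succ = (if i = j then z else b i.succ) := by
        intro z i
        rcases eq_or_ne i j with rfl | h
        · simp
        · rw [if_neg h, Function.update_of_ne (fun hc => h (Fin.succ_injective _ hc))]
      simp only [ThetaRec, tail_update_succ]
      simp only [hb0, happ]
      rw [sum_split_key, sum_split_key]
      have e1 : b 0 * (c • x) = c • (b 0 * x) := by rw [mul_smul_comm]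
      rw [e1, IH, IH, Finset.sum_congr rfl
        (fun i hi => IH (Function.update (fun j' : Fin (n+1) => b j'.succ) i (b 0 * b i.succ)) j c x),
        ← Finset.smul_sum, mul_smul_comm, ← smul_add, ← smul_sub]

noncomputable def ThetaML (θ : B → A) (h1 : ∀ x y, θ (x + y) = θ x + θ y)
    (h2 : ∀ (c : K) (x : B), θ (c • x) = c • θ x) (n : ℕ) :
    MultilinearMap K (fun _ : Fin (n + 1) => B) A where
  toFun := ThetaRec θ n
  map_update_add' := by
    intro inst b i x y
    rw [Subsingleton.elim inst (instDecidableEqFin (n + 1))]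
    exact ThetaRec_update_add θ h1 n b i x y
  map_update_smul' := by
    intro inst b i c x
    rw [Subsingleton.elim inst (instDecidableEqFin (n + 1))]
    exact ThetaRec_update_smul (K := K) θ h2 n b i c x

end ML

section Coef
variable (d : ℕ)

noncomputable def ccoef (K : Type u) [Field K] (N : ℕ) : K :=
  ∏ t ∈ Finset.range N, ((d : K) - (t : K))

noncomputable def bcoef (K : Type u) [Field K] (N s : ℕ) : K :=
  (-1) ^ (s + 1) * ((s - 1).factorial : K) * ∏ t ∈ Finset.Ico s N, ((d : K) - (t : K))

variable {K : Type u} [Field K]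

lemma ccoef_succ (n : ℕ) : ccoef d K (n + 1) = ccoef d K n * ((d : K) - (n : K)) := by
  simp [ccoef, Finset.prod_range_succ]

lemma bcoef_succ_top {n s : ℕ} (h : s ≤ n) :
    bcoef d K (n + 1) s = bcoef d K n s * ((d : K) - (n : K)) := by
  simp only [bcoef, Finset.prod_Ico_succ_top h]
  ring

lemma identity1 (n : ℕ) :
    bcoef d K (n + 2) 1 = ccoef d K (n + 1) - ((n + 1 : ℕ) : K) * bcoef d K (n + 1) 1 := by
  have h1 : ccoef d K (n + 1) = ((d : K) - 0) * ∏ t ∈ Finset.Ico 1 (n + 1), ((d : K) - (t : K)) := by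
    rw [ccoef, Finset.range_eq_Ico, Finset.prod_eq_prod_Ico_succ_bot (Nat.succ_pos n)]
    norm_num
  have h2 : (∏ t ∈ Finset.Ico 1 (n + 2), ((d : K) - (t : K)))
      = (∏ t ∈ Finset.Ico 1 (n + 1), ((d : K) - (t : K))) * ((d : K) - ((n + 1 : ℕ) : K)) :=
    Finset.prod_Ico_succ_top (by omega) _
  simp only [bcoef, h1, h2]
  norm_num [Nat.factorial]
  ring

lemma identity2 {n s : ℕ} (h : s ≤ n) :
    bcoef d K (n + 2) (s + 2)
      = -(((s + 1 : ℕ) : K) * bcoef d K (n + 1) (s + 1) + ((n - s : ℕ) : K) * bcoef d K (n + 1) (s + 2)) := by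
  rcases lt_or_eq_of_le h with hlt | rfl
  · have h1 : (∏ t ∈ Finset.Ico (s + 2) (n + 2), ((d : K) - (t : K)))
        = (∏ t ∈ Finset.Ico (s + 2) (n + 1), ((d : K) - (t : K))) * ((d : K) - ((n + 1 : ℕ) : K)) :=
      Finset.prod_Ico_succ_top (by omega) _
    have h2 : (∏ t ∈ Finset.Ico (s + 1) (n + 1), ((d : K) - (t : K)))
        = ((d : K) - ((s + 1 : ℕ) : K)) * ∏ t ∈ Finset.Ico (s + 2) (n + 1), ((d : K) - (t : K)) :=
      Finset.prod_eq_prod_Ico_succ_bot (by omega) _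
    have hns : ((n - s : ℕ) : K) = (n : K) - (s : K) := by
      rw [Nat.cast_sub h]
    have e1 : (s + 2 - 1) = s + 1 := rfl
    have e2 : (s + 1 - 1) = s := rfl
    simp only [bcoef, h1, h2, hns, e1, e2, Nat.factorial_succ]
    push_cast
    ring
  · simp only [bcoef, Nat.sub_self, Nat.cast_zero, zero_mul, add_zero]
    have e1 : Finset.Ico (s + 2) (s + 2) = ∅ := Finset.Ico_self _
    have e2 : Finset.Ico (s + 1) (s + 1) = ∅ := Finset.Ico_self _
    rw [e1, e2]
    simp only [Finset.prod_empty, Nat.add_sub_cancel]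
    have : (s + 2 - 1) = s + 1 := by omega
    rw [this]
    push_cast [Nat.factorial_succ]
    ring

end Coef

section Mixed
open scoped Classical

variable {K B : Type u} [Field K] [CommRing B] [Algebra K B]
variable (d : ℕ) (Q : B →ₐ[K] K) (T : B →ₗ[K] K)

noncomputable def thetaD : B → DualNumber K := fun b =>
  algebraMap K (DualNumber K) ((d : K) * Q b) + DualNumber.eps * algebraMap K (DualNumber K) (T b)

noncomputable def scount {n : ℕ} (y : Fin n → B) : ℕ := ∑ i, if Q (y i) = 0 then 1 else 0

noncomputable def sprod {n : ℕ} (y : Fin n → B) : B := ∏ i, if Q (y i) = 0 then y i else 1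

lemma thetaD_add (x y : B) : thetaD d Q T (x + y) = thetaD d Q T x + thetaD d Q T y := by
  simp only [thetaD, map_add, mul_add]
  ring

lemma thetaD_smul (c : K) (x : B) : thetaD d Q T (c • x) = c • thetaD d Q T x := by
  have hq : Q (c • x) = c * Q x := by rw [map_smul, smul_eq_mul]
  have ht : T (c • x) = c * T x := by rw [map_smul, smul_eq_mul]
  simp only [thetaD, hq, ht, map_mul]
  rw [Algebra.smul_def]
  ring

lemma thetaD_one (hT1 : T 1 = 0) : thetaD d Q T 1 = algebraMap K (DualNumber K) (d : K) := by
  simp [thetaD, hT1]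

lemma thetaD_ker {x : B} (hx : Q x = 0) :
    thetaD d Q T x = DualNumber.eps * algebraMap K (DualNumber K) (T x) := by
  simp [thetaD, hx]

lemma eps_mul_eps_alg (u v : K) :
    (DualNumber.eps * algebraMap K (DualNumber K) u) * (DualNumber.eps * algebraMap K (DualNumber K) v) = 0 := by
  rw [mul_mul_mul_comm, DualNumber.eps_mul_eps, zero_mul]

lemma alg_mul_eps (u v : K) :
    algebraMap K (DualNumber K) u * (DualNumber.eps * algebraMap K (DualNumber K) v)
      = DualNumber.eps * algebraMap K (DualNumber K) (u * v) := by
  rw [map_mul]; ring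

lemma nsmul_eps (k : ℕ) (v : K) :
    k • (DualNumber.eps * algebraMap K (DualNumber K) v)
      = DualNumber.eps * algebraMap K (DualNumber K) ((k : K) * v) := by
  rw [nsmul_eq_mul, ← map_natCast (algebraMap K (DualNumber K)) k, map_mul]
  ring

lemma nsmul_alg (k : ℕ) (v : K) :
    k • (algebraMap K (DualNumber K) v) = algebraMap K (DualNumber K) ((k : K) * v) := by
  rw [nsmul_eq_mul, ← map_natCast (algebraMap K (DualNumber K)) k, map_mul]

lemma scount_succ {n : ℕ} (y : Fin (n + 1) → B) :
    scount Q y = (if Q (y 0) = 0 then 1 else 0) + scount Q (fun j : Fin n => y j.succ) :=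
  Fin.sum_univ_succ _

lemma sprod_succ {n : ℕ} (y : Fin (n + 1) → B) :
    sprod Q y = (if Q (y 0) = 0 then y 0 else 1) * sprod Q (fun j : Fin n => y j.succ) :=
  Fin.prod_univ_succ _

lemma scount_le {n : ℕ} (y : Fin n → B) : scount Q y ≤ n := by
  unfold scount
  calc (∑ i : Fin n, if Q (y i) = 0 then 1 else 0) ≤ ∑ _i : Fin n, 1 :=
        Finset.sum_le_sum (fun i _ => by split <;> omega)
    _ = n := by simp

lemma scount_update {n : ℕ} (t : Fin (n + 1) → B) (i : Fin (n + 1)) (v : B) (hv : Q v = 0) :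
    scount Q (Function.update t i v) = scount Q t + (if Q (t i) = 0 then 0 else 1) := by
  unfold scount
  rw [show (∑ j, if Q (Function.update t i v j) = 0 then (1 : ℕ) else 0)
      = ∑ j, Function.update (fun j => if Q (t j) = 0 then (1 : ℕ) else 0) i (if Q v = 0 then 1 else 0) j from
    Finset.sum_congr rfl (fun j _ => by
      rcases eq_or_ne j i with rfl | hj
      · simp
      · simp [Function.update_of_ne hj])]
  rw [Finset.sum_update_of_mem (Finset.mem_univ i), if_pos hv]
  rw [← Finset.add_sum_erase Finset.univ _ (Finset.mem_univ i), Finset.erase_eq]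
  split <;> omega

lemma sprod_update {n : ℕ} (t : Fin (n + 1) → B) (i : Fin (n + 1)) (y0 : B) (hy0 : Q y0 = 0)
    (hcase : Q (t i) = 0 ∨ t i = 1) :
    sprod Q (Function.update t i (y0 * t i)) = y0 * sprod Q t := by
  have hv : Q (y0 * t i) = 0 := by rw [map_mul, hy0, zero_mul]
  unfold sprod
  rw [show (∏ j, if Q (Function.update t i (y0 * t i) j) = 0 then Function.update t i (y0 * t i) j else 1)
      = ∏ j, Function.update (fun j => if Q (t j) = 0 then t j else 1) i (y0 * t i) j from
    Finset.prod_congr rfl (fun j _ => by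
      rcases eq_or_ne j i with rfl | hj
      · simp [hv]
      · simp [Function.update_of_ne hj])]
  rw [Finset.prod_update_of_mem (Finset.mem_univ i)]
  rw [← Finset.mul_prod_erase Finset.univ _ (Finset.mem_univ i), Finset.erase_eq]
  by_cases hq : Q (t i) = 0
  · rw [if_pos hq]; ring
  · have h1 : t i = 1 := hcase.resolve_left hq
    rw [if_neg hq, h1, mul_one, one_mul]

lemma mixed_tuple (hT1 : T 1 = 0) :
    ∀ (n : ℕ) (y : Fin (n + 1) → B), (∀ i, y i = 1 ∨ Q (y i) = 0) →
      ThetaRec (thetaD d Q T) n y =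
        if scount Q y = 0 then algebraMap K (DualNumber K) (ccoef d K (n + 1))
        else DualNumber.eps * algebraMap K (DualNumber K)
          (bcoef d K (n + 1) (scount Q y) * T (sprod Q y)) := by
  intro n
  induction n with
  | zero =>
    intro y h
    have hrec : ThetaRec (thetaD d Q T) 0 y = thetaD d Q T (y 0) := rfl
    rcases h 0 with h0 | h0
    · have hq0 : ¬ Q (y 0) = 0 := by rw [h0, map_one]; exact one_ne_zero
      have hs : scount Q y = 0 := by
        unfold scount; rw [Fin.sum_univ_one, if_neg hq0]
      rw [hrec, if_pos hs, h0, thetaD_one d Q T hT1]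
      congr 1
      simp [ccoef]
    · have hs : scount Q y = 1 := by
        unfold scount; rw [Fin.sum_univ_one, if_pos h0]
      have hsp : sprod Q y = y 0 := by
        unfold sprod; rw [Fin.prod_univ_one, if_pos h0]
      rw [hrec, thetaD_ker d Q T h0, if_neg (by omega), hs, hsp]
      congr 2
      simp [bcoef, Nat.factorial]
  | succ n IH =>
    intro y h
    have htail : ∀ i : Fin (n + 1), (fun j : Fin (n + 1) => y j.succ) i = 1 ∨
        Q ((fun j : Fin (n + 1) => y j.succ) i) = 0 := fun i => h i.succ
    have IHtl := IH (fun j => y j.succ) htail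
    have hsc := scount_succ Q y
    have hsp := sprod_succ Q y
    have hrec : ThetaRec (thetaD d Q T) (n + 1) y
        = thetaD d Q T (y 0) * ThetaRec (thetaD d Q T) n (fun j => y j.succ)
          - ∑ i : Fin (n + 1), ThetaRec (thetaD d Q T) n
              (Function.update (fun j : Fin (n + 1) => y j.succ) i (y 0 * y i.succ)) := rfl
    rcases h 0 with h0 | h0
    · -- y 0 = 1
      have hq0 : ¬ Q (y 0) = 0 := by rw [h0, map_one]; exact one_ne_zero
      have hupd : ∀ i : Fin (n + 1),
          Function.update (fun j : Fin (n + 1) => y j.succ) i (y 0 * y i.succ)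
            = fun j : Fin (n + 1) => y j.succ := by
        intro i
        rw [h0, one_mul]
        exact Function.update_eq_self i _
      have hscy : scount Q y = scount Q (fun j : Fin (n + 1) => y j.succ) := by
        rw [hsc, if_neg hq0, zero_add]
      have hspy : sprod Q y = sprod Q (fun j : Fin (n + 1) => y j.succ) := by
        rw [hsp, if_neg hq0, one_mul]
      rw [hrec]
      simp only [hupd]
      rw [Finset.sum_const, Finset.card_univ, Fintype.card_fin, h0, thetaD_one d Q T hT1, IHtl]
      by_cases hz : scount Q (fun j : Fin (n + 1) => y j.succ) = 0
      · rw [if_pos hz, if_pos (by rw [hscy]; exact hz)]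
        rw [nsmul_alg, ← map_mul, ← map_sub]
        congr 1
        rw [ccoef_succ d (n + 1)]
        push_cast
        ring
      · rw [if_neg hz, if_neg (by rw [hscy]; exact hz)]
        rw [nsmul_eps, alg_mul_eps, ← mul_sub, ← map_sub]
        congr 2
        rw [hscy, hspy, bcoef_succ_top d (n := n + 1) (scount_le Q (fun j : Fin (n + 1) => y j.succ))]
        push_cast
        ring
    · -- Q (y 0) = 0
      have hscy : scount Q y = 1 + scount Q (fun j : Fin (n + 1) => y j.succ) := by
        rw [hsc, if_pos h0]
      have hspy : sprod Q y = y 0 * sprod Q (fun j : Fin (n + 1) => y j.succ) := by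
        rw [hsp, if_pos h0]
      have hvQ : ∀ i : Fin (n + 1), Q (y 0 * y i.succ) = 0 := by
        intro i; rw [map_mul, h0, zero_mul]
      have hu : ∀ i : Fin (n + 1), ∀ j : Fin (n + 1),
          Function.update (fun j : Fin (n + 1) => y j.succ) i (y 0 * y i.succ) j = 1 ∨
          Q (Function.update (fun j : Fin (n + 1) => y j.succ) i (y 0 * y i.succ) j) = 0 := by
        intro i j
        rcases eq_or_ne j i with rfl | hj
        · right; simpa using hvQ j
        · rw [Function.update_of_ne hj]; exact htail j
      have hscu : ∀ i : Fin (n + 1),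
          scount Q (Function.update (fun j : Fin (n + 1) => y j.succ) i (y 0 * y i.succ))
            = scount Q (fun j : Fin (n + 1) => y j.succ) + (if Q (y i.succ) = 0 then 0 else 1) :=
        fun i => scount_update Q _ i _ (hvQ i)
      have hspu : ∀ i : Fin (n + 1),
          sprod Q (Function.update (fun j : Fin (n + 1) => y j.succ) i (y 0 * y i.succ))
            = y 0 * sprod Q (fun j : Fin (n + 1) => y j.succ) :=
        fun i => sprod_update Q _ i _ h0 ((htail i).symm)
      rw [hrec, thetaD_ker d Q T h0, if_neg (by omega)]
      by_cases hz : scount Q (fun j : Fin (n + 1) => y j.succ) = 0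
      · -- tail is all ones
        have htl1 : ∀ j : Fin (n + 1), y j.succ = 1 := by
          intro j
          rcases htail j with h1 | h1
          · exact h1
          · exfalso
            have : (if Q (y j.succ) = 0 then (1:ℕ) else 0) = 0 := by
              refine Finset.sum_eq_zero_iff.mp hz j (Finset.mem_univ j)
            rw [if_pos h1] at this
            omega
        have hsp1 : sprod Q (fun j : Fin (n + 1) => y j.succ) = 1 := by
          unfold sprod
          refine Finset.prod_eq_one fun j _ => ?_
          have hq : ¬ Q (y j.succ) = 0 := by rw [htl1 j, map_one]; exact one_ne_zero
          rw [if_neg hq]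
        have hval : ∀ i : Fin (n + 1),
            ThetaRec (thetaD d Q T) n
              (Function.update (fun j : Fin (n + 1) => y j.succ) i (y 0 * y i.succ))
            = DualNumber.eps * algebraMap K (DualNumber K)
                (bcoef d K (n + 1) 1 * T (y 0)) := by
          intro i
          have hq : ¬ Q (y i.succ) = 0 := by rw [htl1 i, map_one]; exact one_ne_zero
          rw [IH _ (hu i), hscu i, if_neg hq, hz, if_neg (by omega), hspu i, hsp1, mul_one]
        rw [IHtl, if_pos hz]
        rw [Finset.sum_congr rfl (fun i _ => hval i), Finset.sum_const, Finset.card_univ,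
          Fintype.card_fin, nsmul_eps]
        have hcomm : DualNumber.eps * algebraMap K (DualNumber K) (T (y 0))
            * algebraMap K (DualNumber K) (ccoef d K (n + 1))
            = DualNumber.eps * algebraMap K (DualNumber K) (ccoef d K (n + 1) * T (y 0)) := by
          rw [map_mul]; ring
        rw [hcomm, ← mul_sub, ← map_sub]
        rw [hscy, hz, hspy, hsp1, mul_one]
        congr 2
        rw [identity1]
        push_cast
        ring
      · obtain ⟨s, hs⟩ : ∃ s, scount Q (fun j : Fin (n + 1) => y j.succ) = s + 1 :=
          ⟨scount Q (fun j : Fin (n + 1) => y j.succ) - 1, by omega⟩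
        have hsle : s ≤ n := by have := scount_le Q (fun j : Fin (n + 1) => y j.succ); omega
        have hval : ∀ i : Fin (n + 1),
            ThetaRec (thetaD d Q T) n
              (Function.update (fun j : Fin (n + 1) => y j.succ) i (y 0 * y i.succ))
            = if Q (y i.succ) = 0
              then DualNumber.eps * algebraMap K (DualNumber K)
                (bcoef d K (n + 1) (s + 1) * T (y 0 * sprod Q (fun j : Fin (n + 1) => y j.succ)))
              else DualNumber.eps * algebraMap K (DualNumber K)
                (bcoef d K (n + 1) (s + 2) * T (y 0 * sprod Q (fun j : Fin (n + 1) => y j.succ))) := by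
          intro i
          by_cases hq : Q (y i.succ) = 0
          · rw [if_pos hq, IH _ (hu i), hscu i, if_pos hq, hs, if_neg (by omega), hspu i]
          · rw [if_neg hq, IH _ (hu i), hscu i, if_neg hq, hs, if_neg (by omega), hspu i]
        have hcard1 : (Finset.univ.filter (fun i : Fin (n + 1) => Q (y i.succ) = 0)).card = s + 1 := by
          rw [Finset.card_filter]
          exact hs
        have hcard2 : (Finset.univ.filter (fun i : Fin (n + 1) => ¬ Q (y i.succ) = 0)).card = n - s := by
          have := Finset.card_filter_add_card_filter_not
            (s := (Finset.univ : Finset (Fin (n + 1)))) (p := fun i => Q (y i.succ) = 0)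
          rw [hcard1] at this
          simp only [Finset.card_univ, Fintype.card_fin] at this
          omega
        rw [Finset.sum_congr rfl (fun i _ => hval i), Finset.sum_ite, Finset.sum_const,
          Finset.sum_const, hcard1, hcard2, IHtl, if_neg hz, eps_mul_eps_alg, zero_sub,
          nsmul_eps, nsmul_eps, ← mul_add, ← map_add, ← mul_neg, ← map_neg]
        rw [hscy, hs, hspy]
        congr 2
        rw [show 1 + (s + 1) = s + 2 by omega, identity2 d hsle]
        push_cast [Nat.cast_sub hsle]
        ring


lemma ccoef_top_zero : ccoef d K (d + 1) = 0 :=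
  Finset.prod_eq_zero (Finset.self_mem_range_succ d) (by simp)

lemma bcoef_top_zero {s : ℕ} (hs : s ≤ d) : bcoef d K (d + 1) s = 0 := by
  have : (∏ t ∈ Finset.Ico s (d + 1), ((d : K) - (t : K))) = 0 :=
    Finset.prod_eq_zero (Finset.mem_Ico.mpr ⟨hs, Nat.lt_succ_self d⟩) (by simp)
  rw [bcoef, this, mul_zero]

lemma bcoef_diag : bcoef d K (d + 1) (d + 1) = (-1 : K) ^ d * (d.factorial : K) := by
  rw [bcoef, Finset.Ico_self, Finset.prod_empty, mul_one]
  have h1 : d + 1 - 1 = d := rfl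
  rw [h1, show d + 1 + 1 = d + 2 from rfl, pow_add]
  norm_num

lemma key_formula (hT1 : T 1 = 0) (b : Fin (d + 1) → B) :
    ThetaRec (thetaD d Q T) d b
      = DualNumber.eps * algebraMap K (DualNumber K)
          ((-1 : K) ^ d * (d.factorial : K) * T (∏ i, (b i - algebraMap K B (Q (b i))))) := by
  set x : Fin (d + 1) → B := fun i => b i - algebraMap K B (Q (b i)) with hxdef
  set yy : Fin (d + 1) → B := fun i => Q (b i) • (1 : B) with hydef
  have hQx : ∀ i, Q (x i) = 0 := by
    intro i
    simp [hxdef, AlgHom.commutes]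
  set f := ThetaML (K := K) (thetaD d Q T) (thetaD_add d Q T) (thetaD_smul d Q T) d with hfdef
  have hxy : x + yy = b := by
    funext i
    simp [hxdef, hydef, Algebra.algebraMap_eq_smul_one]
  have hfb : ThetaRec (thetaD d Q T) d b = f (x + yy) := by rw [hxy]; rfl
  rw [hfb, f.map_add_univ x yy]
  have hterm : ∀ S : Finset (Fin (d + 1)),
      f (S.piecewise x yy)
        = (∏ i ∈ Sᶜ, Q (b i)) • f (Sᶜ.piecewise (fun _ => (1 : B)) x) := by
    intro S
    have h1 : S.piecewise x yy
        = Sᶜ.piecewise (fun i => Q (b i) • (Sᶜ.piecewise (fun _ => (1 : B)) x) i)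
            (Sᶜ.piecewise (fun _ => (1 : B)) x) := by
      funext i
      by_cases hi : i ∈ S
      · have hic : i ∉ Sᶜ := by simp [hi]
        rw [Finset.piecewise_eq_of_mem _ _ _ hi, Finset.piecewise_eq_of_notMem _ _ _ hic,
          Finset.piecewise_eq_of_notMem _ _ _ hic]
      · have hic : i ∈ Sᶜ := by simp [hi]
        rw [Finset.piecewise_eq_of_notMem _ _ _ hi, Finset.piecewise_eq_of_mem _ _ _ hic,
          Finset.piecewise_eq_of_mem _ _ _ hic]
    rw [h1, f.map_piecewise_smul (fun i => Q (b i)) _ Sᶜ]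
  have hmix : ∀ S : Finset (Fin (d + 1)),
      f (Sᶜ.piecewise (fun _ => (1 : B)) x)
        = if S.card = 0 then algebraMap K (DualNumber K) (ccoef d K (d + 1))
          else DualNumber.eps * algebraMap K (DualNumber K)
            (bcoef d K (d + 1) S.card * T (∏ i ∈ S, x i)) := by
    intro S
    set m : Fin (d + 1) → B := Sᶜ.piecewise (fun _ => (1 : B)) x with hmdef
    have hm : ∀ i, m i = 1 ∨ Q (m i) = 0 := by
      intro i
      by_cases hi : i ∈ Sᶜ
      · left; rw [hmdef, Finset.piecewise_eq_of_mem _ _ _ hi]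
      · right; rw [hmdef, Finset.piecewise_eq_of_notMem _ _ _ hi]; exact hQx i
    have hmem : ∀ i, i ∈ S → m i = x i := by
      intro i hi
      rw [hmdef, Finset.piecewise_eq_of_notMem _ _ _ (by simp [hi])]
    have hnmem : ∀ i, i ∉ S → m i = 1 := by
      intro i hi
      rw [hmdef, Finset.piecewise_eq_of_mem _ _ _ (by simp [hi])]
    have hsc : scount Q m = S.card := by
      unfold scount
      rw [Finset.sum_congr rfl (g := fun i => if i ∈ S then (1 : ℕ) else 0)
        (fun i _ => by
          show (if Q (m i) = 0 then (1 : ℕ) else 0) = if i ∈ S then 1 else 0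
          by_cases hi : i ∈ S
          · rw [if_pos hi, if_pos (by rw [hmem i hi]; exact hQx i)]
          · rw [if_neg hi, if_neg (by rw [hnmem i hi, map_one]; exact one_ne_zero)])]
      simp
    have hsp : sprod Q m = ∏ i ∈ S, x i := by
      unfold sprod
      rw [Finset.prod_congr rfl (g := fun i => if i ∈ S then x i else 1)
        (fun i _ => by
          show (if Q (m i) = 0 then m i else 1) = if i ∈ S then x i else 1
          by_cases hi : i ∈ S
          · rw [if_pos hi, if_pos (by rw [hmem i hi]; exact hQx i), hmem i hi]
          · rw [if_neg hi, if_neg (by rw [hnmem i hi, map_one]; exact one_ne_zero)])]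
      rw [← Finset.prod_filter]
      congr 1
      simp
    have := mixed_tuple d Q T hT1 d m hm
    rw [hsc, hsp] at this
    exact this
  rw [Finset.sum_congr rfl (fun S _ => by rw [hterm S, hmix S])]
  rw [Finset.sum_eq_single_of_mem Finset.univ (Finset.mem_univ _) ?side]
  · rw [Finset.compl_univ, Finset.prod_empty, one_smul, Finset.card_univ, Fintype.card_fin,
      if_neg (Nat.succ_ne_zero d), bcoef_diag]
  · intro S _ hS
    have hlt : S.card < d + 1 := by
      have : S ⊂ Finset.univ := Finset.ssubset_univ_iff.mpr hS
      have := Finset.card_lt_card this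
      simpa using this
    by_cases hc : S.card = 0
    · rw [if_pos hc, ccoef_top_zero, map_zero, smul_zero]
    · rw [if_neg hc, bcoef_top_zero d (by omega), zero_mul, map_zero, mul_zero, smul_zero]

end Mixed

section Final
variable {K B : Type u} [Field K] [CommRing B] [Algebra K B]

lemma prod_mem_pow (m : Ideal B) : ∀ (n : ℕ) (f : Fin n → B), (∀ i, f i ∈ m) → (∏ i, f i) ∈ m ^ n := by
  intro n
  induction n with
  | zero =>
    intro f _
    rw [pow_zero, Ideal.one_eq_top]
    exact Submodule.mem_top
  | succ n IHn =>
    intro f hf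
    rw [Fin.prod_univ_succ, pow_succ']
    exact Ideal.mul_mem_mul (hf 0) (IHn _ (fun i => hf i.succ))

lemma span_pow (m : Ideal B) : ∀ (n : ℕ) (x : B), x ∈ m ^ (n + 1) →
    x ∈ Submodule.span K {y : B | ∃ f : Fin (n + 1) → B, (∀ i, f i ∈ m) ∧ y = ∏ i, f i} := by
  intro n
  induction n with
  | zero =>
    intro x hx
    rw [pow_one] at hx
    exact Submodule.subset_span ⟨fun _ => x, fun _ => hx, by simp⟩
  | succ n IHn =>
    intro x hx
    rw [pow_succ] at hx
    refine Submodule.mul_induction_on hx (fun a ha c hc => ?_)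
      (fun u v hu hv => Submodule.add_mem _ hu hv)
    have ha' := IHn a ha
    have himg : (⇑(LinearMap.mulRight K c)) '' {y : B | ∃ f : Fin (n + 1) → B, (∀ i, f i ∈ m) ∧ y = ∏ i, f i}
        ⊆ {y : B | ∃ f : Fin (n + 2) → B, (∀ i, f i ∈ m) ∧ y = ∏ i, f i} := by
      rintro z ⟨w, ⟨f, hfm, rfl⟩, rfl⟩
      refine ⟨Fin.cons c f, ?_, ?_⟩
      · intro i
        induction i using Fin.cases with
        | zero => simpa using hc
        | succ j => simpa using hfm j
      · rw [Fin.prod_cons, LinearMap.mulRight_apply]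
        ring
    have hmem : (LinearMap.mulRight K c) a ∈ Submodule.span K
        ((⇑(LinearMap.mulRight K c)) '' {y : B | ∃ f : Fin (n + 1) → B, (∀ i, f i ∈ m) ∧ y = ∏ i, f i}) := by
      have := Submodule.mem_map_of_mem (f := LinearMap.mulRight K c) ha'
      rwa [Submodule.map_span] at this
    have := Submodule.span_mono himg hmem
    simpa using this

lemma dfact_ne (d : ℕ) (hchar : CharZero K ∨ ∃ p : ℕ, p.Prime ∧ CharP K p ∧ d < p) :
    ((d.factorial : K)) ≠ 0 := by
  rcases hchar with h | ⟨p, hp, hcp, hdp⟩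
  · haveI := h
    exact Nat.cast_ne_zero.mpr (Nat.factorial_ne_zero d)
  · haveI := hcp
    rw [Ne, CharP.cast_eq_zero_iff K p]
    intro hdvd
    exact absurd ((Nat.Prime.dvd_factorial hp).mp hdvd) (by omega)

lemma eps_alg_eq_zero_iff (c : K) :
    DualNumber.eps * algebraMap K (DualNumber K) c = 0 ↔ c = 0 := by
  constructor
  · intro h
    simpa [TrivSqZeroExt.algebraMap_eq_inl] using congrArg TrivSqZeroExt.snd h
  · intro h
    rw [h, map_zero, mul_zero]

end Final


/-- Let `k` be a field of characteristic `0` or `p > d`, `B` a commutative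
`k`-algebra, `Q : B → k` a `k`-algebra homomorphism with kernel `m`, `θ'' : B → k` a
`k`-linear map with `θ''(1) = 0`, and `θ : B → k[ε]/(ε²)` given by
`θ(b) := d·Q(b) + ε·θ''(b)`. Then `Θ^θ_{d+1} ≡ 0` if and only if `θ''` vanishes on
`m^{d+1}`. (This identifies the dual of the tangent space of `Sym^d (Spec B)` at `[dQ]`
with `m/m^{d+1}`.) -/
theorem statement11 {K B : Type u} [Field K] [CommRing B] [Algebra K B]
    (d : ℕ) (hd : 0 < d)
    (hchar : CharZero K ∨ ∃ p : ℕ, p.Prime ∧ CharP K p ∧ d < p)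
    (Q : B →ₐ[K] K) (θ'' : B →ₗ[K] K) (hθ'' : θ'' 1 = 0)
    (θ : B → DualNumber K)
    (hθ : θ = fun b => algebraMap K (DualNumber K) ((d : K) * Q b)
        + DualNumber.eps * algebraMap K (DualNumber K) (θ'' b)) :
    (∀ b : Fin (d + 1) → B, ThetaRec θ d b = 0) ↔
      (∀ x ∈ (RingHom.ker Q.toRingHom) ^ (d + 1), θ'' x = 0) := by
  have hθd : θ = thetaD d Q θ'' := hθ
  subst hθd
  have hne : ((-1 : K) ^ d * (d.factorial : K)) ≠ 0 :=
    mul_ne_zero (pow_ne_zero _ (by norm_num)) (dfact_ne d hchar)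
  constructor
  · intro hall x hx
    have hTprod : ∀ b : Fin (d + 1) → B, θ'' (∏ i, (b i - algebraMap K B (Q (b i)))) = 0 := by
      intro b
      have h0 := hall b
      rw [key_formula d Q θ'' hθ'' b] at h0
      have hc := (eps_alg_eq_zero_iff _).mp h0
      rcases mul_eq_zero.mp hc with h | h
      · exact absurd h hne
      · exact h
    have hx' := span_pow (K := K) (RingHom.ker Q.toRingHom) d x hx
    refine Submodule.span_induction ?_ ?_ ?_ ?_ hx'
    · rintro y ⟨f, hfm, rfl⟩
      have hQf : ∀ i, Q (f i) = 0 := fun i => RingHom.mem_ker.mp (hfm i)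
      have := hTprod f
      rwa [Finset.prod_congr rfl (fun i _ => by rw [hQf i, map_zero, sub_zero])] at this
    · exact map_zero θ''
    · intro u v _ _ hu hv
      rw [map_add, hu, hv, add_zero]
    · intro c u _ hu
      rw [map_smul, hu, smul_zero]
  · intro hker b
    rw [key_formula d Q θ'' hθ'' b]
    have hmem : (∏ i, (b i - algebraMap K B (Q (b i)))) ∈ (RingHom.ker Q.toRingHom) ^ (d + 1) := by
      refine prod_mem_pow _ (d + 1) _ (fun i => ?_)
      rw [RingHom.mem_ker]
      simp
    rw [hker _ hmem, mul_zero, map_zero, mul_zero]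
end

section
/- Let A be a commutative ring, M an A-module, P an invertible A-module, and n a natural number. Then there is an isomorphism of A-modules Λ^n_A(M ⊗_A P) ≅ Λ^n_A(M) ⊗_A P^{⊗n}, where Λ^n_A denotes the n-th exterior power over A and P^{⊗n} the n-th tensor power of P over A. -/
open scoped TensorProduct

universe u

set_option maxHeartbeats 1000000
set_option synthInstance.maxHeartbeats 200000




section Aux

variable {A : Type u} [CommRing A]

/-- Pigeonhole lemma: if `∑ a s = 1` and each `(a s)^2` kills `x`, then `x = 0`. -/
lemma pigeon_smul {T : Type*} [AddCommGroup T] [Module A T]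
    {ι : Type*} {S : Finset ι} {a : ι → A}
    (hsum : ∑ s ∈ S, a s = 1)
    {x : T} (hkill : ∀ s ∈ S, (a s * a s) • x = 0) : x = 0 := by
  set I : Ideal A := LinearMap.ker (LinearMap.toSpanSingleton A T x) with hI
  have hmem : ∀ s ∈ S, a s * a s ∈ I := fun s hs => by
    simpa [I, LinearMap.mem_ker, LinearMap.toSpanSingleton_apply] using hkill s hs
  have h1 : (1 : A) ∈ I := by
    have hnil : IsNilpotent (Ideal.Quotient.mk I 1) := by
      have : (Ideal.Quotient.mk I 1) = ∑ s ∈ S, Ideal.Quotient.mk I (a s) := by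
        rw [← map_sum, hsum]
      rw [this]
      refine isNilpotent_sum fun s hs => ?_
      refine ⟨2, ?_⟩
      rw [pow_two, ← map_mul, Ideal.Quotient.eq_zero_iff_mem]
      exact hmem s hs
    obtain ⟨k, hk⟩ := hnil
    rw [map_one, one_pow] at hk
    rw [← Ideal.Quotient.eq_zero_iff_mem, map_one, hk]
  have := h1
  rw [hI, LinearMap.mem_ker, LinearMap.toSpanSingleton_apply, one_smul] at this
  exact this

variable {P P' : Type u} [AddCommGroup P] [Module A P] [AddCommGroup P'] [Module A P']

/-- Faithfulness: if `x ⊗ v = 0` for all `v : V` and `V` has an "inverse", then `x = 0`. -/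
lemma eq_zero_of_tmul_eq_zero {X V W : Type u} [AddCommGroup X] [Module A X]
    [AddCommGroup V] [Module A V] [AddCommGroup W] [Module A W]
    (j : A ≃ₗ[A] (V ⊗[A] W)) (x : X)
    (h : ∀ v : V, (x ⊗ₜ[A] v : X ⊗[A] V) = 0) : x = 0 := by
  let Ξ : X ≃ₗ[A] (X ⊗[A] V) ⊗[A] W :=
    (TensorProduct.rid A X).symm.trans
      ((TensorProduct.congr (LinearEquiv.refl A X) j).trans
        (TensorProduct.assoc A X V W).symm)
  have hx : Ξ x = 0 := by
    have h1 : Ξ x = (TensorProduct.assoc A X V W).symm (x ⊗ₜ[A] j 1) := by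
      simp [Ξ, TensorProduct.congr_tmul]
    obtain ⟨S, hS⟩ := TensorProduct.exists_finset (j 1)
    rw [h1, hS, TensorProduct.tmul_sum, map_sum]
    refine Finset.sum_eq_zero fun s hs => ?_
    rw [TensorProduct.assoc_symm_tmul, h s.1, TensorProduct.zero_tmul]
  exact Ξ.map_eq_zero_iff.mp hx

lemma crel_one (e : (P ⊗[A] P') ≃ₗ[A] A) : ∀ (p q : P) (f g : P'),
    e (q ⊗ₜ f) * e (p ⊗ₜ g) = e (p ⊗ₜ f) * e (q ⊗ₜ g) := by
  classical
  set K := TensorProduct.tensorTensorTensorComm A P P' P P' with hK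
  set τ : ((P ⊗[A] P') ⊗[A] (P ⊗[A] P')) ≃ₗ[A] ((P ⊗[A] P') ⊗[A] (P ⊗[A] P')) :=
    K.trans ((TensorProduct.congr (TensorProduct.comm A P P)
      (LinearEquiv.refl A (P' ⊗[A] P'))).trans K.symm) with hτ
  set E : ((P ⊗[A] P') ⊗[A] (P ⊗[A] P')) ≃ₗ[A] A :=
    (TensorProduct.congr e e).trans (TensorProduct.lid A A) with hE
  have hτ_tmul : ∀ (p q : P) (f g : P'),
      τ ((p ⊗ₜ f) ⊗ₜ (q ⊗ₜ g)) = (q ⊗ₜ f) ⊗ₜ[A] (p ⊗ₜ g) := by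
    intro p q f g
    simp [τ, K, TensorProduct.tensorTensorTensorComm_tmul, TensorProduct.congr_tmul,
      TensorProduct.comm_tmul, TensorProduct.tensorTensorTensorComm_symm]
  have hE_tmul : ∀ (x y : P ⊗[A] P'), E (x ⊗ₜ y) = e x * e y := by
    intro x y
    simp [E, TensorProduct.congr_tmul, TensorProduct.lid_tmul, smul_eq_mul]
  set c : A := E (τ (E.symm 1)) with hc
  have hlin : ∀ z, E (τ z) = E z * c := by
    intro z
    have h0 : E (τ (E.symm ((E z) • (1 : A)))) = E z • c := by
      rw [map_smul, map_smul, map_smul]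
    have h1 : E.symm (E z • (1 : A)) = z := by
      rw [smul_eq_mul, mul_one, E.symm_apply_apply]
    rw [h1] at h0
    rw [h0, smul_eq_mul]
  -- c = 1
  have hcrel : ∀ (p q : P) (f g : P'),
      e (q ⊗ₜ f) * e (p ⊗ₜ g) = (e (p ⊗ₜ f) * e (q ⊗ₜ g)) * c := by
    intro p q f g
    have := hlin ((p ⊗ₜ f) ⊗ₜ (q ⊗ₜ g))
    rwa [hτ_tmul, hE_tmul, hE_tmul] at this
  have hdiag : ∀ (p : P) (f g : P'),
      (e (p ⊗ₜ f) * e (p ⊗ₜ g)) • (c - 1) = 0 := by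
    intro p f g
    have h := hcrel p p f g
    rw [smul_eq_mul, mul_sub, mul_one, ← h, sub_self]
  obtain ⟨S, hS⟩ := TensorProduct.exists_finset (e.symm (1 : A))
  have hsum : ∑ s ∈ S, e (s.1 ⊗ₜ s.2) = 1 := by
    rw [← map_sum, ← hS, e.apply_symm_apply]
  have hc1 : c = 1 := by
    have h : c - 1 = 0 := by
      refine pigeon_smul (A := A) hsum fun s hs => ?_
      simpa [smul_eq_mul] using hdiag s.1 s.2 s.2
    exact sub_eq_zero.mp h
  intro p q f g
  rw [hcrel p q f g, hc1, mul_one]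

lemma rank1 (e : (P ⊗[A] P') ≃ₗ[A] A) (p q : P) (f : P') : e (q ⊗ₜ f) • p = e (p ⊗ₜ f) • q := by
  have key : ∀ g : P',
      ((e (q ⊗ₜ f) • p - e (p ⊗ₜ f) • q) ⊗ₜ[A] g : P ⊗[A] P') = 0 := by
    intro g
    have h1 : ((e (q ⊗ₜ f) • p - e (p ⊗ₜ f) • q) ⊗ₜ[A] g : P ⊗[A] P')
        = e (q ⊗ₜ f) • (p ⊗ₜ g) - e (p ⊗ₜ f) • (q ⊗ₜ g) := by
      rw [TensorProduct.sub_tmul, TensorProduct.smul_tmul', TensorProduct.smul_tmul']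
    have h2 : e (e (q ⊗ₜ f) • (p ⊗ₜ g) - e (p ⊗ₜ f) • (q ⊗ₜ g)) = 0 := by
      rw [map_sub, map_smul, map_smul, smul_eq_mul, smul_eq_mul, crel_one e p q f g,
        sub_self]
    rw [h1]
    have := e.injective (by rw [h2, map_zero] : e _ = e 0)
    exact this
  have := eq_zero_of_tmul_eq_zero (((TensorProduct.comm A P' P).trans e).symm) _ key
  rw [sub_eq_zero] at this
  exact this

lemma diag_kill (e : (P ⊗[A] P') ≃ₗ[A] A) {T : Type u} [AddCommGroup T] [Module A T]
    (β : P →ₗ[A] P →ₗ[A] T) (hd : ∀ p, β p p = 0) (p q : P) : β p q = 0 := by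
  obtain ⟨S, hS⟩ := TensorProduct.exists_finset (e.symm (1 : A))
  have hsum : ∑ s ∈ S, e (s.1 ⊗ₜ s.2) = 1 := by
    rw [← map_sum, ← hS, e.apply_symm_apply]
  refine pigeon_smul (A := A) hsum fun s hs => ?_
  have h1 : (β (e (s.1 ⊗ₜ s.2) • p)) (e (s.1 ⊗ₜ s.2) • q)
      = (e (s.1 ⊗ₜ s.2) * e (s.1 ⊗ₜ s.2)) • β p q := by
    simp only [LinearMap.map_smul₂, map_smul, LinearMap.smul_apply, smul_smul]
  rw [← h1, rank1 e p s.1 s.2, rank1 e q s.1 s.2]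
  simp only [LinearMap.map_smul₂, map_smul, LinearMap.smul_apply, hd s.1, smul_zero]

end Aux




namespace EPowAux

variable {A : Type u} [CommRing A]
variable {X Y T : Type u} [AddCommGroup X] [Module A X] [AddCommGroup Y] [Module A Y]
  [AddCommGroup T] [Module A T]

/-- The canonical alternating map into the exterior power. -/
noncomputable def ιA (n : ℕ) (X : Type u) [AddCommGroup X] [Module A X] :
    X [⋀^Fin n]→ₗ[A] (⋀[A]^n X) :=
  (ExteriorAlgebra.ιMulti A n).codRestrict (⋀[A]^n X)
    (fun v => ExteriorAlgebra.ιMulti_range A n (Set.mem_range_self v))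

lemma ιA_coe (n : ℕ) (v : Fin n → X) :
    ((ιA n X v : ⋀[A]^n X) : ExteriorAlgebra A X) = ExteriorAlgebra.ιMulti A n v := rfl

/-- Universal property of the exterior power. -/
noncomputable def eLift (n : ℕ) (f : X [⋀^Fin n]→ₗ[A] T) : (⋀[A]^n X) →ₗ[A] T := by
  classical
  exact (ExteriorAlgebra.liftAlternating
    (Function.update (fun i => (0 : X [⋀^Fin i]→ₗ[A] T)) n f)).comp
    (Submodule.subtype _)

@[simp] lemma eLift_ιA (n : ℕ) (f : X [⋀^Fin n]→ₗ[A] T) (v : Fin n → X) :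
    eLift n f (ιA n X v) = f v := by
  classical
  simp only [eLift, LinearMap.comp_apply, Submodule.subtype_apply, ιA_coe,
    ExteriorAlgebra.liftAlternating_apply_ιMulti, Function.update_self]

lemma hom_ext {n : ℕ} {f g : (⋀[A]^n X) →ₗ[A] T}
    (h : ∀ v : Fin n → X, f (ιA n X v) = g (ιA n X v)) : f = g := by
  refine LinearMap.ext fun ⟨x, hx⟩ => ?_
  have hx' : x ∈ Submodule.span A (Set.range (ExteriorAlgebra.ιMulti A n (M := X))) := by
    rw [ExteriorAlgebra.ιMulti_span_fixedDegree]; exact hx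
  refine Submodule.span_induction
    (p := fun x _ => ∀ hx : x ∈ ⋀[A]^n X, f ⟨x, hx⟩ = g ⟨x, hx⟩)
    ?_ ?_ ?_ ?_ hx' hx
  · rintro _ ⟨v, rfl⟩ hx
    have : (⟨ExteriorAlgebra.ιMulti A n v, hx⟩ : ⋀[A]^n X) = ιA n X v := rfl
    rw [this, h v]
  · intro hx
    have : (⟨(0 : ExteriorAlgebra A X), hx⟩ : ⋀[A]^n X) = 0 := Subtype.ext rfl
    rw [this, map_zero, map_zero]
  · intro x y hxs hys ihx ihy hxy
    have hxm : x ∈ ⋀[A]^n X := by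
      rw [← ExteriorAlgebra.ιMulti_span_fixedDegree]; exact hxs
    have hym : y ∈ ⋀[A]^n X := by
      rw [← ExteriorAlgebra.ιMulti_span_fixedDegree]; exact hys
    have : (⟨x + y, hxy⟩ : ⋀[A]^n X) = ⟨x, hxm⟩ + ⟨y, hym⟩ := rfl
    rw [this, map_add, map_add, ihx hxm, ihy hym]
  · intro a x hxs ih hax
    have hxm : x ∈ ⋀[A]^n X := by
      rw [← ExteriorAlgebra.ιMulti_span_fixedDegree]; exact hxs
    have : (⟨a • x, hax⟩ : ⋀[A]^n X) = a • (⟨x, hxm⟩ : ⋀[A]^n X) := rfl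
    rw [this, map_smul, map_smul, ih hxm]

/-- Functoriality of exterior powers. -/
noncomputable def eMap (n : ℕ) (g : X →ₗ[A] Y) : (⋀[A]^n X) →ₗ[A] (⋀[A]^n Y) :=
  eLift n ((ιA n Y).compLinearMap g)

@[simp] lemma eMap_ιA (n : ℕ) (g : X →ₗ[A] Y) (v : Fin n → X) :
    eMap n g (ιA n X v) = ιA n Y (fun i => g (v i)) := by
  simp [eMap, AlternatingMap.compLinearMap_apply]

/-- Exterior power of a linear equivalence. -/
noncomputable def eMapEquiv (n : ℕ) (g : X ≃ₗ[A] Y) : (⋀[A]^n X) ≃ₗ[A] (⋀[A]^n Y) :=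
  LinearEquiv.ofLinear (eMap n g.toLinearMap) (eMap n g.symm.toLinearMap)
    (hom_ext fun v => by simp [LinearMap.comp_apply])
    (hom_ext fun v => by simp [LinearMap.comp_apply])

@[simp] lemma eMapEquiv_ιA (n : ℕ) (g : X ≃ₗ[A] Y) (v : Fin n → X) :
    eMapEquiv n g (ιA n X v) = ιA n Y (fun i => g (v i)) := by
  simp [eMapEquiv, LinearEquiv.ofLinear_apply]

end EPowAux

section GMap

open EPowAux

variable {A : Type u} [CommRing A]
variable {Q Q' : Type u} [AddCommGroup Q] [Module A Q] [AddCommGroup Q'] [Module A Q']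
variable (n : ℕ) (X : Type u) [AddCommGroup X] [Module A X]

lemma tmul_update_left [inst : DecidableEq (Fin n)] (m : Fin n → X) (q : Fin n → Q)
    (i : Fin n) (y : X) :
    (fun j => (Function.update m i y j) ⊗ₜ[A] q j) =
      Function.update (fun j => m j ⊗ₜ[A] q j) i (y ⊗ₜ q i) := by
  funext j
  by_cases h : j = i
  · subst h; simp
  · simp [Function.update_of_ne h]

lemma tmul_update_right [inst : DecidableEq (Fin n)] (m : Fin n → X) (q : Fin n → Q)
    (i : Fin n) (y : Q) :
    (fun j => m j ⊗ₜ[A] (Function.update q i y j)) =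
      Function.update (fun j => m j ⊗ₜ[A] q j) i (m i ⊗ₜ y) := by
  funext j
  by_cases h : j = i
  · subst h; simp
  · simp [Function.update_of_ne h]

/-- The inner multilinear map in the `Q`-variables. -/
noncomputable def innerML (m : Fin n → X) :
    MultilinearMap A (fun _ : Fin n => Q) (⋀[A]^n (X ⊗[A] Q)) where
  toFun q := ιA n (X ⊗[A] Q) (fun i => m i ⊗ₜ q i)
  map_update_add' := by
    intro inst q i a b
    try dsimp only
    rw [tmul_update_right, tmul_update_right, tmul_update_right, TensorProduct.tmul_add]
    exact AlternatingMap.map_update_add _ _ _ _ _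
  map_update_smul' := by
    intro inst q i a b
    try dsimp only
    rw [tmul_update_right, tmul_update_right, TensorProduct.tmul_smul]
    exact AlternatingMap.map_update_smul _ _ _ _ _

@[simp] lemma innerML_apply (m : Fin n → X) (q : Fin n → Q) :
    innerML n X m q = ιA n (X ⊗[A] Q) (fun i => m i ⊗ₜ q i) := rfl

/-- The outer multilinear map in the `X`-variables. -/
noncomputable def midML :
    MultilinearMap A (fun _ : Fin n => X)
      ((⨂[A]^n Q) →ₗ[A] ⋀[A]^n (X ⊗[A] Q)) where
  toFun m := PiTensorProduct.lift (innerML n X m)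
  map_update_add' := by
    intro inst m i a b
    try dsimp only
    have h : innerML (A := A) (Q := Q) n X (Function.update m i (a + b)) =
        innerML (A := A) (Q := Q) n X (Function.update m i a) + innerML (A := A) (Q := Q) n X (Function.update m i b) := by
      refine MultilinearMap.ext fun q => ?_
      simp only [innerML_apply, MultilinearMap.add_apply]
      rw [tmul_update_left, tmul_update_left, tmul_update_left, TensorProduct.add_tmul]
      exact AlternatingMap.map_update_add _ _ _ _ _
    rw [h, map_add]
  map_update_smul' := by
    intro inst m i a b
    try dsimp only
    have h : innerML (A := A) (Q := Q) n X (Function.update m i (a • b)) =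
        a • innerML (A := A) (Q := Q) n X (Function.update m i b) := by
      refine MultilinearMap.ext fun q => ?_
      simp only [innerML_apply, MultilinearMap.smul_apply]
      rw [tmul_update_left, tmul_update_left, ← TensorProduct.smul_tmul']
      exact AlternatingMap.map_update_smul _ _ _ _ _
    rw [h, map_smul]

/-- The outer map is alternating (this uses invertibility of `Q`). -/
noncomputable def altML (eQ : (Q ⊗[A] Q') ≃ₗ[A] A) :
    X [⋀^Fin n]→ₗ[A] ((⨂[A]^n Q) →ₗ[A] ⋀[A]^n (X ⊗[A] Q)) :=
  { midML n X (Q := Q) with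
    map_eq_zero_of_eq' := by
      intro m i j hm hij
      show PiTensorProduct.lift (innerML n X m) = 0
      ext q
      simp only [LinearMap.compMultilinearMap_apply, PiTensorProduct.lift.tprod,
        innerML_apply, LinearMap.zero_apply, MultilinearMap.zero_apply]
      classical
      set v : Fin n → X ⊗[A] Q := fun k => m k ⊗ₜ q k with hv
      -- the two-variable alternating-ish bilinear map
      set γ : (X ⊗[A] Q) →ₗ[A] (X ⊗[A] Q) →ₗ[A] (⋀[A]^n (X ⊗[A] Q)) :=
        LinearMap.mk₂ A
          (fun a b => ιA n (X ⊗[A] Q) (Function.update (Function.update v i a) j b))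
          (by
            intro a a' b
            try dsimp only
            simp only [Function.update_comm hij]
            exact AlternatingMap.map_update_add _ _ _ _ _)
          (by
            intro c a b
            try dsimp only
            simp only [Function.update_comm hij]
            exact AlternatingMap.map_update_smul _ _ _ _ _)
          (by
            intro a b b'
            try dsimp only
            exact AlternatingMap.map_update_add _ _ _ _ _)
          (by
            intro c a b
            try dsimp only
            exact AlternatingMap.map_update_smul _ _ _ _ _) with hγ
      set β : Q →ₗ[A] Q →ₗ[A] (⋀[A]^n (X ⊗[A] Q)) :=
        γ.compl₁₂ (TensorProduct.mk A X Q (m i)) (TensorProduct.mk A X Q (m j)) with hβ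
      have hdiag : ∀ p, β p p = 0 := by
        intro p
        simp only [hβ, LinearMap.compl₁₂_apply, TensorProduct.mk_apply, hγ,
          LinearMap.mk₂_apply]
        refine AlternatingMap.map_eq_zero_of_eq _ _ ?_ hij
        rw [Function.update_self, Function.update_of_ne hij, Function.update_self, hm]
      have h0 := diag_kill eQ β hdiag (q i) (q j)
      have hval : β (q i) (q j) = ιA n (X ⊗[A] Q) v := by
        simp only [hβ, LinearMap.compl₁₂_apply, TensorProduct.mk_apply, hγ,
          LinearMap.mk₂_apply]
        have h1 : Function.update v i (m i ⊗ₜ[A] q i) = v := by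
          rw [hv]; exact Function.update_eq_self i _
        have h2 : Function.update v j (m j ⊗ₜ[A] q j) = v := by
          rw [hv]; exact Function.update_eq_self j _
        rw [h1, h2]
      rw [← hval, h0] }




noncomputable def gMap (eQ : (Q ⊗[A] Q') ≃ₗ[A] A) :
    ((⋀[A]^n X) ⊗[A] (⨂[A]^n Q)) →ₗ[A] (⋀[A]^n (X ⊗[A] Q)) :=
  TensorProduct.lift
    (eLift (A := A) (X := X) (T := (⨂[A]^n Q) →ₗ[A] (⋀[A]^n (X ⊗[A] Q))) n
      (altML (A := A) (Q := Q) (Q' := Q') n X eQ))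

@[simp] lemma gMap_tmul (eQ : (Q ⊗[A] Q') ≃ₗ[A] A) (m : Fin n → X) (q : Fin n → Q) :
    gMap n X eQ (ιA n X m ⊗ₜ PiTensorProduct.tprod A q)
      = ιA n (X ⊗[A] Q) (fun i => m i ⊗ₜ q i) := by
  rw [gMap, TensorProduct.lift.tmul, eLift_ιA]
  show PiTensorProduct.lift (innerML n X m) (PiTensorProduct.tprod A q) = _
  rw [PiTensorProduct.lift.tprod, innerML_apply]

/-- Extensionality on generators for maps out of `(⋀^n X) ⊗ (⨂ Y) ⊗ (⨂ Z)`. -/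
lemma gen_ext3 {Y Z W : Type u} [AddCommGroup Y] [Module A Y] [AddCommGroup Z] [Module A Z]
    [AddCommGroup W] [Module A W]
    {f g : (((⋀[A]^n X) ⊗[A] (⨂[A]^n Y)) ⊗[A] (⨂[A]^n Z)) →ₗ[A] W}
    (h : ∀ (v : Fin n → X) (y : Fin n → Y) (z : Fin n → Z),
      f ((ιA n X v ⊗ₜ PiTensorProduct.tprod A y) ⊗ₜ PiTensorProduct.tprod A z)
        = g ((ιA n X v ⊗ₜ PiTensorProduct.tprod A y) ⊗ₜ PiTensorProduct.tprod A z)) :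
    f = g := by
  apply TensorProduct.curry_injective
  apply TensorProduct.curry_injective
  apply hom_ext
  intro v
  apply PiTensorProduct.ext
  apply MultilinearMap.ext
  intro y
  apply PiTensorProduct.ext
  apply MultilinearMap.ext
  intro z
  simpa using h v y z

end GMap




section Pairing
variable {A : Type u} [CommRing A]

/-- Split off the last factor of a tensor power. -/
noncomputable def tpowSplit (n : ℕ) (X : Type u) [AddCommGroup X] [Module A X] :
    (⨂[A]^(n+1) X) ≃ₗ[A] ((⨂[A]^n X) ⊗[A] X) :=
  ((PiTensorProduct.reindex A (fun _ : Fin (n+1) => X) finSumFinEquiv.symm).trans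
    (PiTensorProduct.tmulEquiv A X).symm).trans
    (TensorProduct.congr (LinearEquiv.refl A _) (PiTensorProduct.subsingletonEquiv (0 : Fin 1)))

lemma tpowSplit_tprod (n : ℕ) (X : Type u) [AddCommGroup X] [Module A X] (v : Fin (n+1) → X) :
    tpowSplit n X (PiTensorProduct.tprod A v) =
      (PiTensorProduct.tprod A (fun i : Fin n => v i.castSucc)) ⊗ₜ[A] v (Fin.last n) := by
  simp only [tpowSplit, LinearEquiv.trans_apply, PiTensorProduct.reindex_tprod]
  have h1 : (fun i : Fin n ⊕ Fin 1 => v (finSumFinEquiv.symm.symm i))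
      = fun i => v (finSumFinEquiv i) := rfl
  rw [show (PiTensorProduct.tprod A fun i : Fin n ⊕ Fin 1 => v (finSumFinEquiv.symm.symm i))
      = PiTensorProduct.tprod A fun i : Fin n ⊕ Fin 1 => v (finSumFinEquiv i) from rfl]
  rw [PiTensorProduct.tmulEquiv_symm_apply]
  rw [TensorProduct.congr_tmul]
  rw [PiTensorProduct.subsingletonEquiv_apply_tprod]
  simp only [LinearEquiv.refl_apply]
  have hl : finSumFinEquiv (Sum.inr (0 : Fin 1)) = Fin.last n := by
    apply Fin.ext; simp
  have hc : (fun i : Fin n => v (finSumFinEquiv (Sum.inl i))) = fun i : Fin n => v i.castSucc := by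
    funext i
    congr 1
  rw [hl, hc]

variable {P P' : Type u} [AddCommGroup P] [Module A P] [AddCommGroup P'] [Module A P']

lemma exists_pairing (e : (P ⊗[A] P') ≃ₗ[A] A) (n : ℕ) :
    ∃ ε : ((⨂[A]^n P) ⊗[A] (⨂[A]^n P')) ≃ₗ[A] A,
      ∀ (p : Fin n → P) (f : Fin n → P'),
        ε (PiTensorProduct.tprod A p ⊗ₜ PiTensorProduct.tprod A f)
          = ∏ i, e (p i ⊗ₜ f i) := by
  induction n with
  | zero =>
    refine ⟨(TensorProduct.congr (PiTensorProduct.isEmptyEquiv (Fin 0))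
      (PiTensorProduct.isEmptyEquiv (Fin 0))).trans (TensorProduct.lid A A), fun p f => ?_⟩
    simp [TensorProduct.congr_tmul]
  | succ n ih =>
    obtain ⟨ε, hε⟩ := ih
    refine ⟨((TensorProduct.congr (tpowSplit n P) (tpowSplit n P')).trans
      ((TensorProduct.tensorTensorTensorComm A (⨂[A]^n P) P (⨂[A]^n P') P').trans
        ((TensorProduct.congr ε e).trans (TensorProduct.lid A A)))), fun p f => ?_⟩
    rw [LinearEquiv.trans_apply, LinearEquiv.trans_apply, LinearEquiv.trans_apply,
      TensorProduct.congr_tmul, tpowSplit_tprod, tpowSplit_tprod,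
      TensorProduct.tensorTensorTensorComm_tmul, TensorProduct.congr_tmul,
      TensorProduct.lid_tmul, hε]
    rw [smul_eq_mul, Fin.prod_univ_castSucc]

end Pairing


open EPowAux in
/-- Let `A` be a commutative ring, `M` an `A`-module, `P` an invertible
`A`-module (i.e. admitting an inverse `P'` with `P ⊗[A] P' ≅ A`), and `n : ℕ`. Then
there is an isomorphism of `A`-modules `Λ^n(M ⊗ P) ≅ Λ^n(M) ⊗ P^⊗n`. -/
theorem statement14 {A : Type u} [CommRing A]
    (M : Type u) [AddCommGroup M] [Module A M]
    (P : Type u) [AddCommGroup P] [Module A P]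
    (P' : Type u) [AddCommGroup P'] [Module A P'] (e : (P ⊗[A] P') ≃ₗ[A] A)
    (n : ℕ) :
    Nonempty ((⋀[A]^n (M ⊗[A] P)) ≃ₗ[A] (⋀[A]^n M) ⊗[A] (⨂[A]^n P)) := by
  classical
  obtain ⟨ε, hε⟩ := exists_pairing e n
  set T := (⨂[A]^n P) with hT
  set T' := (⨂[A]^n P') with hT'
  set e₂ : (P' ⊗[A] P) ≃ₗ[A] A := (TensorProduct.comm A P' P).trans e with he₂
  set G : ((⋀[A]^n M) ⊗[A] T) →ₗ[A] (⋀[A]^n (M ⊗[A] P)) := gMap n M e with hG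
  set G' : ((⋀[A]^n (M ⊗[A] P)) ⊗[A] T') →ₗ[A] (⋀[A]^n ((M ⊗[A] P) ⊗[A] P')) :=
    gMap n (M ⊗[A] P) e₂ with hG'
  set μ : ((M ⊗[A] P) ⊗[A] P') ≃ₗ[A] M :=
    (TensorProduct.assoc A M P P').trans
      ((TensorProduct.congr (LinearEquiv.refl A M) e).trans (TensorProduct.rid A M)) with hμdef
  have hμ : ∀ (m : M) (p : P) (f : P'), μ ((m ⊗ₜ p) ⊗ₜ f) = e (p ⊗ₜ f) • m := by
    intro m p f
    simp [hμdef, TensorProduct.assoc_tmul, TensorProduct.congr_tmul, TensorProduct.rid_tmul]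
  set g1 : ((⋀[A]^n (M ⊗[A] P)) ⊗[A] T') →ₗ[A] (⋀[A]^n M) :=
    (eMapEquiv n μ).toLinearMap ∘ₗ G' with hg1
  set εop : (T' ⊗[A] T) ≃ₗ[A] A := (TensorProduct.comm A T' T).trans ε with hεop
  set C1 : (((⋀[A]^n M) ⊗[A] T) ⊗[A] T') →ₗ[A] (⋀[A]^n M) :=
    g1 ∘ₗ LinearMap.rTensor T' G with hC1def
  set D1 : (((⋀[A]^n M) ⊗[A] T) ⊗[A] T') ≃ₗ[A] (⋀[A]^n M) :=
    (TensorProduct.assoc A _ T T').trans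
      ((TensorProduct.congr (LinearEquiv.refl A _) ε).trans (TensorProduct.rid A _)) with hD1def
  set C2 : (((⋀[A]^n (M ⊗[A] P)) ⊗[A] T') ⊗[A] T) →ₗ[A] (⋀[A]^n (M ⊗[A] P)) :=
    G ∘ₗ LinearMap.rTensor T g1 with hC2def
  set D2 : (((⋀[A]^n (M ⊗[A] P)) ⊗[A] T') ⊗[A] T) ≃ₗ[A] (⋀[A]^n (M ⊗[A] P)) :=
    (TensorProduct.assoc A _ T' T).trans
      ((TensorProduct.congr (LinearEquiv.refl A _) εop).trans (TensorProduct.rid A _)) with hD2def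
  -- computation of g1 on generators
  have hg1_tmul : ∀ (v : Fin n → M ⊗[A] P) (z : Fin n → P'),
      g1 (ιA n (M ⊗[A] P) v ⊗ₜ PiTensorProduct.tprod A z)
        = ιA n M (fun i => μ (v i ⊗ₜ z i)) := by
    intro v z
    rw [hg1, LinearMap.comp_apply, hG', gMap_tmul]
    simp only [LinearEquiv.coe_coe, eMapEquiv_ιA]
  -- C1 = D1
  have hC1 : C1 = D1.toLinearMap := by
    apply gen_ext3
    intro v y z
    rw [hC1def, LinearMap.comp_apply, LinearMap.rTensor_tmul, hG, gMap_tmul, hg1_tmul]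
    have hslot : (fun i => μ ((v i ⊗ₜ y i) ⊗ₜ z i)) = fun i => e (y i ⊗ₜ z i) • v i := by
      funext i; rw [hμ]
    rw [hslot]
    have hsm := MultilinearMap.map_smul_univ (ιA n M (A := A)).toMultilinearMap
      (fun i => e (y i ⊗ₜ z i)) v
    have hlhs : ιA n M (fun i => e (y i ⊗ₜ z i) • v i)
        = (∏ i, e (y i ⊗ₜ z i)) • ιA n M v := hsm
    rw [hlhs]
    rw [hD1def]
    simp only [LinearEquiv.coe_coe, LinearEquiv.trans_apply, TensorProduct.assoc_tmul,
      TensorProduct.congr_tmul, LinearEquiv.refl_apply, TensorProduct.rid_tmul, hε]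
  -- slot identity for C2 (uses rank1)
  have hslot2 : ∀ (f : P') (p : P) (w : M ⊗[A] P),
      ((μ (w ⊗ₜ f)) ⊗ₜ[A] p : M ⊗[A] P) = e₂ (f ⊗ₜ p) • w := by
    intro f p w
    induction w using TensorProduct.induction_on with
    | zero => simp
    | tmul m q =>
      rw [hμ, TensorProduct.smul_tmul, rank1 e p q f, TensorProduct.tmul_smul, he₂]
      simp [TensorProduct.comm_tmul]
    | add w₁ w₂ h₁ h₂ =>
      rw [TensorProduct.add_tmul, map_add, TensorProduct.add_tmul, h₁, h₂, smul_add]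
  -- C2 = D2
  have hC2 : C2 = D2.toLinearMap := by
    apply gen_ext3
    intro v y z
    rw [hC2def, LinearMap.comp_apply, LinearMap.rTensor_tmul, hg1_tmul, hG, gMap_tmul]
    have hslot : (fun i => (μ (v i ⊗ₜ y i)) ⊗ₜ[A] z i) = fun i => e₂ (y i ⊗ₜ z i) • v i := by
      funext i; rw [hslot2]
    rw [hslot]
    have hsm := MultilinearMap.map_smul_univ (ιA n (M ⊗[A] P) (A := A)).toMultilinearMap
      (fun i => e₂ (y i ⊗ₜ z i)) v
    have hlhs : ιA n (M ⊗[A] P) (fun i => e₂ (y i ⊗ₜ z i) • v i)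
        = (∏ i, e₂ (y i ⊗ₜ z i)) • ιA n (M ⊗[A] P) v := hsm
    rw [hlhs]
    rw [hD2def]
    simp only [LinearEquiv.coe_coe, LinearEquiv.trans_apply, TensorProduct.assoc_tmul,
      TensorProduct.congr_tmul, LinearEquiv.refl_apply, TensorProduct.rid_tmul, hεop]
    congr 1
    simp only [LinearEquiv.trans_apply, TensorProduct.comm_tmul, hε]
    apply Finset.prod_congr rfl
    intro i _
    rw [he₂]
    simp [TensorProduct.comm_tmul]
  -- surjectivity of G
  have hsurj : Function.Surjective G := by
    intro w
    exact ⟨LinearMap.rTensor T g1 (D2.symm w), by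
      have h := congrArg (fun (F : _ →ₗ[A] _) => F (D2.symm w)) hC2
      simp only [hC2def, LinearMap.comp_apply] at h
      rw [h]
      simp⟩
  -- injectivity of G
  have hinj0 : ∀ x, G x = 0 → x = 0 := by
    intro x hx
    have htm : ∀ t' : T', (x ⊗ₜ[A] t' : ((⋀[A]^n M) ⊗[A] T) ⊗[A] T') = 0 := by
      intro t'
      have h := congrArg (fun (F : _ →ₗ[A] _) => F (x ⊗ₜ t')) hC1
      simp only [hC1def, LinearMap.comp_apply, LinearMap.rTensor_tmul, hx,
        TensorProduct.zero_tmul, map_zero] at h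
      have h0 : D1 (x ⊗ₜ t') = 0 := by simpa using h.symm
      exact (map_eq_zero_iff D1 D1.injective).mp h0
    exact eq_zero_of_tmul_eq_zero εop.symm x htm
  have hinj : Function.Injective G := by
    intro a b hab
    have : G (a - b) = 0 := by rw [map_sub, hab, sub_self]
    have := hinj0 _ this
    rwa [sub_eq_zero] at this
  exact ⟨(LinearEquiv.ofBijective G ⟨hinj, hsurj⟩).symm⟩
end
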